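/- arXiv:1607.04546 — 6 statements merged into one kernel-verified Lean document; each statement's English description precedes it below -/
import Mathlib

section
/- If {P_1, …, P_n} is an (n,l,m)-fusion frame over 𝔽 with n ≥ 2 and 0 < l < m, then max_{j≠k} tr(P_j P_k) ≥ (n·l² − m·l)/(m(n−1)). Moreover, if equality is achieved, then tr(P_j P_k) takes the same value for every pair j ≠ k (the fusion frame is equiangular) and n ≤ d_𝔽(m) + 1. -/
open Matrix

noncomputable section

variable {𝕜 : Type*} [RCLike 𝕜]

/-- An `(n,l,m)`-fusion frame: a family of rank-`l` orthogonal projections on `𝕜^m`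
satisfying the frame inequality. -/
def IsFusionFrame {ι : Type*} [Fintype ι] {m : ℕ} (l : ℕ)
    (P : ι → Matrix (Fin m) (Fin m) 𝕜) : Prop :=
  (∀ j, (P j).IsHermitian) ∧ (∀ j, P j * P j = P j) ∧ (∀ j, (P j).rank = l) ∧
  ∃ A B : ℝ, 0 < A ∧ A ≤ B ∧ ∀ x : Fin m → 𝕜,
    A * ∑ i, ‖x i‖ ^ 2 ≤ ∑ j, ∑ i, ‖(P j).mulVec x i‖ ^ 2 ∧
    ∑ j, ∑ i, ‖(P j).mulVec x i‖ ^ 2 ≤ B * ∑ i, ‖x i‖ ^ 2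

open scoped Classical in
/-- `d_𝔽(m)`: `(m+2)(m-1)/2` in the real case, `m² - 1` in the complex case. -/
noncomputable def dF (𝕜 : Type*) [RCLike 𝕜] (m : ℕ) : ℕ :=
  if (RCLike.I : 𝕜) = 0 then (m + 2) * (m - 1) / 2 else m ^ 2 - 1

/-- Trace of a Hermitian idempotent equals its rank. -/
lemma aux_trace_eq_rank {N : Type*} [Fintype N] [DecidableEq N]
    (A : Matrix N N 𝕜) (hA : A.IsHermitian) (hP : A * A = A) :
    A.trace = (A.rank : 𝕜) := by
  classical
  set U : Matrix N N 𝕜 := (hA.eigenvectorUnitary : Matrix N N 𝕜) with hU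
  have hUsU : U * star U = 1 := by
    rw [hU]
    exact mem_unitaryGroup_iff.mp hA.eigenvectorUnitary.2
  have hsUU : star U * U = 1 := by
    rw [hU]
    exact mem_unitaryGroup_iff'.mp hA.eigenvectorUnitary.2
  have hD : star U * A * U = diagonal (RCLike.ofReal ∘ hA.eigenvalues) := by
    rw [hU, ← Unitary.conjStarAlgAut_star_apply (S := 𝕜)]
    exact hA.conjStarAlgAut_star_eigenvectorUnitary
  set d : N → 𝕜 := RCLike.ofReal ∘ hA.eigenvalues with hd
  have key : ∀ X Y : Matrix N N 𝕜, (X * U) * (star U * Y) = X * Y := by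
    intro X Y
    rw [Matrix.mul_assoc, ← Matrix.mul_assoc U, hUsU, Matrix.one_mul]
  have hDD : diagonal d * diagonal d = diagonal d := by
    rw [← hD]
    nth_rewrite 2 [Matrix.mul_assoc (star U) A U]
    rw [key]
    simp only [Matrix.mul_assoc]
    rw [← Matrix.mul_assoc A A U, hP]
  have hev : ∀ i, hA.eigenvalues i = 0 ∨ hA.eigenvalues i = 1 := by
    intro i
    rw [Matrix.diagonal_mul_diagonal] at hDD
    have h1 : d i * d i = d i := by
      have := congr_fun (congr_fun (congrArg (fun M : Matrix N N 𝕜 => M) hDD) i) i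
      simpa [Matrix.diagonal_apply_eq] using
        (congr_fun (congr_fun hDD i) i : Matrix.diagonal (d * d) i i = Matrix.diagonal d i i)
    have h2 : hA.eigenvalues i * hA.eigenvalues i = hA.eigenvalues i := by
      have h1' := h1
      simp only [hd, Function.comp_apply, ← RCLike.ofReal_mul] at h1'
      exact_mod_cast h1'
    rcases mul_eq_zero.mp (by nlinarith [h2] : hA.eigenvalues i * (hA.eigenvalues i - 1) = 0) with h | h
    · exact Or.inl h
    · exact Or.inr (by linarith)
  have htr : A.trace = ∑ i, d i := by
    conv_lhs => rw [hA.spectral_theorem, Unitary.conjStarAlgAut_apply]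
    rw [← hU, ← hd, Matrix.trace_mul_cycle, hsUU, Matrix.one_mul,
      Matrix.trace_diagonal]
  rw [htr, hA.rank_eq_card_non_zero_eigs]
  calc ∑ i, d i = ∑ i, (if hA.eigenvalues i ≠ 0 then (1:𝕜) else 0) :=
        Finset.sum_congr rfl (fun i _ => by rcases hev i with h | h <;> simp [hd, h])
    _ = ((Finset.univ.filter fun i => hA.eigenvalues i ≠ 0).card : 𝕜) := by
        rw [Finset.sum_boole]
    _ = (Fintype.card {i // hA.eigenvalues i ≠ 0} : 𝕜) := by rw [Fintype.card_subtype]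

lemma aux_retrace_mul_self {N : Type*} [Fintype N] (S : Matrix N N 𝕜) (hS : S.IsHermitian) :
    RCLike.re (S * S).trace = ∑ i, ∑ j, ‖S i j‖ ^ 2 := by
  rw [Matrix.trace, map_sum]
  refine Finset.sum_congr rfl fun i _ => ?_
  rw [Matrix.diag_apply, Matrix.mul_apply, map_sum]
  refine Finset.sum_congr rfl fun j _ => ?_
  rw [← hS.apply j i, RCLike.star_def, RCLike.mul_conj]
  simp only [← RCLike.ofReal_pow, RCLike.ofReal_re]

lemma aux_re_sq_le (z : 𝕜) : (RCLike.re z) ^ 2 ≤ ‖z‖ ^ 2 := by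
  rw [← RCLike.normSq_eq_def', RCLike.normSq_apply]
  nlinarith [sq_nonneg (RCLike.im z)]

lemma aux_gram {n l m : ℕ} (hn : 2 ≤ n) (hl : 0 < l) (hlm : l < m)
    (P : Fin n → Matrix (Fin m) (Fin m) 𝕜)
    (htr : ∀ j, RCLike.re (P j * P j).trace = l)
    (hod : ∀ j k, j ≠ k → RCLike.re ((P j * P k).trace) =
      ((n : ℝ) * l ^ 2 - m * l) / (m * ((n : ℝ) - 1)))
    (g : Fin n → ℝ) (hg : ∑ j, g j • P j = 0) : ∀ k, g k = 0 := by
  classical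
  set C : ℝ := ((n : ℝ) * l ^ 2 - m * l) / (m * ((n : ℝ) - 1)) with hC
  have hm0 : (0:ℝ) < m := Nat.cast_pos.mpr (hl.trans hlm)
  have hl0 : (0:ℝ) < l := Nat.cast_pos.mpr hl
  have hml : (l:ℝ) < m := by exact_mod_cast hlm
  have hn2 : (2:ℝ) ≤ n := by exact_mod_cast hn
  have hn0 : (0:ℝ) < n := by linarith
  have hn1 : (0:ℝ) < (n:ℝ) - 1 := by linarith
  have hk : ∀ k, g k * (l:ℝ) + ((∑ j, g j) - g k) * C = 0 := by
    intro k
    have h0 : RCLike.re ((∑ j, g j • P j) * P k).trace = 0 := by rw [hg]; simp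
    have h1 : (∑ j, g j • P j) * P k = ∑ j, g j • (P j * P k) := by
      rw [Finset.sum_mul]
      exact Finset.sum_congr rfl fun j _ => smul_mul_assoc (g j) (P j) (P k)
    rw [h1, Matrix.trace_sum, map_sum] at h0
    have hcong : (∑ j, RCLike.re ((g j • (P j * P k)).trace)) =
        ∑ j, g j * RCLike.re ((P j * P k).trace) :=
      Finset.sum_congr rfl fun j _ => by rw [Matrix.trace_smul, RCLike.smul_re]
    rw [hcong] at h0
    rw [← Finset.add_sum_erase _ _ (Finset.mem_univ k), htr k] at h0
    have h3 : ∑ j ∈ Finset.univ.erase k, g j * RCLike.re ((P j * P k).trace)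
        = ((∑ j, g j) - g k) * C := by
      have hcong2 : (∑ j ∈ Finset.univ.erase k, g j * RCLike.re ((P j * P k).trace)) =
          ∑ j ∈ Finset.univ.erase k, g j * C :=
        Finset.sum_congr rfl fun j hj => by rw [hod j k (Finset.ne_of_mem_erase hj)]
      rw [hcong2, ← Finset.sum_mul, Finset.sum_erase_eq_sub (Finset.mem_univ k)]
    rw [h3] at h0
    exact h0
  have hexp : ∑ k, (g k * (l:ℝ) + ((∑ j, g j) - g k) * C)
      = (∑ k, g k) * ((l:ℝ) + ((n:ℝ) - 1) * C) := by
    rw [Finset.sum_add_distrib, ← Finset.sum_mul, ← Finset.sum_mul, Finset.sum_sub_distrib,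
      Finset.sum_const, Finset.card_univ, Fintype.card_fin]
    ring
  have h4 : ∑ k, (g k * (l:ℝ) + ((∑ j, g j) - g k) * C) = 0 :=
    Finset.sum_eq_zero fun k _ => hk k
  rw [hexp] at h4
  have hcoef : (l:ℝ) + ((n:ℝ) - 1) * C = (n:ℝ) * l ^ 2 / m := by
    rw [hC]; field_simp; ring
  have hcoefpos : 0 < (l:ℝ) + ((n:ℝ) - 1) * C := by
    rw [hcoef]; exact div_pos (mul_pos hn0 (pow_pos hl0 2)) hm0
  have hS0 : ∑ k, g k = 0 := by
    rcases mul_eq_zero.mp h4 with h | h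
    · exact h
    · exact absurd h (ne_of_gt hcoefpos)
  intro k
  have h6 := hk k
  rw [hS0] at h6
  have h5 : g k * ((l:ℝ) - C) = 0 := by linear_combination h6
  have hlC : 0 < (l:ℝ) - C := by
    have he : (l:ℝ) - C = (n:ℝ) * l * ((m:ℝ) - l) / (m * ((n:ℝ) - 1)) := by
      rw [hC]; field_simp; ring
    rw [he]
    exact div_pos (mul_pos (mul_pos hn0 hl0) (by linarith)) (mul_pos hm0 hn1)
  rcases mul_eq_zero.mp h5 with h | h
  · exact h
  · exact absurd h (ne_of_gt hlC)

lemma aux_ct_smul {N N' : Type*} (r : ℝ) (A : Matrix N N' 𝕜) : (r • A)ᴴ = r • Aᴴ := by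
  ext i j
  simp only [Matrix.conjTranspose_apply, Matrix.smul_apply, RCLike.real_smul_eq_coe_mul,
    star_mul', RCLike.star_def, RCLike.conj_ofReal]

lemma aux_card_le {n m : ℕ} (hm : 0 < m)
    (M : Fin n → Matrix (Fin m) (Fin m) 𝕜)
    (hherm : ∀ j, (M j).IsHermitian)
    (hind : ∀ g : Fin n → ℝ, ∑ j, g j • M j = 0 → ∀ k, g k = 0) :
    n ≤ dF 𝕜 m + 1 := by
  classical
  by_cases hI : (RCLike.I : 𝕜) = 0
  · -- real case
    have hre : ∀ z : 𝕜, ((RCLike.re z : ℝ) : 𝕜) = z := fun z => by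
      conv_rhs => rw [← RCLike.re_add_im z]
      rw [hI, mul_zero, add_zero]
    set φ : Matrix (Fin m) (Fin m) 𝕜 →ₗ[ℝ] ({p : Fin m × Fin m // p.1 ≤ p.2} → ℝ) :=
      { toFun := fun A p => RCLike.re (A p.1.1 p.1.2)
        map_add' := fun A B => by funext p; simp [Matrix.add_apply]
        map_smul' := fun r A => by funext p; simp [Matrix.smul_apply, RCLike.smul_re] } with hφ
    have hli : LinearIndependent ℝ (fun j => φ (M j)) := by
      rw [Fintype.linearIndependent_iff]
      intro g hg k
      refine hind g ?_ k
      set S : Matrix (Fin m) (Fin m) 𝕜 := ∑ j, g j • M j with hS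
      have hSh : S.IsHermitian := by
        rw [hS, Matrix.IsHermitian, Matrix.conjTranspose_sum]
        refine Finset.sum_congr rfl fun j _ => ?_
        rw [aux_ct_smul, (hherm j).eq]
      have hφS : φ S = 0 := by
        rw [hS, map_sum]
        simpa [_root_.map_smul] using hg
      have hupper : ∀ i j : Fin m, i ≤ j → S i j = 0 := by
        intro i j hij
        have h0 : RCLike.re (S i j) = 0 := congr_fun hφS ⟨(i, j), hij⟩
        rw [← hre (S i j), h0, RCLike.ofReal_zero]
      ext i j
      rcases le_total i j with h | h
      · rw [hupper i j h]; rfl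
      · rw [← hSh.apply i j, hupper j i h, star_zero]; rfl
    have hcard := hli.fintype_card_le_finrank
    rw [Fintype.card_fin, Module.finrank_fintype_fun_eq_card,
      ← Fintype.card_congr (Sym2.sortEquiv (α := Fin m)), Sym2.card, Fintype.card_fin,
      Nat.choose_two_right] at hcard
    have hdf : dF 𝕜 m = (m + 2) * (m - 1) / 2 := by simp [dF, hI]
    rw [hdf]
    obtain ⟨k, rfl⟩ : ∃ k, m = k + 1 := ⟨m - 1, by omega⟩
    obtain ⟨a, ha⟩ : ∃ a, a = k * k := ⟨_, rfl⟩
    have g1 : (k + 1 + 1) * (k + 1) = a + 3 * k + 2 := by rw [ha]; ring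
    have g2 : (k + 1 + 2) * (k + 1 - 1) = a + 3 * k := by
      rw [ha, Nat.add_sub_cancel]; ring
    have g3 : k * (k + 1) = a + k := by rw [ha]; ring
    have he : (a + k) % 2 = 0 := by
      rw [← g3, ← Nat.even_iff]; exact Nat.even_mul_succ_self k
    rw [Nat.add_sub_cancel, g1] at hcard
    rw [g2]
    omega
  · -- complex case
    set φ : Matrix (Fin m) (Fin m) 𝕜 →ₗ[ℝ] Matrix (Fin m) (Fin m) ℝ :=
      { toFun := fun A => Matrix.of fun i j =>
          if i ≤ j then RCLike.re (A i j) else RCLike.im (A j i)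
        map_add' := fun A B => by
          ext i j
          by_cases h : i ≤ j <;> simp [Matrix.add_apply, h]
        map_smul' := fun r A => by
          ext i j
          by_cases h : i ≤ j <;>
            simp [Matrix.smul_apply, h, RCLike.smul_re, RCLike.smul_im] } with hφ
    have hli : LinearIndependent ℝ (fun j => φ (M j)) := by
      rw [Fintype.linearIndependent_iff]
      intro g hg k
      refine hind g ?_ k
      set S : Matrix (Fin m) (Fin m) 𝕜 := ∑ j, g j • M j with hS
      have hSh : S.IsHermitian := by
        rw [hS, Matrix.IsHermitian, Matrix.conjTranspose_sum]
        refine Finset.sum_congr rfl fun j _ => ?_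
        rw [aux_ct_smul, (hherm j).eq]
      have hφS : φ S = 0 := by
        rw [hS, map_sum]
        simpa [_root_.map_smul] using hg
      have hupper : ∀ i j : Fin m, i ≤ j → S i j = 0 := by
        intro i j hij
        have hre0 : RCLike.re (S i j) = 0 := by
          have := congr_fun (congr_fun hφS i) j
          simpa [hφ, hij] using this
        have him0 : RCLike.im (S i j) = 0 := by
          rcases eq_or_lt_of_le hij with h | h
          · subst h
            have := hSh.apply i i
            rw [RCLike.star_def, RCLike.conj_eq_iff_im] at this
            exact this
          · have hji : ¬ j ≤ i := not_le.mpr h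
            have := congr_fun (congr_fun hφS j) i
            simpa [hφ, hji] using this
        exact RCLike.ext (by simpa using hre0) (by simpa using him0)
      ext i j
      rcases le_total i j with h | h
      · rw [hupper i j h]; rfl
      · rw [← hSh.apply i j, hupper j i h, star_zero]; rfl
    have hcard := hli.fintype_card_le_finrank
    rw [Fintype.card_fin, Module.finrank_matrix, Fintype.card_fin,
      Module.finrank_self, mul_one] at hcard
    have hdf : dF 𝕜 m = m ^ 2 - 1 := by simp [dF, hI]
    rw [hdf, sq]
    have h1 : 1 ≤ m * m := Nat.one_le_iff_ne_zero.mpr (by positivity)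
    omega

theorem stmt1 {n l m : ℕ} (hn : 2 ≤ n) (hl : 0 < l) (hlm : l < m)
    (P : Fin n → Matrix (Fin m) (Fin m) 𝕜)
    (hFF : IsFusionFrame l P) :
    (∃ j k : Fin n, j ≠ k ∧
      ((n : ℝ) * l ^ 2 - m * l) / (m * ((n : ℝ) - 1)) ≤
        RCLike.re ((P j * P k).trace)) ∧
    ((∀ j k : Fin n, j ≠ k →
        RCLike.re ((P j * P k).trace) ≤
          ((n : ℝ) * l ^ 2 - m * l) / (m * ((n : ℝ) - 1))) →
      (∃ C : ℝ, ∀ j k : Fin n, j ≠ k → RCLike.re ((P j * P k).trace) = C) ∧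
      n ≤ dF 𝕜 m + 1) := by
  classical
  obtain ⟨hherm, hidem, hrank, -⟩ := hFF
  have hm : 0 < m := hl.trans hlm
  have hm0 : (0:ℝ) < m := Nat.cast_pos.mpr hm
  have hl0 : (0:ℝ) < l := Nat.cast_pos.mpr hl
  have hml : (l:ℝ) < m := by exact_mod_cast hlm
  have hn2 : (2:ℝ) ≤ n := by exact_mod_cast hn
  have hn1 : (0:ℝ) < (n:ℝ) - 1 := by linarith
  set B : ℝ := ((n : ℝ) * l ^ 2 - m * l) / (m * ((n : ℝ) - 1)) with hB
  have htrP : ∀ j, RCLike.re ((P j).trace) = l := fun j => by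
    rw [aux_trace_eq_rank (P j) (hherm j) (hidem j), hrank j]
    exact RCLike.natCast_re l
  have htr_re : ∀ j, RCLike.re ((P j * P j).trace) = l := fun j => by
    rw [hidem j]; exact htrP j
  set t : Fin n × Fin n → ℝ := fun p => RCLike.re ((P p.1 * P p.2).trace) with ht
  set S : Matrix (Fin m) (Fin m) 𝕜 := ∑ j, P j with hS
  have hSh : S.IsHermitian := by
    rw [hS, Matrix.IsHermitian, Matrix.conjTranspose_sum]
    exact Finset.sum_congr rfl fun j _ => (hherm j).eq
  have hSS : RCLike.re ((S * S).trace) = ∑ j, ∑ k, t (j, k) := by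
    rw [hS, Finset.sum_mul_sum, Matrix.trace_sum, map_sum]
    refine Finset.sum_congr rfl fun j _ => ?_
    rw [Matrix.trace_sum, map_sum]
  have hT := aux_retrace_mul_self S hSh
  rw [hSS] at hT
  have hDiag : ∑ i, RCLike.re (S i i) = (n:ℝ) * l := by
    have h1 : ∑ i, RCLike.re (S i i) = RCLike.re S.trace := by
      rw [Matrix.trace, map_sum]; rfl
    rw [h1, hS, Matrix.trace_sum, map_sum,
      Finset.sum_congr rfl (fun j (_ : j ∈ Finset.univ) => htrP j), Finset.sum_const,
      Finset.card_univ, Fintype.card_fin, nsmul_eq_mul]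
  have hCS : ((n:ℝ) * l) ^ 2 ≤ (m:ℝ) * ∑ i, ∑ i', ‖S i i'‖ ^ 2 := by
    have c1 := sq_sum_le_card_mul_sum_sq (s := (Finset.univ : Finset (Fin m)))
      (f := fun i => RCLike.re (S i i))
    have c2 : ∑ i, (RCLike.re (S i i)) ^ 2 ≤ ∑ i, ∑ i', ‖S i i'‖ ^ 2 := by
      refine Finset.sum_le_sum fun i _ => ?_
      calc (RCLike.re (S i i)) ^ 2 ≤ ‖S i i‖ ^ 2 := aux_re_sq_le _
        _ ≤ ∑ i', ‖S i i'‖ ^ 2 :=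
            Finset.single_le_sum (f := fun i' => ‖S i i'‖ ^ 2)
              (fun i' _ => by positivity) (Finset.mem_univ i)
    calc ((n:ℝ) * l) ^ 2 = (∑ i, RCLike.re (S i i)) ^ 2 := by rw [hDiag]
      _ ≤ (Finset.univ.card : ℝ) * ∑ i, (RCLike.re (S i i)) ^ 2 := c1
      _ = (m:ℝ) * ∑ i, (RCLike.re (S i i)) ^ 2 := by rw [Finset.card_univ, Fintype.card_fin]
      _ ≤ (m:ℝ) * ∑ i, ∑ i', ‖S i i'‖ ^ 2 := mul_le_mul_of_nonneg_left c2 hm0.le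
  have hsplit : ∑ j, ∑ k, t (j, k) = (n:ℝ) * l + ∑ p ∈ Finset.univ.offDiag, t p := by
    rw [← Finset.sum_product]
    rw [← Finset.diag_union_offDiag (Finset.univ : Finset (Fin n)),
      Finset.sum_union (Finset.disjoint_diag_offDiag _)]
    congr 1
    rw [Finset.sum_diag]
    rw [Finset.sum_congr rfl (fun j (_ : j ∈ Finset.univ) => htr_re j), Finset.sum_const,
      Finset.card_univ, Fintype.card_fin, nsmul_eq_mul]
  have hoff : ((n:ℝ) * l) ^ 2 ≤ (m:ℝ) * (((n:ℝ) * l) + ∑ p ∈ Finset.univ.offDiag, t p) := by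
    calc ((n:ℝ) * l) ^ 2 ≤ (m:ℝ) * ∑ i, ∑ i', ‖S i i'‖ ^ 2 := hCS
      _ = (m:ℝ) * (((n:ℝ) * l) + ∑ p ∈ Finset.univ.offDiag, t p) := by rw [← hT, hsplit]
  set K := (Finset.univ.offDiag : Finset (Fin n × Fin n)).card with hK
  have hKval : K = n * n - n := by
    rw [hK, Finset.offDiag_card, Finset.card_univ, Fintype.card_fin]
  have hKR : (K:ℝ) = (n:ℝ) * (n:ℝ) - n := by
    rw [hKval, Nat.cast_sub (Nat.le_mul_of_pos_left n (by omega))]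
    push_cast
    ring
  have hKB : (K:ℝ) * B = (n:ℝ) ^ 2 * l ^ 2 / m - (n:ℝ) * l := by
    rw [hKR, hB]; field_simp
  have hsumB : (K:ℝ) * B ≤ ∑ p ∈ Finset.univ.offDiag, t p := by
    rw [hKB]
    have h := (div_le_iff₀ hm0).mpr
      (by linarith : ((n:ℝ) * l) ^ 2 ≤ (((n:ℝ) * l) + ∑ p ∈ Finset.univ.offDiag, t p) * m)
    have hexp : ((n:ℝ) * l) ^ 2 = (n:ℝ) ^ 2 * l ^ 2 := by ring
    rw [hexp] at h
    linarith
  have hne : (Finset.univ.offDiag : Finset (Fin n × Fin n)).Nonempty := by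
    refine ⟨(⟨0, by omega⟩, ⟨1, by omega⟩),
      Finset.mem_offDiag.mpr ⟨Finset.mem_univ _, Finset.mem_univ _, ?_⟩⟩
    simp [Fin.ext_iff]
  constructor
  · have hsum_const : ∑ _p ∈ (Finset.univ.offDiag : Finset (Fin n × Fin n)), B
        ≤ ∑ p ∈ Finset.univ.offDiag, t p := by
      rw [Finset.sum_const, nsmul_eq_mul]; exact hsumB
    obtain ⟨p, hp, hpB⟩ := Finset.exists_le_of_sum_le hne hsum_const
    exact ⟨p.1, p.2, (Finset.mem_offDiag.mp hp).2.2, hpB⟩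
  · intro hub
    have hK1 : 1 ≤ K := Finset.card_pos.mpr hne
    have heq : ∀ p ∈ (Finset.univ.offDiag : Finset (Fin n × Fin n)), t p = B := by
      intro p hp
      have hne12 := (Finset.mem_offDiag.mp hp).2.2
      refine le_antisymm (hub p.1 p.2 hne12) ?_
      have h1 : ∑ q ∈ (Finset.univ.offDiag).erase p, t q ≤ ((K - 1 : ℕ) : ℝ) * B := by
        have h1' := Finset.sum_le_card_nsmul ((Finset.univ.offDiag).erase p) t B
          (fun q hq => hub q.1 q.2 (Finset.mem_offDiag.mp (Finset.mem_of_mem_erase hq)).2.2)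
        rwa [Finset.card_erase_of_mem hp, nsmul_eq_mul, ← hK] at h1'
      have h2 : ∑ q ∈ Finset.univ.offDiag, t q
          = t p + ∑ q ∈ (Finset.univ.offDiag).erase p, t q :=
        (Finset.add_sum_erase _ _ hp).symm
      have hc : ((K - 1 : ℕ) : ℝ) = (K:ℝ) - 1 := by
        rw [Nat.cast_sub hK1, Nat.cast_one]
      rw [hc] at h1
      have h3 := hsumB
      rw [h2] at h3
      linarith
    have heq' : ∀ j k : Fin n, j ≠ k → RCLike.re ((P j * P k).trace) = B := fun j k hjk =>
      heq (j, k) (Finset.mem_offDiag.mpr ⟨Finset.mem_univ _, Finset.mem_univ _, hjk⟩)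
    refine ⟨⟨B, heq'⟩, ?_⟩
    exact aux_card_le hm P hherm (fun g hg => aux_gram hn hl hlm P htr_re heq' g hg)

end
end

section
/- Let {P_1, …, P_n} be an (n,l,m)-fusion frame over 𝔽 with 0 < l < m and let V_j = √(m/(l(m−l))) · (P_j − (l/m)·I_m) be the embedded unit vectors. Then tr(V_j V_k) ≥ −l/(m−l) for every pair j ≠ k. In particular, if tr(V_j V_k) = −1 for some pair j ≠ k (antipodal embedded vectors), then l ≥ m/2. -/
open Matrix

noncomputable section

variable {𝕜 : Type*} [RCLike 𝕜]

lemma trace_idem_aux {m : ℕ} {A : Matrix (Fin m) (Fin m) 𝕜} (hA : A.IsHermitian)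
    (hi : A * A = A) : A.trace = (A.rank : 𝕜) := by
  set U : Matrix (Fin m) (Fin m) 𝕜 := (hA.eigenvectorUnitary : Matrix (Fin m) (Fin m) 𝕜) with hU
  have hUU : U * star U = 1 := Matrix.mem_unitaryGroup_iff.mp hA.eigenvectorUnitary.2
  have hUU' : star U * U = 1 := Matrix.mem_unitaryGroup_iff'.mp hA.eigenvectorUnitary.2
  set D : Matrix (Fin m) (Fin m) 𝕜 := diagonal (RCLike.ofReal ∘ hA.eigenvalues) with hDdef
  have hDiag : star U * A * U = D := by
    have h := hA.conjStarAlgAut_star_eigenvectorUnitary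
    simp only [Unitary.conjStarAlgAut_star_apply, Unitary.coe_star] at h
    exact h
  have hD : D * D = D := by
    rw [← hDiag]
    have h1 : star U * A * U * (star U * A * U) = star U * (A * (U * star U) * A) * U := by
      simp only [Matrix.mul_assoc]
    rw [h1, hUU, Matrix.mul_one, hi]
  have heig : ∀ i, hA.eigenvalues i = 0 ∨ hA.eigenvalues i = 1 := by
    intro i
    rw [hDdef, diagonal_mul_diagonal] at hD
    have h0 := congrArg (fun M => M i i) hD
    simp only [diagonal_apply_eq, Function.comp_apply, Pi.mul_apply] at h0
    have h2 : (hA.eigenvalues i) * (hA.eigenvalues i) = hA.eigenvalues i := by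
      exact_mod_cast h0
    have h3 : hA.eigenvalues i * (hA.eigenvalues i - 1) = 0 := by ring_nf; linarith
    rcases mul_eq_zero.mp h3 with h | h
    · exact Or.inl h
    · exact Or.inr (by linarith [sub_eq_zero.mp h])
  have htr : A.trace = ∑ i, (hA.eigenvalues i : 𝕜) := by
    nth_rewrite 1 [hA.spectral_theorem]
    simp only [Unitary.conjStarAlgAut_apply, Unitary.coe_star]
    rw [Matrix.trace_mul_cycle, ← hU, hUU', Matrix.one_mul, trace_diagonal]
    rfl
  rw [htr, hA.rank_eq_card_non_zero_eigs, Fintype.card_subtype]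
  have hcase : ∀ i : Fin m, (hA.eigenvalues i : 𝕜) =
      if hA.eigenvalues i ≠ 0 then 1 else 0 := by
    intro i; rcases heig i with h | h <;> simp [h]
  simp_rw [hcase]
  rw [Finset.sum_boole]

lemma retrace_nonneg_aux {m : ℕ} (A : Matrix (Fin m) (Fin m) 𝕜) :
    0 ≤ RCLike.re (Aᴴ * A).trace := by
  rw [Matrix.trace, map_sum]
  apply Finset.sum_nonneg
  intro i _
  rw [Matrix.diag_apply, Matrix.mul_apply, map_sum]
  apply Finset.sum_nonneg
  intro j _
  rw [Matrix.conjTranspose_apply, RCLike.star_def, RCLike.conj_mul]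
  simp only [← RCLike.ofReal_pow, RCLike.ofReal_re]
  positivity

theorem stmt3 {n l m : ℕ} (hl : 0 < l) (hlm : l < m)
    (P : Fin n → Matrix (Fin m) (Fin m) 𝕜)
    (hFF : IsFusionFrame l P)
    (V : Fin n → Matrix (Fin m) (Fin m) 𝕜)
    (hV : ∀ j, V j =
      (↑(Real.sqrt ((m : ℝ) / ((l : ℝ) * ((m : ℝ) - (l : ℝ))))) : 𝕜) •
        (P j - ((l : 𝕜) / (m : 𝕜)) • (1 : Matrix (Fin m) (Fin m) 𝕜))) :
    (∀ j k : Fin n, j ≠ k →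
      -(l : ℝ) / ((m : ℝ) - l) ≤ RCLike.re ((V j * V k).trace)) ∧
    ((∃ j k : Fin n, j ≠ k ∧ RCLike.re ((V j * V k).trace) = -1) →
      (m : ℝ) / 2 ≤ (l : ℝ)) := by
  obtain ⟨hHerm, hIdem, hRank, -⟩ := hFF
  have hm0 : (0:ℝ) < m := by exact_mod_cast hl.trans hlm
  have hl0 : (0:ℝ) < l := by exact_mod_cast hl
  have hml : (0:ℝ) < (m:ℝ) - l := by
    have : (l:ℝ) < m := by exact_mod_cast hlm
    linarith
  have hm0' : (m:𝕜) ≠ 0 := by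
    exact_mod_cast Nat.cast_ne_zero.mpr (by omega)
  set c : ℝ := Real.sqrt ((m : ℝ) / ((l : ℝ) * ((m : ℝ) - (l : ℝ)))) with hc
  have hc2 : c ^ 2 = (m : ℝ) / ((l : ℝ) * ((m : ℝ) - (l : ℝ))) :=
    Real.sq_sqrt (by positivity)
  have htrP : ∀ j, (P j).trace = (l : 𝕜) := fun j => by
    rw [trace_idem_aux (hHerm j) (hIdem j), hRank j]
  -- trace of products of projections has nonnegative real part
  have htrPP : ∀ j k, 0 ≤ RCLike.re ((P j * P k).trace) := by
    intro j k
    have e1 : ((P k * P j)ᴴ * (P k * P j)).trace = (P j * P k).trace := by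
      rw [conjTranspose_mul, (hHerm j).eq, (hHerm k).eq]
      have e2 : P j * P k * (P k * P j) = (P j * P k) * P j := by
        rw [Matrix.mul_assoc, ← Matrix.mul_assoc (P k), hIdem k, ← Matrix.mul_assoc]
      rw [e2, Matrix.trace_mul_comm, ← Matrix.mul_assoc, hIdem j]
    rw [← e1]
    exact retrace_nonneg_aux _
  -- key trace formula
  have key : ∀ j k, RCLike.re ((V j * V k).trace)
      = c ^ 2 * (RCLike.re ((P j * P k).trace) - (l:ℝ)^2 / m) := by
    intro j k
    have hexp : (V j * V k).trace
        = ((c:𝕜))^2 * ((P j * P k).trace - (l:𝕜)^2 / m) := by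
      rw [hV j, hV k]
      rw [smul_mul_assoc, mul_smul_comm, smul_smul, sub_mul, mul_sub, mul_sub]
      simp only [Matrix.smul_mul, Matrix.mul_smul, Matrix.mul_one, Matrix.one_mul,
        smul_smul]
      simp only [Matrix.trace_sub, Matrix.trace_add, Matrix.trace_smul,
        Matrix.trace_one, htrP, smul_eq_mul, Finset.card_univ, Fintype.card_fin]
      field_simp
      ring
    rw [hexp]
    have : ((c:𝕜))^2 * ((P j * P k).trace - (l:𝕜)^2 / m)
        = (((c^2 : ℝ)):𝕜) * ((P j * P k).trace - ((((l:ℝ)^2 / m) : ℝ) : 𝕜)) := by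
      push_cast
      ring
    rw [this, RCLike.re_ofReal_mul, map_sub, RCLike.ofReal_re]
  constructor
  · intro j k _
    rw [key j k]
    have hLc : c ^ 2 * ((l:ℝ)^2 / m) = (l:ℝ) / ((m:ℝ) - l) := by
      rw [hc2]
      field_simp
    have ht := htrPP j k
    have hc2pos : 0 ≤ c ^ 2 := by positivity
    have hexp2 : c ^ 2 * (RCLike.re ((P j * P k).trace) - (l:ℝ)^2 / m)
        = c ^ 2 * RCLike.re ((P j * P k).trace) - (l:ℝ) / ((m:ℝ) - l) := by
      rw [mul_sub, hLc]
    rw [hexp2, neg_div]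
    linarith [mul_nonneg hc2pos ht]
  · rintro ⟨j, k, hjk, hval⟩
    have hineq : -((l : ℝ) / ((m : ℝ) - l)) ≤ -1 := by
      have hk := key j k
      rw [hval] at hk
      have hLc : c ^ 2 * ((l:ℝ)^2 / m) = (l:ℝ) / ((m:ℝ) - l) := by
        rw [hc2]; field_simp
      have ht := htrPP j k
      have hc2pos : 0 ≤ c ^ 2 := by positivity
      have hexp2 : c ^ 2 * (RCLike.re ((P j * P k).trace) - (l:ℝ)^2 / m)
          = c ^ 2 * RCLike.re ((P j * P k).trace) - (l:ℝ) / ((m:ℝ) - l) := by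
        rw [mul_sub, hLc]
      rw [hexp2] at hk
      linarith [mul_nonneg hc2pos ht]
    have h2 : (1:ℝ) ≤ (l : ℝ) / ((m : ℝ) - l) := by linarith
    rw [le_div_iff₀ hml] at h2
    linarith

end
end

section
/- If {P_1, …, P_n} is an (n,l,m)-fusion frame over 𝔽 with 0 < l < m, n = 2·d_𝔽(m), n > d_𝔽(m)+1, and max_{j≠k} tr(P_j P_k) = l²/m (i.e., it is a maximal orthoplectic fusion frame), then m = 2l. -/
open Matrix

noncomputable section

variable {𝕜 : Type*} [RCLike 𝕜]

open Finset Module Submodule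

variable {E : Type*} [NormedAddCommGroup E] [InnerProductSpace ℝ E]

local notation "⟪" x ", " y "⟫" => @inner ℝ _ _ x y

lemma key : ∀ S : Finset E,
    (∀ v ∈ S, v ≠ 0) →
    (∀ v ∈ S, ∀ w ∈ S, v ≠ w → ⟪v, w⟫ ≤ 0) →
    (∀ v ∈ S, ∀ w ∈ S, v ≠ w → ∀ c : ℝ, c < 0 → w ≠ c • v) →
    2 * S.card ≤ 3 * finrank ℝ (span ℝ (S : Set E)) := by
  classical
  intro S
  induction S using Finset.strongInduction with
  | _ S IH =>
  intro h0 hneg hprop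
  -- extraction of a positive zero-sum subfamily from a dependent subfamily
  have extract : ∀ T : Finset E, T ⊆ S →
      ¬ LinearIndependent ℝ (fun v : T => (v : E)) →
      ∃ J : Finset E, J ⊆ T ∧ J.Nonempty ∧ ∃ d : E → ℝ,
        (∀ v ∈ J, 0 < d v) ∧ ∑ v ∈ J, d v • v = 0 := by
    intro T hTS hli
    obtain ⟨g, hsum, i, hgi⟩ := Fintype.not_linearIndependent_iff.mp hli
    set c : E → ℝ := fun v => if h : v ∈ T then g ⟨v, h⟩ else 0 with hc
    have hcs : ∑ v ∈ T, c v • v = 0 := by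
      rw [← Finset.sum_attach T (fun v => c v • v)]
      simpa [c] using hsum
    set Jp := T.filter (fun v => 0 < c v) with hJp
    set Jm := T.filter (fun v => c v < 0) with hJm
    have hdisj : Disjoint Jp Jm := by
      rw [Finset.disjoint_left]
      intro v hv1 hv2
      have h1 := (Finset.mem_filter.mp hv1).2
      have h2 := (Finset.mem_filter.mp hv2).2
      linarith
    have hsplit : ∑ v ∈ Jp, c v • v + ∑ v ∈ Jm, c v • v = 0 := by
      rw [← Finset.sum_union hdisj]
      rw [← hcs]
      apply Finset.sum_subset
      · exact Finset.union_subset (Finset.filter_subset _ _) (Finset.filter_subset _ _)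
      · intro x hx hnx
        have hc0 : c x = 0 := by
          simp only [Jp, Jm, Finset.mem_union, Finset.mem_filter, not_or, not_and] at hnx
          have h1 := hnx.1 hx
          have h2 := hnx.2 hx
          linarith [lt_or_ge 0 (c x), lt_or_ge (c x) 0]
        simp [hc0]
    have hu0 : ∑ v ∈ Jp, c v • v = 0 := by
      have hu' : ∑ v ∈ Jp, c v • v = ∑ w ∈ Jm, (-(c w)) • w := by
        have h1 : ∑ v ∈ Jp, c v • v = -∑ v ∈ Jm, c v • v :=
          eq_neg_of_add_eq_zero_left hsplit
        rw [h1, ← Finset.sum_neg_distrib]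
        exact Finset.sum_congr rfl (fun w _ => (neg_smul _ _).symm)
      have hle : ⟪∑ v ∈ Jp, c v • v, ∑ w ∈ Jm, (-(c w)) • w⟫ ≤ 0 := by
        rw [sum_inner]
        apply Finset.sum_nonpos
        intro v hv
        rw [real_inner_smul_left, inner_sum]
        apply mul_nonpos_of_nonneg_of_nonpos (le_of_lt _)
        · apply Finset.sum_nonpos
          intro w hw
          rw [real_inner_smul_right]
          have hvw : v ≠ w := by
            rintro rfl
            exact absurd ((Finset.mem_filter.mp hv).2.trans (Finset.mem_filter.mp hw).2)
              (lt_irrefl _)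
          have := hneg v (hTS ((Finset.mem_filter.mp hv).1)) w (hTS ((Finset.mem_filter.mp hw).1)) hvw
          have hcw : 0 < -(c w) := by
            have := (Finset.mem_filter.mp hw).2; linarith
          exact mul_nonpos_of_nonneg_of_nonpos hcw.le this
        · exact (Finset.mem_filter.mp hv).2
      rw [← hu'] at hle
      exact real_inner_self_nonpos.mp hle
    have hci : c i ≠ 0 := by
      simp only [c, dif_pos i.2]
      simpa using hgi
    rcases lt_trichotomy (c i) 0 with hlt | heq | hgt
    · refine ⟨Jm, Finset.filter_subset _ _, ⟨i, Finset.mem_filter.mpr ⟨i.2, hlt⟩⟩,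
        fun v => -(c v), ?_, ?_⟩
      · intro v hv
        have h2 := (Finset.mem_filter.mp hv).2
        dsimp only
        linarith
      · simp only [neg_smul, Finset.sum_neg_distrib, neg_eq_zero]
        have h3 := hsplit
        rw [hu0, zero_add] at h3
        exact h3
    · exact absurd heq hci
    · exact ⟨Jp, Finset.filter_subset _ _, ⟨i, Finset.mem_filter.mpr ⟨i.2, hgt⟩⟩,
        c, fun v hv => (Finset.mem_filter.mp hv).2, hu0⟩
  -- orthogonality consequence
  have ortho : ∀ J : Finset E, J ⊆ S → ∀ d : E → ℝ, (∀ v ∈ J, 0 < d v) →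
      ∑ v ∈ J, d v • v = 0 → ∀ x ∈ S, x ∉ J → ∀ j ∈ J, ⟪x, j⟫ = 0 := by
    intro J hJS d hd hds x hxS hxJ j hj
    have h1 : ∑ v ∈ J, d v * ⟪x, v⟫ = 0 := by
      have := congrArg (fun y => ⟪x, y⟫) hds
      simpa [inner_sum, real_inner_smul_right] using this
    have h2 : ∀ v ∈ J, d v * ⟪x, v⟫ ≤ 0 := by
      intro v hv
      have hxv : x ≠ v := fun h => hxJ (h ▸ hv)
      exact mul_nonpos_of_nonneg_of_nonpos (hd v hv).le (hneg x hxS v (hJS hv) hxv)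
    have := (Finset.sum_eq_zero_iff_of_nonpos h2).mp h1 j hj
    have hdj := hd j hj
    rcases mul_eq_zero.mp this with h | h
    · exact absurd h (ne_of_gt hdj)
    · exact h
  -- size at least 3
  have card3 : ∀ J : Finset E, J ⊆ S → J.Nonempty → ∀ d : E → ℝ, (∀ v ∈ J, 0 < d v) →
      ∑ v ∈ J, d v • v = 0 → 3 ≤ J.card := by
    intro J hJS hJne d hd hds
    by_contra hlt
    push_neg at hlt
    interval_cases h : J.card
    · rw [Finset.card_eq_zero.mp h] at hJne
      exact absurd hJne (by simp)
    · obtain ⟨v, hv⟩ := Finset.card_eq_one.mp h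
      rw [hv, Finset.sum_singleton] at hds
      have hv' : v ∈ J := hv ▸ Finset.mem_singleton_self v
      rcases smul_eq_zero.mp hds with h' | h'
      · exact absurd h' (ne_of_gt (hd v hv'))
      · exact h0 v (hJS hv') h'
    · obtain ⟨v, w, hvw, hJ⟩ := Finset.card_eq_two.mp h
      have hvJ : v ∈ J := by rw [hJ]; simp
      have hwJ : w ∈ J := by rw [hJ]; simp
      rw [hJ, Finset.sum_pair hvw] at hds
      have hdw : d w ≠ 0 := ne_of_gt (hd w hwJ)
      have hw' : w = (-(d v) / d w) • v := by
        have h1 : d w • w = (-(d v)) • v := by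
          have h2 := eq_neg_of_add_eq_zero_right hds
          rw [h2, neg_smul]
        calc w = (d w)⁻¹ • (d w • w) := (inv_smul_smul₀ hdw w).symm
        _ = (d w)⁻¹ • ((-(d v)) • v) := by rw [h1]
        _ = (-(d v) / d w) • v := by rw [smul_smul, div_eq_inv_mul]
      have hcneg : -(d v) / d w < 0 :=
        div_neg_of_neg_of_pos (neg_lt_zero.mpr (hd v hvJ)) (hd w hwJ)
      exact hprop v (hJS hvJ) w (hJS hwJ) hvw _ hcneg hw'
  -- recursion branch: a proper nonempty positive zero-sum subfamily
  have recBranch : ∀ J : Finset E, J ⊆ S → J.Nonempty → J ≠ S →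
      (∃ d : E → ℝ, (∀ v ∈ J, 0 < d v) ∧ ∑ v ∈ J, d v • v = 0) →
      2 * S.card ≤ 3 * finrank ℝ (span ℝ (S : Set E)) := by
    intro J hJS hJne hJneS hdd
    obtain ⟨d, hd, hds⟩ := hdd
    have hJssub : J ⊂ S := hJS.ssubset_of_ne hJneS
    have hKssub : S \ J ⊂ S := Finset.sdiff_ssubset hJS hJne
    have h1 := IH J hJssub (fun v hv => h0 v (hJS hv))
      (fun v hv w hw => hneg v (hJS hv) w (hJS hw))
      (fun v hv w hw => hprop v (hJS hv) w (hJS hw))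
    have h2 := IH (S \ J) hKssub (fun v hv => h0 v (Finset.mem_sdiff.mp hv).1)
      (fun v hv w hw => hneg v (Finset.mem_sdiff.mp hv).1 w (Finset.mem_sdiff.mp hw).1)
      (fun v hv w hw => hprop v (Finset.mem_sdiff.mp hv).1 w (Finset.mem_sdiff.mp hw).1)
    -- orthogonality between the two spans
    have hOrtho : span ℝ (J : Set E) ⟂ span ℝ ((S \ J : Finset E) : Set E) := by
      rw [Submodule.isOrtho_span]
      intro u hu v hv
      have hu' : u ∈ J := hu
      have hv1 : v ∈ S \ J := hv
      have hv2 := Finset.mem_sdiff.mp hv1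
      have := ortho J hJS d hd hds v hv2.1 hv2.2 u hu'
      rw [real_inner_comm] at this
      exact this
    have hInf : span ℝ (J : Set E) ⊓ span ℝ ((S \ J : Finset E) : Set E) = ⊥ :=
      disjoint_iff.mp hOrtho.disjoint
    have hSup : span ℝ (S : Set E)
        = span ℝ (J : Set E) ⊔ span ℝ ((S \ J : Finset E) : Set E) := by
      rw [← Submodule.span_union, ← Finset.coe_union, Finset.union_sdiff_of_subset hJS]
    have hrk := Submodule.finrank_sup_add_finrank_inf_eq
      (span ℝ (J : Set E)) (span ℝ ((S \ J : Finset E) : Set E))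
    rw [hInf, finrank_bot, add_zero] at hrk
    have hcard : S.card = J.card + (S \ J).card := by
      rw [Finset.card_sdiff_of_subset hJS]
      have := Finset.card_le_card hJS
      omega
    rw [hSup, hrk]
    omega
  -- main case split
  by_cases hind : LinearIndependent ℝ (fun v : S => (v : E))
  · have := finrank_span_finset_eq_card (s := S) hind
    omega
  · obtain ⟨J, hJT, hJne, d, hd, hds⟩ := extract S (Finset.Subset.refl S) hind
    by_cases hJS : J = S
    · have h3 : 3 ≤ S.card := hJS ▸ card3 J hJT hJne d hd hds
      obtain ⟨v₀, hv₀⟩ : S.Nonempty := Finset.card_pos.mp (by omega)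
      by_cases hind' : LinearIndependent ℝ (fun v : (S.erase v₀) => (v : E))
      · have he1 : finrank ℝ (span ℝ ((S.erase v₀ : Finset E) : Set E)) = S.card - 1 := by
          rw [finrank_span_finset_eq_card (s := S.erase v₀) hind', Finset.card_erase_of_mem hv₀]
        haveI : FiniteDimensional ℝ (span ℝ (S : Set E)) := inferInstance
        have he2 : finrank ℝ (span ℝ ((S.erase v₀ : Finset E) : Set E))
            ≤ finrank ℝ (span ℝ (S : Set E)) :=
          Submodule.finrank_mono (Submodule.span_mono (by
            intro x hx
            exact Finset.erase_subset v₀ S hx))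
        omega
      · obtain ⟨J', hJ'sub, hJ'ne, d', hd', hds'⟩ :=
          extract (S.erase v₀) (Finset.erase_subset v₀ S) hind'
        have hJ'neS : J' ≠ S := by
          intro h
          have : v₀ ∈ J' := h ▸ hv₀
          exact Finset.notMem_erase v₀ S (hJ'sub this)
        exact recBranch J' (hJ'sub.trans (Finset.erase_subset v₀ S)) hJ'ne hJ'neS ⟨d', hd', hds'⟩
    · exact recBranch J hJT hJne hJS ⟨d, hd, hds⟩

lemma aux_trace_rank {N : Type*} [Fintype N] [DecidableEq N] {A : Matrix N N 𝕜}
    (hA : A.IsHermitian) (h2 : A * A = A) : A.trace = (A.rank : 𝕜) := by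
  have hUU : (hA.eigenvectorUnitary : Matrix N N 𝕜) * star (hA.eigenvectorUnitary : Matrix N N 𝕜)
      = 1 := (Matrix.mem_unitaryGroup_iff).mp hA.eigenvectorUnitary.2
  have hUU' : star (hA.eigenvectorUnitary : Matrix N N 𝕜) * (hA.eigenvectorUnitary : Matrix N N 𝕜)
      = 1 := (Matrix.mem_unitaryGroup_iff').mp hA.eigenvectorUnitary.2
  have hdiag : star (hA.eigenvectorUnitary : Matrix N N 𝕜) * A *
      (hA.eigenvectorUnitary : Matrix N N 𝕜)
      = Matrix.diagonal (RCLike.ofReal ∘ hA.eigenvalues) := by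
    rw [← hA.conjStarAlgAut_star_eigenvectorUnitary, Unitary.conjStarAlgAut_star_apply]
  have hDD : (Matrix.diagonal (RCLike.ofReal ∘ hA.eigenvalues) : Matrix N N 𝕜) *
      Matrix.diagonal (RCLike.ofReal ∘ hA.eigenvalues)
      = Matrix.diagonal (RCLike.ofReal ∘ hA.eigenvalues) := by
    rw [← hdiag]
    calc star (hA.eigenvectorUnitary : Matrix N N 𝕜) * A *
          (hA.eigenvectorUnitary : Matrix N N 𝕜) *
          (star (hA.eigenvectorUnitary : Matrix N N 𝕜) * A *
          (hA.eigenvectorUnitary : Matrix N N 𝕜))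
        = star (hA.eigenvectorUnitary : Matrix N N 𝕜) *
          (A * ((hA.eigenvectorUnitary : Matrix N N 𝕜) *
          star (hA.eigenvectorUnitary : Matrix N N 𝕜)) * A) *
          (hA.eigenvectorUnitary : Matrix N N 𝕜) := by noncomm_ring
    _ = star (hA.eigenvectorUnitary : Matrix N N 𝕜) * A *
          (hA.eigenvectorUnitary : Matrix N N 𝕜) := by rw [hUU, mul_one, h2, Matrix.mul_assoc]
  have h01 : ∀ i, hA.eigenvalues i = 0 ∨ hA.eigenvalues i = 1 := by
    intro i
    rw [Matrix.diagonal_mul_diagonal] at hDD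
    have h4 := congrFun (congrFun hDD i) i
    simp only [Matrix.diagonal_apply_eq, Function.comp_apply] at h4
    have h5 : hA.eigenvalues i * hA.eigenvalues i = hA.eigenvalues i := by
      exact_mod_cast h4
    have h6 : hA.eigenvalues i * (hA.eigenvalues i - 1) = 0 := by ring_nf; linarith [h5]
    rcases mul_eq_zero.mp h6 with h | h
    · exact Or.inl h
    · exact Or.inr (by linarith)
  have htr : A.trace = ∑ i, (hA.eigenvalues i : 𝕜) := by
    conv_lhs => rw [hA.spectral_theorem]
    rw [Unitary.conjStarAlgAut_apply, Matrix.trace_mul_cycle, hUU', Matrix.one_mul, Matrix.trace_diagonal]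
    rfl
  rw [htr, hA.rank_eq_card_non_zero_eigs, Fintype.card_subtype]
  have h7 : ∀ i : N, (hA.eigenvalues i : 𝕜) = if hA.eigenvalues i ≠ 0 then 1 else 0 := by
    intro i
    rcases h01 i with h | h <;> simp [h]
  rw [Finset.sum_congr rfl (fun i _ => h7 i), Finset.sum_boole]

lemma im_zero_of_I_zero (h : (RCLike.I : 𝕜) = 0) (z : 𝕜) : RCLike.im z = 0 := by
  have h1 := RCLike.re_add_im z
  rw [h, mul_zero, add_zero] at h1
  rw [← h1, RCLike.ofReal_im]

def herm0 (𝕜 : Type*) [RCLike 𝕜] (m : ℕ) :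
    Submodule ℝ (EuclideanSpace ℝ (Fin m × Fin m × Bool)) where
  carrier := {x | (∀ i r : Fin m, x (i, r, false) = x (r, i, false)) ∧
    (∀ i r : Fin m, x (i, r, true) = - x (r, i, true)) ∧
    (∑ i, x (i, i, false)) = 0 ∧
    ((RCLike.I : 𝕜) = 0 → ∀ i r : Fin m, x (i, r, true) = 0)}
  add_mem' := by
    rintro x y ⟨hx1, hx2, hx3, hx4⟩ ⟨hy1, hy2, hy3, hy4⟩
    refine ⟨fun i r => ?_, fun i r => ?_, ?_, fun h i r => ?_⟩
    · show x _ + y _ = x _ + y _; rw [hx1 i r, hy1 i r]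
    · show x _ + y _ = -(x _ + y _); rw [hx2 i r, hy2 i r]; ring
    · show (∑ i, (x (i, i, false) + y (i, i, false))) = 0
      rw [Finset.sum_add_distrib, hx3, hy3, add_zero]
    · show x _ + y _ = 0; rw [hx4 h i r, hy4 h i r, add_zero]
  zero_mem' := by
    refine ⟨fun i r => rfl, fun i r => ?_, by simp, fun h i r => rfl⟩
    show (0 : ℝ) = -0; simp
  smul_mem' := by
    rintro c x ⟨hx1, hx2, hx3, hx4⟩
    refine ⟨fun i r => ?_, fun i r => ?_, ?_, fun h i r => ?_⟩
    · show c * x _ = c * x _; rw [hx1 i r]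
    · show c * x _ = -(c * x _); rw [hx2 i r]; ring
    · show (∑ i, c * x (i, i, false)) = 0
      rw [← Finset.mul_sum, hx3, mul_zero]
    · show c * x _ = 0; rw [hx4 h i r, mul_zero]

lemma mem_herm0_iff {m : ℕ} (x : EuclideanSpace ℝ (Fin m × Fin m × Bool)) :
    x ∈ herm0 𝕜 m ↔ ((∀ i r : Fin m, x (i, r, false) = x (r, i, false)) ∧
    (∀ i r : Fin m, x (i, r, true) = - x (r, i, true)) ∧
    (∑ i, x (i, i, false)) = 0 ∧
    ((RCLike.I : 𝕜) = 0 → ∀ i r : Fin m, x (i, r, true) = 0)) := Iff.rfl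

lemma two_mul_card_lt (m : ℕ) :
    2 * ((univ : Finset (Fin m × Fin m)).filter fun p => p.1 < p.2).card = m * m - m := by
  classical
  have hswap : ((univ : Finset (Fin m × Fin m)).filter fun p => p.1 < p.2).card
      = ((univ : Finset (Fin m × Fin m)).filter fun p => p.2 < p.1).card := by
    refine Finset.card_bij' (fun p _ => (p.2, p.1)) (fun p _ => (p.2, p.1)) ?_ ?_ ?_ ?_ <;>
      intro p hp <;>
      first
        | rfl
        | (simp only [Finset.mem_filter, Finset.mem_univ, true_and] at hp ⊢; exact hp)
  have hunion : ((univ : Finset (Fin m × Fin m)).filter fun p => p.1 < p.2)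
      ∪ ((univ : Finset (Fin m × Fin m)).filter fun p => p.2 < p.1)
      = (univ : Finset (Fin m × Fin m)).filter fun p => p.1 ≠ p.2 := by
    ext p
    simp only [Finset.mem_union, Finset.mem_filter, Finset.mem_univ, true_and]
    constructor
    · rintro (h | h)
      · exact ne_of_lt h
      · exact (ne_of_lt h).symm
    · intro h; exact lt_or_gt_of_ne h
  have hdisj : Disjoint ((univ : Finset (Fin m × Fin m)).filter fun p => p.1 < p.2)
      ((univ : Finset (Fin m × Fin m)).filter fun p => p.2 < p.1) := by
    rw [Finset.disjoint_left]
    intro p h1 h2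
    simp only [Finset.mem_filter] at h1 h2
    exact absurd (h1.2.trans h2.2) (lt_irrefl _)
  have hoff : (univ : Finset (Fin m × Fin m)).filter (fun p => p.1 ≠ p.2)
      = (univ : Finset (Fin m)).offDiag := by
    ext p
    simp [Finset.mem_offDiag]
  have hcard := Finset.card_union_of_disjoint hdisj
  rw [hunion, hoff, Finset.offDiag_card, Finset.card_univ, Fintype.card_fin] at hcard
  omega


lemma aux_finrank_le {ι : Type*} [Fintype ι] (W : Submodule ℝ (EuclideanSpace ℝ ι))
    (C : Finset ι)
    (h : ∀ x : EuclideanSpace ℝ ι, x ∈ W → (∀ c ∈ C, x c = 0) → x = 0) :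
    finrank ℝ W ≤ C.card := by
  classical
  let φ : W →ₗ[ℝ] (↥C → ℝ) :=
    { toFun := fun x c => (x : EuclideanSpace ℝ ι) c.val
      map_add' := fun x y => rfl
      map_smul' := fun r x => rfl }
  have hinj : Function.Injective φ := by
    intro x y hxy
    apply Subtype.ext
    have hsub : ((x - y : W) : EuclideanSpace ℝ ι) = 0 := by
      apply h _ (x - y).2
      intro c hc
      have := congrFun hxy (⟨c, hc⟩ : ↥C)
      show (x : EuclideanSpace ℝ ι) c - (y : EuclideanSpace ℝ ι) c = 0
      exact sub_eq_zero.mpr this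
    rw [Submodule.coe_sub, sub_eq_zero] at hsub
    exact hsub
  have hle := LinearMap.finrank_le_finrank_of_injective hinj
  rwa [Module.finrank_pi ℝ, Fintype.card_coe] at hle

lemma finrank_herm0_le (m : ℕ) (hm : 0 < m) : finrank ℝ (herm0 𝕜 m) ≤ dF 𝕜 m := by
  classical
  obtain ⟨k, rfl⟩ : ∃ k, m = k + 1 := ⟨m - 1, by omega⟩
  set m := k + 1
  have e1 : 2 * ((univ : Finset (Fin m × Fin m)).filter fun p => p.1 < p.2).card
      = k * k + k := by
    have := two_mul_card_lt m
    have h2 : m * m = (k * k + k) + m := by show (k+1)*(k+1) = _; ring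
    rw [this, h2, Nat.add_sub_cancel]
  set N := ((univ : Finset (Fin m × Fin m)).filter fun p => p.1 < p.2).card with hN
  have hdiagfilter : ((univ : Finset (Fin m)).filter fun i : Fin m => i ≠ 0).card = k := by
    rw [Finset.filter_ne' (univ : Finset (Fin m)) 0,
      Finset.card_erase_of_mem (Finset.mem_univ _), Finset.card_univ, Fintype.card_fin]
    rfl
  -- some membership helpers
  by_cases hI : (RCLike.I : 𝕜) = 0
  · -- real case
    set C : Finset (Fin m × Fin m × Bool) :=
      ((univ.filter fun q : Fin m × Fin m => q.1 < q.2).image fun q => (q.1, q.2, false))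
      ∪ ((univ.filter fun i : Fin m => i ≠ 0).image fun i => (i, i, false)) with hC
    have hcard : C.card ≤ N + k := by
      calc C.card ≤ _ + _ := Finset.card_union_le _ _
      _ ≤ N + k := by
          apply Nat.add_le_add
          · exact (Finset.card_image_le).trans_eq rfl
          · exact (Finset.card_image_le).trans_eq hdiagfilter
    have hinj := aux_finrank_le (herm0 𝕜 m) C ?_
    · refine hinj.trans (hcard.trans ?_)
      have hdfeq : dF 𝕜 m = (m + 2) * (m - 1) / 2 := by rw [dF, if_pos hI]
      rw [hdfeq]
      have hX : (m + 2) * (m - 1) = 2 * (N + k) := by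
        show (k + 1 + 2) * (k + 1 - 1) = _
        rw [Nat.add_sub_cancel]
        calc (k + 1 + 2) * k = (k * k + k) + 2 * k := by ring
        _ = 2 * N + 2 * k := by rw [← e1]
        _ = 2 * (N + k) := by ring
      rw [hX, Nat.mul_div_cancel_left _ (by norm_num)]
    · rintro x ⟨h1, h2, h3, h4⟩ hc
      have hCz : ∀ i r : Fin m, i < r → x (i, r, false) = 0 := by
        intro i r h
        apply hc
        rw [hC]
        exact Finset.mem_union_left _ (Finset.mem_image.mpr ⟨(i, r), by simp [h], rfl⟩)
      have hCd : ∀ i : Fin m, i ≠ 0 → x (i, i, false) = 0 := by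
        intro i h
        apply hc
        rw [hC]
        exact Finset.mem_union_right _ (Finset.mem_image.mpr ⟨i, by simp [h], rfl⟩)
      have hz : ∀ i r : Fin m, x (i, r, false) = 0 := by
        intro i r
        rcases lt_trichotomy i r with h | h | h
        · exact hCz i r h
        · subst h
          by_cases h0 : i = 0
          · have h5 : ∑ j : Fin m, x (j, j, false) = x (i, i, false) := by
              apply Finset.sum_eq_single i
              · intro j _ hj
                apply hCd
                intro hj0
                exact hj (hj0.trans h0.symm)
              · intro h; exact absurd (Finset.mem_univ i) h
            rw [h3] at h5
            exact h5.symm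
          · exact hCd i h0
        · rw [h1 i r]
          exact hCz r i h
      refine PiLp.ext fun p => ?_
      obtain ⟨i, r, b⟩ := p
      show x (i, r, b) = (0 : ℝ)
      cases b
      · exact hz i r
      · exact h4 hI i r
  · -- complex case
    set C : Finset (Fin m × Fin m × Bool) :=
      (((univ.filter fun q : Fin m × Fin m => q.1 < q.2).image fun q => (q.1, q.2, false))
      ∪ ((univ.filter fun q : Fin m × Fin m => q.1 < q.2).image fun q => (q.1, q.2, true)))
      ∪ ((univ.filter fun i : Fin m => i ≠ 0).image fun i => (i, i, false)) with hC
    have hcard : C.card ≤ (N + N) + k := by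
      calc C.card ≤ _ + _ := Finset.card_union_le _ _
      _ ≤ (N + N) + k := by
          apply Nat.add_le_add
          · calc _ ≤ _ + _ := Finset.card_union_le _ _
            _ ≤ N + N := Nat.add_le_add Finset.card_image_le Finset.card_image_le
          · exact (Finset.card_image_le).trans_eq hdiagfilter
    have hinj := aux_finrank_le (herm0 𝕜 m) C ?_
    · refine hinj.trans (hcard.trans ?_)
      have hdfeq : dF 𝕜 m = m ^ 2 - 1 := by rw [dF, if_neg hI]
      rw [hdfeq]
      have hX : m ^ 2 - 1 = (N + N) + k := by
        have h5 : m ^ 2 = (k * k + 2 * k) + 1 := by show (k+1)^2 = _; ring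
        rw [h5, Nat.add_sub_cancel]
        omega
      rw [hX]
    · rintro x ⟨h1, h2, h3, h4⟩ hc
      have hCz : ∀ i r : Fin m, i < r → ∀ b, x (i, r, b) = 0 := by
        intro i r h b
        apply hc
        rw [hC]
        cases b
        · exact Finset.mem_union_left _ (Finset.mem_union_left _
            (Finset.mem_image.mpr ⟨(i, r), by simp [h], rfl⟩))
        · exact Finset.mem_union_left _ (Finset.mem_union_right _
            (Finset.mem_image.mpr ⟨(i, r), by simp [h], rfl⟩))
      have hCd : ∀ i : Fin m, i ≠ 0 → x (i, i, false) = 0 := by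
        intro i h
        apply hc
        rw [hC]
        exact Finset.mem_union_right _ (Finset.mem_image.mpr ⟨i, by simp [h], rfl⟩)
      refine PiLp.ext fun p => ?_
      obtain ⟨i, r, b⟩ := p
      show x (i, r, b) = (0 : ℝ)
      cases b
      · rcases lt_trichotomy i r with h | h | h
        · exact hCz i r h false
        · subst h
          by_cases h0 : i = 0
          · have h5 : ∑ j : Fin m, x (j, j, false) = x (i, i, false) := by
              apply Finset.sum_eq_single i
              · intro j _ hj
                apply hCd
                intro hj0
                exact hj (hj0.trans h0.symm)
              · intro h; exact absurd (Finset.mem_univ i) h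
            rw [h3] at h5
            exact h5.symm
          · exact hCd i h0
        · rw [h1 i r]
          exact hCz r i h false
      · rcases lt_trichotomy i r with h | h | h
        · exact hCz i r h true
        · subst h
          have h5 := h2 i i
          linarith
        · rw [h2 i r, hCz r i h true, neg_zero]

set_option maxHeartbeats 1000000 in
theorem stmt4 {n l m : ℕ} (hl : 0 < l) (hlm : l < m)
    (hn : n = 2 * dF 𝕜 m) (hn' : dF 𝕜 m + 1 < n)
    (P : Fin n → Matrix (Fin m) (Fin m) 𝕜)
    (hFF : IsFusionFrame l P)
    -- the maximal cross inner product equals `l²/m`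
    (hmaxle : ∀ j k : Fin n, j ≠ k → RCLike.re ((P j * P k).trace) ≤ (l : ℝ) ^ 2 / m)
    (hmaxeq : ∃ j k : Fin n, j ≠ k ∧ RCLike.re ((P j * P k).trace) = (l : ℝ) ^ 2 / m) :
    m = 2 * l := by
  classical
  obtain ⟨hHerm, hIdem, hRank, -⟩ := hFF
  have hm0 : 0 < m := hl.trans hlm
  have hmK : (m : 𝕜) ≠ 0 := Nat.cast_ne_zero.mpr hm0.ne'
  have hmR : (m : ℝ) ≠ 0 := Nat.cast_ne_zero.mpr hm0.ne'
  have htrP : ∀ j, (P j).trace = (l : 𝕜) := by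
    intro j
    rw [aux_trace_rank (hHerm j) (hIdem j), hRank j]
  set Q : Fin n → Matrix (Fin m) (Fin m) 𝕜 := fun j => P j - ((l : 𝕜)/m) • 1 with hQdef
  have hQHerm : ∀ j, (Q j).IsHermitian := by
    intro j
    apply (hHerm j).sub
    show ((((l : 𝕜)/m) • 1 : Matrix (Fin m) (Fin m) 𝕜))ᴴ = _
    rw [Matrix.conjTranspose_smul, Matrix.conjTranspose_one]
    congr 1
    simp
  have htrQ : ∀ j k, ((Q j) * (Q k)).trace
      = ((P j) * (P k)).trace - (((l : ℝ)^2/m : ℝ) : 𝕜) := by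
    intro j k
    rw [hQdef]
    simp only [Matrix.sub_mul, Matrix.mul_sub, Matrix.smul_mul, Matrix.mul_smul,
      Matrix.one_mul, Matrix.mul_one, Matrix.trace_sub, Matrix.trace_smul, smul_eq_mul,
      htrP, Matrix.trace_one, Fintype.card_fin, smul_smul]
    push_cast
    field_simp
    ring
  set e : Matrix (Fin m) (Fin m) 𝕜 → EuclideanSpace ℝ (Fin m × Fin m × Bool) :=
    fun M => WithLp.toLp 2 (fun p : Fin m × Fin m × Bool =>
      if p.2.2 then RCLike.im (M p.1 p.2.1) else RCLike.re (M p.1 p.2.1)) with he_def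
  have hInner : ∀ M N : Matrix (Fin m) (Fin m) 𝕜, N.IsHermitian →
      (inner ℝ (e M) (e N) : ℝ) = RCLike.re (M * N).trace := by
    intro M N hN
    have h1 : (inner ℝ (e M) (e N) : ℝ) = ∑ p : Fin m × Fin m × Bool, e M p * e N p := by
      rw [PiLp.inner_apply]
      simp [RCLike.inner_apply, conj_trivial]
      exact Finset.sum_congr rfl fun _ _ => mul_comm _ _
    have h2 : (M * N).trace = ∑ i : Fin m, ∑ r : Fin m, M i r * N r i := by
      simp [Matrix.trace, Matrix.diag, Matrix.mul_apply]
    rw [h1, h2, map_sum, Fintype.sum_prod_type]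
    refine Finset.sum_congr rfl fun i _ => ?_
    rw [map_sum, Fintype.sum_prod_type]
    refine Finset.sum_congr rfl fun r _ => ?_
    rw [Fintype.sum_bool, ← hN.apply r i]
    simp only [he_def, RCLike.star_def, RCLike.mul_re, RCLike.conj_re, RCLike.conj_im,
      Bool.false_eq_true, if_true, if_false]
    ring
  have hQin : ∀ j k, (inner ℝ (e (Q j)) (e (Q k)) : ℝ)
      = RCLike.re ((P j * P k).trace) - (l : ℝ)^2/m := by
    intro j k
    rw [hInner _ _ (hQHerm k), htrQ j k, map_sub, RCLike.ofReal_re]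
  have hQself : ∀ j, (inner ℝ (e (Q j)) (e (Q j)) : ℝ) = (l : ℝ) - (l : ℝ)^2/m := by
    intro j
    rw [hQin j j]
    congr 1
    have h3 : (P j * P j).trace = (l : 𝕜) := by rw [hIdem j, htrP j]
    rw [h3]
    simp
  have hspos : 0 < (l : ℝ) - (l : ℝ)^2/m := by
    rw [sub_pos, div_lt_iff₀ (by positivity)]
    have hlR : (0 : ℝ) < l := by exact_mod_cast hl
    have hlmR : (l : ℝ) < m := by exact_mod_cast hlm
    nlinarith
  by_cases hcase : ∃ j k : Fin n, ∃ c : ℝ, j ≠ k ∧ c < 0 ∧ e (Q k) = c • e (Q j)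
  · obtain ⟨j, k, c, hjk, hc, hek⟩ := hcase
    have hmat : Q k = (c : 𝕜) • Q j := by
      ext i r
      have hre := congrFun (congrArg WithLp.ofLp hek) (i, r, false)
      have him := congrFun (congrArg WithLp.ofLp hek) (i, r, true)
      simp only [he_def, Bool.false_eq_true, if_true, if_false, PiLp.smul_apply,
        smul_eq_mul, WithLp.ofLp_smul, Pi.smul_apply, PiLp.toLp_apply] at hre him
      rw [Matrix.smul_apply, smul_eq_mul]
      calc Q k i r = ↑(RCLike.re (Q k i r)) + ↑(RCLike.im (Q k i r)) * RCLike.I :=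
            (RCLike.re_add_im _).symm
      _ = ↑(c * RCLike.re (Q j i r)) + ↑(c * RCLike.im (Q j i r)) * RCLike.I := by
            rw [hre, him]
      _ = (c : 𝕜) * (↑(RCLike.re (Q j i r)) + ↑(RCLike.im (Q j i r)) * RCLike.I) := by
            push_cast
            ring
      _ = (c : 𝕜) * Q j i r := by rw [RCLike.re_add_im]
    have hc1 : c = -1 := by
      have h1 : (inner ℝ (e (Q k)) (e (Q k)) : ℝ) = c^2 * (inner ℝ (e (Q j)) (e (Q j)) : ℝ) := by
        rw [hek, real_inner_smul_left, real_inner_smul_right]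
        ring
      rw [hQself, hQself] at h1
      have hc2 : c^2 = 1 := by
        have h9 := hspos
        nlinarith [h1]
      have h10 : (c - 1) * (c + 1) = 0 := by nlinarith [hc2]
      rcases mul_eq_zero.mp h10 with h | h
      · nlinarith
      · linarith
    rw [hc1] at hmat
    have hsum : P k = ((2 * l : 𝕜)/m) • 1 - P j := by
      have h1 : Q k = - Q j := by
        rw [hmat]
        push_cast
        rw [neg_one_smul]
      rw [hQdef] at h1
      simp only at h1
      have h2 : P k - ((l : 𝕜)/m) • 1 = -(P j - ((l : 𝕜)/m) • 1) := h1
      rw [sub_eq_iff_eq_add] at h2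
      rw [h2]
      have h3 : ((2 * l : 𝕜)/m) = (l : 𝕜)/m + (l : 𝕜)/m := by ring
      rw [h3, add_smul]
      abel
    set τ : 𝕜 := (2 * l : 𝕜)/m with hτdef
    by_cases hτ : τ = 1
    · have h1 : (2 * l : 𝕜) = m := by
        rw [hτdef, div_eq_one_iff_eq hmK] at hτ
        exact_mod_cast hτ
      have h2 : 2 * l = m := by exact_mod_cast h1
      omega
    · exfalso
      set C : Matrix (Fin m) (Fin m) 𝕜 := τ • 1 with hCdef
      have hexp : (C - P j) * (C - P j) = C - P j := by rw [← hsum]; exact hIdem k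
      have hA : (C - P j) * (C - P j) = (C * C - C * P j) - (P j * C - P j * P j) := by
        rw [Matrix.sub_mul, Matrix.mul_sub, Matrix.mul_sub]
      have hexp2 : (C * C - C * P j) - (P j * C - P j * P j) = C - P j := by
        rw [← hA]; exact hexp
      have hcomm : P j * C = C * P j := by
        rw [hCdef, Matrix.smul_mul, Matrix.mul_smul, Matrix.one_mul, Matrix.mul_one]
      have hdiff : (C * C - C) - (C * P j + C * P j - (P j + P j))
          = ((C * C - C * P j) - (P j * C - P j * P j)) - (C - P j) := by
        rw [hcomm, hIdem j]
        abel
      rw [hexp2, sub_self] at hdiff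
      have h4 : C * C - C = C * P j + C * P j - (P j + P j) := sub_eq_zero.mp hdiff
      have hCC : C * C = (τ * τ) • (1 : Matrix (Fin m) (Fin m) 𝕜) := by
        rw [hCdef, Matrix.smul_mul, Matrix.one_mul, smul_smul]
      have hCP : C * P j = τ • P j := by
        rw [hCdef, Matrix.smul_mul, Matrix.one_mul]
      have h4' : (τ * τ - τ) • (1 : Matrix (Fin m) (Fin m) 𝕜) = (2 * τ - 2) • P j := by
        calc (τ * τ - τ) • (1 : Matrix (Fin m) (Fin m) 𝕜) = C * C - C := by
              rw [sub_smul, hCC]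
        _ = C * P j + C * P j - (P j + P j) := h4
        _ = (2 * τ - 2) • P j := by
              rw [hCP, sub_smul, two_mul, add_smul, two_smul]
      have hne : (2 * τ - 2 : 𝕜) ≠ 0 := by
        intro h
        apply hτ
        linear_combination h / 2
      have h5 : P j = (τ/2) • 1 := by
        have h11 := congrArg (fun M => ((2 * τ - 2 : 𝕜)⁻¹) • M) h4' 
        simp only [smul_smul, inv_mul_cancel₀ hne, one_smul] at h11
        rw [← h11]
        congr 1
        field_simp
      have h6 : (τ/2) * m = (l : 𝕜) := by
        have h12 := htrP j
        rw [h5, Matrix.trace_smul, Matrix.trace_one, smul_eq_mul] at h12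
        simpa using h12
      have h7 : (τ/2) * (τ/2) = τ/2 := by
        have h13 := hIdem j
        rw [h5, Matrix.smul_mul, Matrix.mul_smul, Matrix.one_mul, smul_smul] at h13
        have h8 := congrFun (congrFun h13 (⟨0, hm0⟩ : Fin m)) (⟨0, hm0⟩ : Fin m)
        simpa using h8
      have h9 : (τ/2) * (τ/2 - 1) = 0 := by linear_combination h7
      rcases mul_eq_zero.mp h9 with h | h
      · rw [h, zero_mul] at h6
        have : l = 0 := by exact_mod_cast h6.symm
        omega
      · have h14 : τ/2 = 1 := by linear_combination h
        rw [h14, one_mul] at h6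
        have : m = l := by exact_mod_cast h6
        omega
  · exfalso
    push_neg at hcase
    have hinj : Function.Injective (fun j => e (Q j)) := by
      intro j k hjk
      by_contra hne
      have hjk' : e (Q j) = e (Q k) := hjk
      have h2 := hQin j k
      rw [hjk', hQself k] at h2
      have h3 : RCLike.re ((P j * P k).trace) = l := by linarith
      have h1 := hmaxle j k hne
      rw [h3] at h1
      linarith
    set S : Finset (EuclideanSpace ℝ (Fin m × Fin m × Bool)) :=
      Finset.image (fun j => e (Q j)) Finset.univ with hS
    have hcardS : S.card = n := by
      rw [hS, Finset.card_image_of_injective _ hinj, Finset.card_univ, Fintype.card_fin]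
    have h0S : ∀ v ∈ S, v ≠ 0 := by
      intro v hv h
      obtain ⟨j, -, rfl⟩ := Finset.mem_image.mp hv
      have h1 := hQself j
      rw [h, inner_zero_left] at h1
      linarith
    have hnegS : ∀ v ∈ S, ∀ w ∈ S, v ≠ w → (inner ℝ v w : ℝ) ≤ 0 := by
      intro v hv w hw hvw
      obtain ⟨j, -, rfl⟩ := Finset.mem_image.mp hv
      obtain ⟨k, -, rfl⟩ := Finset.mem_image.mp hw
      have hjk : j ≠ k := by rintro rfl; exact hvw rfl
      have h1 := hmaxle j k hjk
      rw [hQin j k]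
      linarith
    have hpropS : ∀ v ∈ S, ∀ w ∈ S, v ≠ w → ∀ c : ℝ, c < 0 → w ≠ c • v := by
      intro v hv w hw hvw c hc h
      obtain ⟨j, -, rfl⟩ := Finset.mem_image.mp hv
      obtain ⟨k, -, rfl⟩ := Finset.mem_image.mp hw
      have hjk : j ≠ k := by rintro rfl; exact hvw rfl
      exact hcase j k c hjk hc h
    have hkey := key S h0S hnegS hpropS
    have hsub : span ℝ (S : Set (EuclideanSpace ℝ (Fin m × Fin m × Bool))) ≤ herm0 𝕜 m := by
      rw [Submodule.span_le]
      intro v hv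
      obtain ⟨j, -, rfl⟩ := Finset.mem_image.mp (Finset.mem_coe.mp hv)
      rw [SetLike.mem_coe, mem_herm0_iff (𝕜 := 𝕜)]
      refine ⟨fun i r => ?_, fun i r => ?_, ?_, fun hI i r => ?_⟩
      · simp only [he_def, Bool.false_eq_true, if_false]
        rw [← (hQHerm j).apply i r, RCLike.star_def, RCLike.conj_re]
      · simp only [he_def, if_true]
        rw [← (hQHerm j).apply i r, RCLike.star_def, RCLike.conj_im]
      · have htr0 : (Q j).trace = 0 := by
          rw [hQdef]
          simp only [Matrix.trace_sub, Matrix.trace_smul, htrP, Matrix.trace_one, Fintype.card_fin, smul_eq_mul]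
          field_simp
          simp
        have h1 : ∑ i : Fin m, RCLike.re (Q j i i) = RCLike.re ((Q j).trace) := by
          rw [Matrix.trace, map_sum]
          rfl
        simp only [he_def, Bool.false_eq_true, if_false]
        rw [h1, htr0, map_zero]
      · simp only [he_def, if_true]
        exact im_zero_of_I_zero hI _
    haveI : FiniteDimensional ℝ (herm0 𝕜 m) := inferInstance
    have hfin : finrank ℝ (span ℝ (S : Set (EuclideanSpace ℝ (Fin m × Fin m × Bool))))
        ≤ dF 𝕜 m := (Submodule.finrank_mono hsub).trans (finrank_herm0_le m hm0)
    omega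

end
end

section
/- Let 𝕊 be a collection of n distinct subsets of {1,…,m}, each of cardinality l, with n > m. Then max over distinct pairs J ≠ J' in 𝕊 of |J ∩ J'| is at least l²/m. Moreover, if n = 2(m−1) and this maximum equals l²/m, then l = m/2 and 𝕊 can be partitioned into m−1 pairs of disjoint subsets of size m/2. -/
open Finset
open scoped Classical

noncomputable section Aux12

variable {m l : ℕ} {S : Finset (Finset (Fin m))}

def wvec' (m l : ℕ) (S : Finset (Finset (Fin m))) (J : {J // J ∈ S}) : Fin m → ℝ :=
  fun x => (if x ∈ J.1 then (1:ℝ) else 0) - (l:ℝ)/(m:ℝ)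

def dotp {m : ℕ} (u v : Fin m → ℝ) : ℝ := ∑ x, u x * v x

lemma dotp_comm {m : ℕ} (u v : Fin m → ℝ) : dotp u v = dotp v u := by
  simp [dotp, mul_comm]

lemma eq_zero_of_dotp_self {m : ℕ} {u : Fin m → ℝ} (h : dotp u u = 0) : u = 0 := by
  funext x
  have h1 := (Finset.sum_eq_zero_iff_of_nonneg
    (fun x _ => mul_self_nonneg (u x))).mp h x (mem_univ x)
  simpa using mul_self_eq_zero.mp h1

lemma sum_ite_card (K : Finset (Fin m)) :
    ∑ x, (if x ∈ K then (1:ℝ) else 0) = (K.card : ℝ) := by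
  rw [Finset.sum_boole]; congr 1; simp [Finset.filter_mem_eq_inter]

lemma dotp_w (hm : 0 < m) (J J' : {J // J ∈ S}) (hJ : J.1.card = l) (hJ' : J'.1.card = l) :
    dotp (wvec' m l S J) (wvec' m l S J') = ((J.1 ∩ J'.1).card : ℝ) - (l:ℝ)^2/(m:ℝ) := by
  have hmR : (m:ℝ) ≠ 0 := Nat.cast_ne_zero.mpr hm.ne'
  have h2 : ∑ x, (if x ∈ J.1 then (1:ℝ) else 0) * (if x ∈ J'.1 then (1:ℝ) else 0)
      = ((J.1 ∩ J'.1).card : ℝ) := by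
    rw [← sum_ite_card (J.1 ∩ J'.1)]
    refine Finset.sum_congr rfl fun x _ => ?_
    by_cases hx : x ∈ J.1 <;> by_cases hx' : x ∈ J'.1 <;> simp [hx, hx', Finset.mem_inter]
  simp only [dotp, wvec', sub_mul, mul_sub, Finset.sum_sub_distrib]
  rw [h2]
  simp only [← Finset.sum_mul, ← Finset.mul_sum, sum_ite_card, hJ, hJ']
  rw [Finset.sum_const, Finset.card_univ, Fintype.card_fin, nsmul_eq_mul]
  field_simp
  ring

def Tmap (m l : ℕ) (S : Finset (Finset (Fin m))) :
    (({J // J ∈ S}) → ℝ) →ₗ[ℝ] (Fin m → ℝ) where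
  toFun c := ∑ J : {J // J ∈ S}, c J • wvec' m l S J
  map_add' c d := by simp [add_smul, Finset.sum_add_distrib]
  map_smul' r c := by simp [smul_smul, Finset.smul_sum]

def sigmaMap (m : ℕ) : (Fin m → ℝ) →ₗ[ℝ] ℝ where
  toFun v := ∑ x, v x
  map_add' u v := by simp [Finset.sum_add_distrib]
  map_smul' r v := by simp [Finset.mul_sum]

lemma dotp_sum_left {ι : Type*} [Fintype ι] (c : ι → ℝ) (f : ι → Fin m → ℝ) (v : Fin m → ℝ) :
    dotp (∑ J, c J • f J) v = ∑ J, c J * dotp (f J) v := by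
  simp only [dotp, Finset.sum_apply, Pi.smul_apply, smul_eq_mul, Finset.sum_mul, Finset.mul_sum]
  rw [Finset.sum_comm]
  exact Finset.sum_congr rfl fun J _ => Finset.sum_congr rfl fun x _ => by ring

lemma dotp_sum_right {ι : Type*} [Fintype ι] (c : ι → ℝ) (f : ι → Fin m → ℝ) (v : Fin m → ℝ) :
    dotp v (∑ J, c J • f J) = ∑ J, c J * dotp v (f J) := by
  simp only [dotp, Finset.sum_apply, Pi.smul_apply, smul_eq_mul, Finset.sum_mul, Finset.mul_sum]
  rw [Finset.sum_comm]
  exact Finset.sum_congr rfl fun J _ => Finset.sum_congr rfl fun x _ => by ring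

lemma Tmap_apply (c : ({J // J ∈ S}) → ℝ) :
    Tmap m l S c = ∑ J : {J // J ∈ S}, c J • wvec' m l S J := rfl

lemma dotp_T (c d : ({J // J ∈ S}) → ℝ) :
    dotp (Tmap m l S c) (Tmap m l S d)
      = ∑ J : {J // J ∈ S}, ∑ J' : {J // J ∈ S},
          c J * d J' * dotp (wvec' m l S J) (wvec' m l S J') := by
  rw [Tmap_apply, dotp_sum_left]
  refine Finset.sum_congr rfl fun J _ => ?_
  rw [Tmap_apply, dotp_sum_right, Finset.mul_sum]
  exact Finset.sum_congr rfl fun J' _ => by ring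

lemma dotp_w_T (c : ({J // J ∈ S}) → ℝ) (J : {J // J ∈ S}) :
    dotp (wvec' m l S J) (Tmap m l S c)
      = ∑ J' : {J // J ∈ S}, c J' * dotp (wvec' m l S J) (wvec' m l S J') := by
  rw [Tmap_apply, dotp_sum_right]

lemma finrank_ker_T (hm : 0 < m) (hw : ∀ J : {J // J ∈ S}, sigmaMap m (wvec' m l S J) = 0) :
    S.card ≤ Module.finrank ℝ (LinearMap.ker (Tmap m l S)) + (m - 1) := by
  classical
  have hrn := LinearMap.finrank_range_add_finrank_ker (Tmap m l S)
  have hpi : Module.finrank ℝ (({J // J ∈ S}) → ℝ) = S.card := by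
    rw [Module.finrank_pi]; exact Fintype.card_coe S
  have hle : LinearMap.range (Tmap m l S) ≤ LinearMap.ker (sigmaMap m) := by
    rintro v ⟨c, rfl⟩
    simp only [LinearMap.mem_ker]
    rw [Tmap_apply, map_sum]
    refine Finset.sum_eq_zero fun J _ => ?_
    rw [map_smul, hw J, smul_zero]
  have hσsurj : Function.Surjective (sigmaMap m) := by
    intro r
    refine ⟨fun _ => r / m, ?_⟩
    show ∑ _x : Fin m, r / (m:ℝ) = r
    rw [Finset.sum_const, Finset.card_univ, Fintype.card_fin, nsmul_eq_mul]
    field_simp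
  have hrnσ := LinearMap.finrank_range_add_finrank_ker (sigmaMap m)
  have hrange : LinearMap.range (sigmaMap m) = ⊤ := LinearMap.range_eq_top.mpr hσsurj
  rw [hrange, finrank_top, Module.finrank_self, Module.finrank_pi, Fintype.card_fin] at hrnσ
  have hmono : Module.finrank ℝ (LinearMap.range (Tmap m l S))
      ≤ Module.finrank ℝ (LinearMap.ker (sigmaMap m)) := Submodule.finrank_mono hle
  omega

def adjS (m l : ℕ) (S : Finset (Finset (Fin m))) (J J' : {J // J ∈ S}) : Prop :=
  dotp (wvec' m l S J) (wvec' m l S J') < 0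

def rS (m l : ℕ) (S : Finset (Finset (Fin m))) : {J // J ∈ S} → {J // J ∈ S} → Prop :=
  Relation.ReflTransGen (adjS m l S)

variable (hg : ∀ J J' : {J // J ∈ S}, J ≠ J' →
    dotp (wvec' m l S J) (wvec' m l S J') ≤ 0)

lemma rS_symm : Symmetric (rS m l S) :=
  fun a b hab => (@Relation.ReflTransGen.stdSymm _ _ ⟨fun J J' h => by
    unfold adjS at *; rwa [dotp_comm] at h⟩).symm a b hab

include hg

lemma abs_ker {c : ({J // J ∈ S}) → ℝ} (hc : Tmap m l S c = 0) :
    Tmap m l S (fun J => |c J|) = 0 := by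
  set d : ({J // J ∈ S}) → ℝ := fun J => |c J| with hd
  have h1 : dotp (Tmap m l S d) (Tmap m l S d) ≤ dotp (Tmap m l S c) (Tmap m l S c) := by
    rw [dotp_T, dotp_T]
    refine Finset.sum_le_sum fun J _ => Finset.sum_le_sum fun J' _ => ?_
    by_cases h : J = J'
    · subst h; simp [hd, abs_mul_abs_self]
    · have hgle := hg J J' h
      have : c J * c J' ≤ d J * d J' := by
        rw [hd]; simpa [abs_mul] using le_abs_self (c J * c J')
      exact mul_le_mul_of_nonpos_right this hgle
  rw [hc] at h1
  have h0 : dotp ((0 : Fin m → ℝ)) 0 = 0 := by simp [dotp]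
  rw [h0] at h1
  exact eq_zero_of_dotp_self (le_antisymm h1
    (Finset.sum_nonneg fun x _ => mul_self_nonneg _))

lemma zero_prop {c : ({J // J ∈ S}) → ℝ} (hc : Tmap m l S c = 0)
    (hnn : ∀ J, 0 ≤ c J) {J₀ J₁ : {J // J ∈ S}} (h0 : c J₀ = 0)
    (hadj : adjS m l S J₀ J₁) : c J₁ = 0 := by
  have h1 : dotp (wvec' m l S J₀) (Tmap m l S c) = 0 := by rw [hc]; simp [dotp]
  rw [dotp_w_T] at h1
  have hterm : ∀ J' ∈ (univ : Finset {J // J ∈ S}),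
      c J' * dotp (wvec' m l S J₀) (wvec' m l S J') ≤ 0 := by
    intro J' _
    by_cases h : J₀ = J'
    · subst h; rw [h0]; simp
    · exact mul_nonpos_of_nonneg_of_nonpos (hnn J') (hg J₀ J' h)
  have h2 := (Finset.sum_eq_zero_iff_of_nonpos hterm).mp h1 J₁ (mem_univ _)
  rcases mul_eq_zero.mp h2 with h | h
  · exact h
  · exact absurd h (ne_of_lt hadj)

lemma zero_reach {c : ({J // J ∈ S}) → ℝ} (hc : Tmap m l S c = 0)
    (hnn : ∀ J, 0 ≤ c J) {J₀ J₁ : {J // J ∈ S}} (h0 : c J₀ = 0)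
    (hr : rS m l S J₀ J₁) : c J₁ = 0 := by
  induction hr with
  | refl => exact h0
  | tail _ hadj ih => exact zero_prop hg hc hnn ih hadj

lemma support_closed {c : ({J // J ∈ S}) → ℝ} (hc : Tmap m l S c = 0)
    {J₀ J₁ : {J // J ∈ S}} (h0 : c J₀ = 0) (hr : rS m l S J₀ J₁) : c J₁ = 0 := by
  have h1 := zero_reach hg (abs_ker hg hc) (fun J => abs_nonneg _)
    (by simpa using h0) hr
  simpa using h1

lemma block_ker {c : ({J // J ∈ S}) → ℝ} (hc : Tmap m l S c = 0) (J₀ : {J // J ∈ S}) :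
    Tmap m l S (fun J' => if rS m l S J₀ J' then c J' else 0) = 0 := by
  set c1 : ({J // J ∈ S}) → ℝ := fun J' => if rS m l S J₀ J' then c J' else 0 with hc1
  set c2 : ({J // J ∈ S}) → ℝ := fun J' => c J' - c1 J' with hc2
  have hsum : c = c1 + c2 := by funext J; simp [hc1, hc2]
  have hcross : dotp (Tmap m l S c1) (Tmap m l S c2) = 0 := by
    rw [dotp_T]
    refine Finset.sum_eq_zero fun J _ => Finset.sum_eq_zero fun J' _ => ?_
    by_cases h1 : rS m l S J₀ J
    · by_cases h2 : rS m l S J₀ J'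
      · simp [hc2, hc1, h2]
      · have hne : J ≠ J' := by rintro rfl; exact h2 h1
        have hnadj : ¬ adjS m l S J J' := fun h => h2 (h1.tail h)
        have hz : dotp (wvec' m l S J) (wvec' m l S J') = 0 :=
          le_antisymm (hg J J' hne) (not_lt.mp hnadj)
        simp [hz]
    · simp [hc1, h1]
  have hT : Tmap m l S c1 + Tmap m l S c2 = 0 := by
    rw [← map_add, ← hsum, hc]
  have h2 : Tmap m l S c2 = - Tmap m l S c1 := by
    rw [← neg_eq_of_add_eq_zero_right hT]
  have h3 : dotp (Tmap m l S c1) (Tmap m l S c1) = 0 := by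
    have h4 := hcross
    rw [h2] at h4
    have hneg : dotp (Tmap m l S c1) (-Tmap m l S c1)
        = - dotp (Tmap m l S c1) (Tmap m l S c1) := by
      simp [dotp]
    rw [hneg] at h4
    linarith
  exact eq_zero_of_dotp_self h3

end Aux12

section Key

set_option maxHeartbeats 2000000 in
theorem key12 {m l n : ℕ} (hm : 0 < m) (hl : 0 < l) (hn : m < n)
    (S : Finset (Finset (Fin m))) (hcard : S.card = n)
    (hsize : ∀ J ∈ S, J.card = l)
    (hg0 : ∀ J ∈ S, ∀ J' ∈ S, J ≠ J' → ((J ∩ J').card : ℝ) ≤ (l:ℝ)^2/(m:ℝ)) :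
    ((∀ J ∈ S, ∀ J' ∈ S, J ≠ J' → ((J ∩ J').card : ℝ) < (l:ℝ)^2/(m:ℝ)) → False) ∧
    (n = 2 * (m - 1) → (m = 2 * l ∧ ∀ J ∈ S, Jᶜ ∈ S)) := by
  classical
  have hmR : (m:ℝ) ≠ 0 := Nat.cast_ne_zero.mpr hm.ne'
  have hmRpos : (0:ℝ) < m := by exact_mod_cast hm
  have hn0 : 0 < n := lt_of_le_of_lt (Nat.zero_le m) hn
  have hSne : S.Nonempty := Finset.card_pos.mp (hcard ▸ hn0)
  have hlm : l < m := by
    rcases hSne with ⟨J0, hJ0⟩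
    have h1 : l ≤ m := by
      have h2 := Finset.card_le_univ J0
      rw [hsize J0 hJ0] at h2; simpa using h2
    rcases lt_or_eq_of_le h1 with h | h
    · exact h
    · exfalso
      have huniv : ∀ J ∈ S, J = Finset.univ := by
        intro J hJ
        apply Finset.eq_univ_of_card
        rw [hsize J hJ, ← h]; simp
      have hsub : S ⊆ {Finset.univ} := fun J hJ => by simp [huniv J hJ]
      have h3 := Finset.card_le_card hsub
      simp [hcard] at h3
      omega
  have hlR : (0:ℝ) < l := by exact_mod_cast hl
  have hlmR : (l:ℝ) < m := by exact_mod_cast hlm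
  -- dot product facts
  have hww : ∀ J J' : {J // J ∈ S}, dotp (wvec' m l S J) (wvec' m l S J')
      = ((J.1 ∩ J'.1).card : ℝ) - (l:ℝ)^2/(m:ℝ) :=
    fun J J' => dotp_w hm J J' (hsize J.1 J.2) (hsize J'.1 J'.2)
  have hDpos : (0:ℝ) < (l:ℝ) - (l:ℝ)^2/(m:ℝ) := by
    rw [sub_pos, div_lt_iff₀ hmRpos]
    nlinarith
  have hdiag : ∀ J : {J // J ∈ S}, dotp (wvec' m l S J) (wvec' m l S J)
      = (l:ℝ) - (l:ℝ)^2/(m:ℝ) := by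
    intro J
    rw [hww]
    rw [Finset.inter_self, hsize J.1 J.2]
  have hoff : ∀ J J' : {J // J ∈ S}, J ≠ J' →
      dotp (wvec' m l S J) (wvec' m l S J') ≤ 0 := by
    intro J J' hne
    rw [hww]
    have h1 := hg0 J.1 J.2 J'.1 J'.2 (fun h => hne (Subtype.ext h))
    linarith
  have hwinj : ∀ J J' : {J // J ∈ S}, wvec' m l S J = wvec' m l S J' → J = J' := by
    intro J J' h
    apply Subtype.ext
    ext x
    have hx := congrFun h x
    simp only [wvec', sub_left_inj] at hx
    by_cases h1 : x ∈ J.1 <;> by_cases h2 : x ∈ J'.1 <;>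
      simp [h1, h2] at hx ⊢
  have hσw : ∀ J : {J // J ∈ S}, sigmaMap m (wvec' m l S J) = 0 := by
    intro J
    show ∑ x, ((if x ∈ J.1 then (1:ℝ) else 0) - (l:ℝ)/(m:ℝ)) = 0
    rw [Finset.sum_sub_distrib, sum_ite_card, hsize J.1 J.2,
      Finset.sum_const, Finset.card_univ, Fintype.card_fin, nsmul_eq_mul]
    field_simp
    ring
  -- setoid and quotient
  letI sd : Setoid {J // J ∈ S} := ⟨rS m l S,
    ⟨fun _ => Relation.ReflTransGen.refl, fun h => rS_symm h,
     fun h h' => Relation.ReflTransGen.trans h h'⟩⟩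
  haveI : Fintype (Quotient sd) := Fintype.ofFinite _
  set cls : Quotient sd → Finset {J // J ∈ S} :=
    fun b => univ.filter fun J => ⟦J⟧ = b with hcls
  have hmemcls : ∀ (J : {J // J ∈ S}) b, J ∈ cls b ↔ ⟦J⟧ = b := by
    intro J b; simp [hcls]
  have hout : ∀ b, Quotient.out b ∈ cls b := fun b => by
    rw [hmemcls, Quotient.out_eq]
  have hr_of_eq : ∀ J J' : {J // J ∈ S}, (⟦J⟧ : Quotient sd) = ⟦J'⟧ → rS m l S J J' :=
    fun J J' h => Quotient.exact h
  -- the kernel and the rep map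
  set K := LinearMap.ker (Tmap m l S) with hK
  have hKmem : ∀ c : K, Tmap m l S (c : ({J // J ∈ S}) → ℝ) = 0 := fun c => c.2
  set φ : K →ₗ[ℝ] ({b : Quotient sd // 2 ≤ (cls b).card} → ℝ) :=
    { toFun := fun c b => (c : ({J // J ∈ S}) → ℝ) (Quotient.out b.1),
      map_add' := fun c d => rfl,
      map_smul' := fun r c => rfl } with hφ
  have hφapp : ∀ (c : K) b, φ c b = (c : ({J // J ∈ S}) → ℝ) (Quotient.out b.1) :=
    fun c b => rfl
  have hφinj : Function.Injective φ := by
    rw [injective_iff_map_eq_zero]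
    intro c hc0
    have hcoe : (c : ({J // J ∈ S}) → ℝ) = 0 := by
      funext J
      by_cases hbig : 2 ≤ (cls (⟦J⟧ : Quotient sd)).card
      · have h1 : (c : ({J // J ∈ S}) → ℝ) (Quotient.out (⟦J⟧ : Quotient sd)) = 0 := by
          have h2 := congrFun hc0 ⟨⟦J⟧, hbig⟩
          simpa [hφapp] using h2
        have hrJ : rS m l S (Quotient.out (⟦J⟧ : Quotient sd)) J :=
          hr_of_eq _ _ (by rw [Quotient.out_eq])
        simpa using support_closed hoff (hKmem c) h1 hrJ
      · -- singleton class
        have hJmem : J ∈ cls (⟦J⟧ : Quotient sd) := (hmemcls J _).mpr rfl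
        have hsingle : cls (⟦J⟧ : Quotient sd) = {J} := by
          apply Finset.eq_singleton_iff_unique_mem.mpr
          refine ⟨hJmem, fun J' hJ' => ?_⟩
          by_contra hne
          have : 2 ≤ (cls (⟦J⟧ : Quotient sd)).card := by
            have := Finset.one_lt_card.mpr ⟨J, hJmem, J', hJ', fun h => hne h.symm⟩
            omega
          exact hbig this
        have hb := block_ker hoff (hKmem c) J
        have hexp : (fun J' => if rS m l S J J' then
            (c : ({J // J ∈ S}) → ℝ) J' else 0)
            = fun J' => if J' = J then (c : ({J // J ∈ S}) → ℝ) J else 0 := by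
          funext J'
          by_cases h : rS m l S J J'
          · have : J' ∈ cls (⟦J⟧ : Quotient sd) := (hmemcls J' _).mpr
              (Quotient.sound (rS_symm h))
            rw [hsingle, Finset.mem_singleton] at this
            subst this
            simp [h]
          · have hne : J' ≠ J := by
              rintro rfl; exact h Relation.ReflTransGen.refl
            simp [h, hne]
        rw [hexp] at hb
        rw [Tmap_apply] at hb
        have hsum : ∑ J' : {J // J ∈ S},
            (if J' = J then (c : ({J // J ∈ S}) → ℝ) J else 0) • wvec' m l S J'
            = (c : ({J // J ∈ S}) → ℝ) J • wvec' m l S J := by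
          rw [Finset.sum_eq_single J]
          · simp
          · intro J' _ hne; simp [hne]
          · intro h; exact absurd (mem_univ J) h
        rw [hsum] at hb
        have hwne : wvec' m l S J ≠ 0 := by
          intro h
          have := hdiag J
          rw [h] at this
          simp [dotp] at this
          linarith
        rcases smul_eq_zero.mp hb with h | h
        · exact h
        · exact absurd h hwne
    exact Subtype.ext hcoe
  have hKle : Module.finrank ℝ K ≤ Fintype.card {b : Quotient sd // 2 ≤ (cls b).card} := by
    have h1 := LinearMap.finrank_le_finrank_of_injective hφinj
    rwa [Module.finrank_pi] at h1
  have hKge : n ≤ Module.finrank ℝ K + (m - 1) := by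
    rw [← hcard]; exact finrank_ker_T hm hσw
  have hpart : ∑ b : Quotient sd, (cls b).card = n := by
    rw [← hcard, ← Fintype.card_coe S, ← Finset.card_univ]
    exact (Finset.card_eq_sum_card_fiberwise
      (f := fun J : {J // J ∈ S} => (⟦J⟧ : Quotient sd))
      (fun x _ => mem_univ _)).symm
  have hcls1 : ∀ b, 1 ≤ (cls b).card := fun b =>
    Finset.card_pos.mpr ⟨Quotient.out b, hout b⟩
  have hsum_ge : Fintype.card {b : Quotient sd // 2 ≤ (cls b).card}
      + Fintype.card (Quotient sd) ≤ n := by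
    rw [← hpart]
    have h1 : ∀ b ∈ (univ : Finset (Quotient sd)),
        (if 2 ≤ (cls b).card then 2 else 1) ≤ (cls b).card := by
      intro b _
      by_cases h : 2 ≤ (cls b).card <;> simp [h]
      · exact ⟨Quotient.out b, hout b⟩
    have h2 := Finset.sum_le_sum h1
    have h3 : ∑ b : Quotient sd, (if 2 ≤ (cls b).card then 2 else 1)
        = Fintype.card {b : Quotient sd // 2 ≤ (cls b).card}
          + Fintype.card (Quotient sd) := by
      have h4 : ∀ b : Quotient sd, (if 2 ≤ (cls b).card then 2 else 1)
          = (if 2 ≤ (cls b).card then 1 else 0) + 1 := by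
        intro b; by_cases h : 2 ≤ (cls b).card <;> simp [h]
      rw [Finset.sum_congr rfl fun b _ => h4 b, Finset.sum_add_distrib]
      rw [Finset.sum_boole, Fintype.card_subtype]
      simp [Finset.card_univ]
    omega
  refine ⟨?_, ?_⟩
  · -- part (A)
    intro hstrict
    have hone : ∀ b b' : Quotient sd, b = b' := by
      intro b b'
      refine Quotient.inductionOn₂ b b' fun J J' => Quotient.sound ?_
      by_cases h : J = J'
      · subst h; exact Relation.ReflTransGen.refl
      · refine Relation.ReflTransGen.single ?_
        show dotp (wvec' m l S J) (wvec' m l S J') < 0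
        rw [hww]
        have h1 := hstrict J.1 J.2 J'.1 J'.2 (fun hh => h (Subtype.ext hh))
        linarith
    have hcard1 : Fintype.card (Quotient sd) ≤ 1 :=
      Fintype.card_le_one_iff.mpr hone
    have hB1 : Fintype.card {b : Quotient sd // 2 ≤ (cls b).card} ≤ 1 :=
      le_trans (Fintype.card_subtype_le _) hcard1
    omega
  · -- part (B)
    intro hn2
    have hm3 : 3 ≤ m := by omega
    have hα : Fintype.card {b : Quotient sd // 2 ≤ (cls b).card}
        ≤ Fintype.card (Quotient sd) := Fintype.card_subtype_le _
    have hteq : Fintype.card {b : Quotient sd // 2 ≤ (cls b).card} = m - 1 := by omega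
    have hαeq : Fintype.card (Quotient sd) = m - 1 := by omega
    -- all classes are big (filter = univ)
    have hallbig : ∀ b : Quotient sd, 2 ≤ (cls b).card := by
      have h1 : (univ.filter fun b : Quotient sd => 2 ≤ (cls b).card).card
          = Fintype.card (Quotient sd) := by
        rw [← Fintype.card_subtype, hteq, hαeq]
      have h2 := Finset.eq_univ_of_card _ h1
      intro b
      have h3 := Finset.mem_univ b
      rw [← h2] at h3
      exact (Finset.mem_filter.mp h3).2
    have hall2 : ∀ b : Quotient sd, (cls b).card = 2 := by
      have h1 : ∀ b ∈ (univ : Finset (Quotient sd)), (2:ℕ) ≤ (cls b).card :=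
        fun b _ => hallbig b
      have h2 : ∑ b : Quotient sd, (cls b).card = ∑ _b : Quotient sd, 2 := by
        rw [hpart, Finset.sum_const, Finset.card_univ, hαeq, smul_eq_mul]
        omega
      have h3 := (Finset.sum_eq_sum_iff_of_le h1).mp
        (by rw [h2])
      intro b
      exact ((h3 b (mem_univ b))).symm
    have hfr : Module.finrank ℝ K = m - 1 := by omega
    have hφsurj : Function.Surjective φ := by
      refine (LinearMap.injective_iff_surjective_of_finrank_eq_finrank ?_).mp hφinj
      rw [hfr, Module.finrank_pi, hteq]
    -- the pairing
    have hpair : ∀ J₀ : {J // J ∈ S}, ∃ J₁ : {J // J ∈ S},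
        J₁ ≠ J₀ ∧ wvec' m l S J₁ = - wvec' m l S J₀ := by
      intro J₀
      have hbig0 : 2 ≤ (cls (⟦J₀⟧ : Quotient sd)).card := hallbig _
      obtain ⟨c, hc⟩ := hφsurj (Pi.single (⟨⟦J₀⟧, hbig0⟩ :
        {b : Quotient sd // 2 ≤ (cls b).card}) 1)
      have hc_out : (c : ({J // J ∈ S}) → ℝ) (Quotient.out (⟦J₀⟧ : Quotient sd)) = 1 := by
        have h1 := congrFun hc ⟨⟦J₀⟧, hbig0⟩
        rw [hφapp] at h1
        rw [h1, Pi.single_eq_same]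
      have hvan : ∀ J : {J // J ∈ S}, (⟦J⟧ : Quotient sd) ≠ ⟦J₀⟧ →
          (c : ({J // J ∈ S}) → ℝ) J = 0 := by
        intro J hne
        have hb : 2 ≤ (cls (⟦J⟧ : Quotient sd)).card := hallbig _
        have h0 : (c : ({J // J ∈ S}) → ℝ) (Quotient.out (⟦J⟧ : Quotient sd)) = 0 := by
          have h1 := congrFun hc ⟨⟦J⟧, hb⟩
          rw [hφapp] at h1
          rw [h1]
          exact Pi.single_eq_of_ne (fun hh => hne (congrArg Subtype.val hh)) 1
        exact support_closed hoff (hKmem c) h0 (hr_of_eq _ _ (Quotient.out_eq _))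
      obtain ⟨x, y, hxy, hset⟩ := Finset.card_eq_two.mp (hall2 (⟦J₀⟧ : Quotient sd))
      have hJ0mem : J₀ ∈ cls (⟦J₀⟧ : Quotient sd) := (hmemcls J₀ _).mpr rfl
      have hex : ∃ J₁, J₁ ≠ J₀ ∧ cls (⟦J₀⟧ : Quotient sd) = {J₀, J₁} := by
        rw [hset] at hJ0mem
        simp only [Finset.mem_insert, Finset.mem_singleton] at hJ0mem
        rcases hJ0mem with rfl | rfl
        · exact ⟨y, hxy.symm, hset⟩
        · exact ⟨x, hxy, by rw [hset, Finset.pair_comm]⟩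
      obtain ⟨J₁, hne10, hcls0⟩ := hex
      have hJ1mem : J₁ ∈ cls (⟦J₀⟧ : Quotient sd) := by
        rw [hcls0]; simp
      have hJ1eq : (⟦J₁⟧ : Quotient sd) = ⟦J₀⟧ := (hmemcls J₁ _).mp hJ1mem
      have hrout : rS m l S (Quotient.out (⟦J₀⟧ : Quotient sd)) J₀ :=
        hr_of_eq _ _ (Quotient.out_eq _)
      have hcJ0 : (c : ({J // J ∈ S}) → ℝ) J₀ ≠ 0 := by
        intro h
        have h1 := support_closed hoff (hKmem c) h (rS_symm hrout)
        rw [h1] at hc_out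
        exact zero_ne_one hc_out
      have hcJ1 : (c : ({J // J ∈ S}) → ℝ) J₁ ≠ 0 := by
        intro h
        have hr10 : rS m l S J₁ J₀ := hr_of_eq _ _ (by rw [hJ1eq])
        exact hcJ0 (support_closed hoff (hKmem c) h hr10)
      have hTc : (c : ({J // J ∈ S}) → ℝ) J₀ • wvec' m l S J₀
          + (c : ({J // J ∈ S}) → ℝ) J₁ • wvec' m l S J₁ = 0 := by
        have h0 := hKmem c
        rw [Tmap_apply] at h0
        have hsub : ∑ J : {J // J ∈ S}, (c : ({J // J ∈ S}) → ℝ) J • wvec' m l S J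
            = ∑ J ∈ ({J₀, J₁} : Finset {J // J ∈ S}),
                (c : ({J // J ∈ S}) → ℝ) J • wvec' m l S J := by
          refine (Finset.sum_subset (Finset.subset_univ _) ?_).symm
          intro J _ hJ
          have hz : (c : ({J // J ∈ S}) → ℝ) J = 0 := by
            apply hvan
            intro h
            apply hJ
            rw [← hcls0]
            exact (hmemcls J _).mpr h
          rw [hz, zero_smul]
        rw [hsub, Finset.sum_pair (fun h => hne10 h.symm)] at h0
        exact h0
      -- derive scalar relation
      have hμeq : wvec' m l S J₁
          = (-((c : ({J // J ∈ S}) → ℝ) J₀ / (c : ({J // J ∈ S}) → ℝ) J₁))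
            • wvec' m l S J₀ := by
        funext x
        have hx := congrFun hTc x
        simp only [Pi.add_apply, Pi.smul_apply, smul_eq_mul, Pi.zero_apply] at hx
        simp only [Pi.smul_apply, smul_eq_mul]
        field_simp
        linarith
      set μ := -((c : ({J // J ∈ S}) → ℝ) J₀ / (c : ({J // J ∈ S}) → ℝ) J₁) with hμ
      have hμ2 : μ * μ = 1 := by
        have h1 : dotp (wvec' m l S J₁) (wvec' m l S J₁)
            = μ * μ * dotp (wvec' m l S J₀) (wvec' m l S J₀) := by
          rw [hμeq]
          simp only [dotp, Pi.smul_apply, smul_eq_mul, Finset.mul_sum]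
          exact Finset.sum_congr rfl fun x _ => by ring
        rw [hdiag, hdiag] at h1
        have h2 : (l:ℝ) - (l:ℝ)^2/(m:ℝ) ≠ 0 := ne_of_gt hDpos
        have h3 : μ * μ * ((l:ℝ) - (l:ℝ)^2/(m:ℝ)) = 1 * ((l:ℝ) - (l:ℝ)^2/(m:ℝ)) := by
          rw [one_mul, ← h1]
        exact mul_right_cancel₀ h2 h3
      rcases mul_self_eq_one_iff.mp hμ2 with h | h
      · exfalso
        rw [h, one_smul] at hμeq
        exact hne10 (hwinj _ _ hμeq)
      · rw [h, neg_one_smul] at hμeq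
        exact ⟨J₁, hne10, hμeq⟩
    -- conclude a = 1/2
    have ha2 : (l:ℝ)/(m:ℝ) = 1/2 := by
      obtain ⟨J0, hJ0⟩ := hSne
      obtain ⟨J₁, hne, hw⟩ := hpair ⟨J0, hJ0⟩
      have hne0 : J0.Nonempty := Finset.card_pos.mp (by rw [hsize J0 hJ0]; exact hl)
      obtain ⟨x₀, hx₀⟩ := hne0
      have hx := congrFun hw x₀
      simp only [wvec', Pi.neg_apply] at hx
      rw [if_pos hx₀] at hx
      by_cases h1 : x₀ ∈ J₁.1
      · rw [if_pos h1] at hx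
        exfalso
        have : (l:ℝ)/(m:ℝ) = 1 := by linarith
        rw [div_eq_one_iff_eq hmR] at this
        exact (ne_of_lt hlmR) this
      · rw [if_neg h1] at hx
        linarith
    have hm2l : m = 2 * l := by
      have h1 : (m:ℝ) = 2 * l := by
        field_simp at ha2
        linarith
      exact_mod_cast h1
    refine ⟨hm2l, ?_⟩
    intro J hJ
    obtain ⟨J₁, hne, hw⟩ := hpair ⟨J, hJ⟩
    have hJ1 : J₁.1 = Jᶜ := by
      ext x
      have hx := congrFun hw x
      simp only [wvec', Pi.neg_apply, ha2] at hx
      rw [Finset.mem_compl]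
      by_cases hxJ : x ∈ J
      · rw [if_pos hxJ] at hx
        constructor
        · intro hx1
          rw [if_pos hx1] at hx
          norm_num at hx
        · intro h; exact absurd hxJ h
      · rw [if_neg hxJ] at hx
        refine ⟨fun _ => hxJ, fun _ => ?_⟩
        by_contra h1
        rw [if_neg h1] at hx
        norm_num at hx
    rw [← hJ1]
    exact J₁.2

end Key

theorem stmt12 {m l n : ℕ} (hm : 0 < m) (hl : 0 < l) (hn : m < n)
    (S : Finset (Finset (Fin m))) (hcard : S.card = n)
    (hsize : ∀ J ∈ S, J.card = l) :
    -- the maximal pairwise intersection is at least `l²/m`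
    (∃ J ∈ S, ∃ J' ∈ S, J ≠ J' ∧ (l : ℝ) ^ 2 / (m : ℝ) ≤ ((J ∩ J').card : ℝ)) ∧
    -- if `n = 2(m-1)` and the maximum equals `l²/m`, then `l = m/2` and `S`
    -- splits into `m-1` pairs of disjoint blocks of size `m/2`
    (n = 2 * (m - 1) →
      (∀ J ∈ S, ∀ J' ∈ S, J ≠ J' → ((J ∩ J').card : ℝ) ≤ (l : ℝ) ^ 2 / (m : ℝ)) →
      m = 2 * l ∧
      ∃ f : Finset (Fin m) → Finset (Fin m),
        ∀ J ∈ S, f J ∈ S ∧ f J ≠ J ∧ f (f J) = J ∧ Disjoint J (f J)) := by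
  constructor
  · by_contra hcon
    push_neg at hcon
    refine (key12 hm hl hn S hcard hsize ?_).1 ?_
    · intro J hJ J' hJ' hne
      exact le_of_lt (hcon J hJ J' hJ' hne)
    · exact hcon
  · intro hn2 hmax
    obtain ⟨hm2l, hcompl⟩ := (key12 hm hl hn S hcard hsize hmax).2 hn2
    refine ⟨hm2l, ⟨fun J => Jᶜ, fun J hJ => ⟨hcompl J hJ, ?_, ?_, ?_⟩⟩⟩
    · show Jᶜ ≠ J
      intro h
      have hne : J.Nonempty := Finset.card_pos.mp (by rw [hsize J hJ]; exact hl)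
      obtain ⟨x, hx⟩ := hne
      have hx2 : x ∈ Jᶜ := by rw [h]; exact hx
      exact (Finset.mem_compl.mp hx2) hx
    · show Jᶜᶜ = J
      exact compl_compl J
    · show Disjoint J Jᶜ
      exact disjoint_compl_right
end

section
/- Let 𝕊 be a collection of subsets of {1,…,m}, each of size l, such that |J ∩ J'| ≤ l²/m for all distinct J, J' ∈ 𝕊 (𝕊 is l²/m-cohesive). Let {B_k}_{k∈K} be a set of mutually unbiased bases of 𝔽^m with |K|·|𝕊| > d_𝔽(m) + 1, and set n = |K|·|𝕊|. If the family F = { P_J^{(k)} : k ∈ K, J ∈ 𝕊 } of coordinate projections P_J^{(k)} (the J-coordinate projection with respect to B_k) forms an (n,l,m)-fusion frame, then max over distinct pairs of projections in F of tr(P P') equals l²/m (F achieves the orthoplex bound). Moreover, if |𝕊| = 2(m−1) with the cohesiveness bound l²/m (𝕊 is maximally orthoplectic) and |K| = k_𝔽(m), then F is a tight fusion frame consisting of n = 2·d_𝔽(m) projections achieving max tr(P P') = l²/m over distinct pairs (a tight maximal orthoplectic fusion frame). -/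
open Matrix

noncomputable section

variable {𝕜 : Type*} [RCLike 𝕜]

open Module Finset
open scoped RealInnerProductSpace

open scoped RealInnerProductSpace

lemma negM (n : ℕ) : ∀ (E : Type) [NormedAddCommGroup E] [InnerProductSpace ℝ E]
    [FiniteDimensional ℝ E] (ι : Type) [Fintype ι] (v : ι → E),
    finrank ℝ E ≤ n → (∀ i, v i ≠ 0) →
    (∀ i j, i ≠ j → ⟪v i, v j⟫ ≤ 0) → Fintype.card ι ≤ 2 * n := by
  induction n with
  | zero =>
    intro E _ _ _ ι _ v hrank hv _
    have : Subsingleton E := by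
      have : finrank ℝ E = 0 := Nat.le_zero.mp hrank
      exact finrank_zero_iff.mp this
    rcases isEmpty_or_nonempty ι with h | h
    · simp [Fintype.card_eq_zero]
    · exact absurd (Subsingleton.elim (v (Classical.arbitrary ι)) 0) (hv _)
  | succ n ih =>
    intro E _ _ _ ι _ v hrank hv hneg
    rcases isEmpty_or_nonempty ι with h | h
    · simp only [Fintype.card_eq_zero]; omega
    classical
    set i0 := Classical.arbitrary ι with hi0def
    set e := v i0 with hedef
    have he : e ≠ 0 := hv i0
    set W : Submodule ℝ E := (ℝ ∙ e)ᗮ with hWdef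
    have hWrank : finrank ℝ W ≤ n := by
      have h1 : finrank ℝ (ℝ ∙ e) + finrank ℝ W = finrank ℝ E :=
        Submodule.finrank_add_finrank_orthogonal _
      rw [finrank_span_singleton he] at h1
      omega
    set c : ι → ℝ := fun i => ⟪e, v i⟫ / ‖e‖ ^ 2 with hcdef
    set w : ι → E := fun i => v i - c i • e with hwdef
    have hnorm : ⟪e, e⟫ = ‖e‖ ^ 2 := real_inner_self_eq_norm_sq e
    have hepos : (0:ℝ) < ‖e‖ ^ 2 := by
      have := norm_pos_iff.mpr he; positivity
    have hwmem : ∀ i, w i ∈ W := by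
      intro i
      rw [hWdef, Submodule.mem_orthogonal_singleton_iff_inner_right]
      simp only [hwdef, inner_sub_right, real_inner_smul_right, hnorm, hcdef]
      field_simp
      ring
    have hinner_e : ∀ i, ⟪e, v i⟫ = c i * ‖e‖ ^ 2 := by
      intro i; simp only [hcdef]; field_simp
    have hwinner : ∀ i j, ⟪w i, w j⟫ = ⟪v i, v j⟫ - c i * c j * ‖e‖ ^ 2 := by
      intro i j
      simp only [hwdef, inner_sub_left, inner_sub_right, real_inner_smul_left,
        real_inner_smul_right, hnorm]
      rw [real_inner_comm e (v i), hinner_e i, hinner_e j]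
      ring
    have hcle : ∀ i, i ≠ i0 → c i ≤ 0 := by
      intro i hi
      have := hneg i0 i (Ne.symm hi)
      rw [← hedef] at this
      have := div_nonpos_of_nonpos_of_nonneg this (le_of_lt hepos)
      simpa [hcdef] using this
    have hwzero : ∀ i, w i = 0 → v i = c i • e := by
      intro i hi
      have h2 : v i - c i • e = 0 := hi
      exact sub_eq_zero.mp h2
    have hcneg : ∀ i, i ≠ i0 → w i = 0 → c i < 0 := by
      intro i hi hwi
      rcases lt_or_eq_of_le (hcle i hi) with h' | h'
      · exact h'
      · exfalso; apply hv i; rw [hwzero i hwi, h', zero_smul]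
    have huniq : ∀ i j, i ≠ i0 → j ≠ i0 → w i = 0 → w j = 0 → i = j := by
      intro i j hi hj hwi hwj
      by_contra hij
      have h1 := hneg i j hij
      rw [hwzero i hwi, hwzero j hwj, real_inner_smul_left, real_inner_smul_right,
        hnorm] at h1
      nlinarith [mul_pos (mul_pos (neg_pos.mpr (hcneg i hi hwi)) (neg_pos.mpr (hcneg j hj hwj))) hepos]
    set i1 : ι := if h' : ∃ i, i ≠ i0 ∧ w i = 0 then h'.choose else i0 with hi1def
    set S : Finset ι := Finset.univ \ {i0, i1} with hSdef
    have hSw : ∀ i ∈ S, i ≠ i0 ∧ w i ≠ 0 := by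
      intro i hiS
      rw [hSdef, Finset.mem_sdiff, Finset.mem_insert, Finset.mem_singleton] at hiS
      push_neg at hiS
      refine ⟨hiS.2.1, fun hwi => ?_⟩
      have hex : ∃ i, i ≠ i0 ∧ w i = 0 := ⟨i, hiS.2.1, hwi⟩
      have hspec := hex.choose_spec
      have : i1 = hex.choose := by rw [hi1def, dif_pos hex]
      exact hiS.2.2 (this ▸ huniq i hex.choose hiS.2.1 hspec.1 hwi hspec.2)
    have hcard : Fintype.card {x // x ∈ S} ≤ 2 * n := by
      apply ih W {x // x ∈ S} (fun i => ⟨w i.1, hwmem i.1⟩) hWrank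
      · intro i
        simp only [ne_eq, Submodule.mk_eq_zero]
        exact (hSw i.1 i.2).2
      · intro i j hij
        have h1 : (i : ι) ≠ (j : ι) := fun h => hij (Subtype.ext h)
        have h2 : ⟪(⟨w i.1, hwmem i.1⟩ : W), ⟨w j.1, hwmem j.1⟩⟫ = ⟪w i.1, w j.1⟫ :=
          rfl
        rw [h2, hwinner]
        have hle := hneg i.1 j.1 h1
        nlinarith [mul_nonneg (neg_nonneg.mpr (hcle i.1 (hSw i.1 i.2).1))
          (neg_nonneg.mpr (hcle j.1 (hSw j.1 j.2).1)), hepos]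
    have hScard : S.card + 2 ≥ Fintype.card ι := by
      have h1 : S.card = Fintype.card ι - ({i0, i1} : Finset ι).card := by
        rw [hSdef, Finset.card_sdiff_of_subset (Finset.subset_univ _), Finset.card_univ]
      have h2 : ({i0, i1} : Finset ι).card ≤ 2 := Finset.card_insert_le _ _ |>.trans
        (by simp)
      omega
    rw [Fintype.card_coe] at hcard
    omega

lemma sumZero (n : ℕ) : ∀ (E : Type) [NormedAddCommGroup E] [InnerProductSpace ℝ E]
    [FiniteDimensional ℝ E] (ι : Type) [Fintype ι] (v : ι → E) (r : ℝ),
    finrank ℝ E ≤ n → 0 < r → (∀ i, ‖v i‖ ^ 2 = r) →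
    (∀ i j, i ≠ j → ⟪v i, v j⟫ ≤ 0) → 2 * n ≤ Fintype.card ι → ∑ i, v i = 0 := by
  induction n with
  | zero =>
    intro E _ _ _ ι _ v r hrank hr hnorm hneg _
    rcases isEmpty_or_nonempty ι with h | h
    · simp
    · exfalso
      have : Subsingleton E := finrank_zero_iff.mp (Nat.le_zero.mp hrank)
      have h0 := hnorm (Classical.arbitrary ι)
      rw [Subsingleton.elim (v (Classical.arbitrary ι)) 0, norm_zero] at h0
      nlinarith
  | succ n ih =>
    intro E _ _ _ ι _ v r hrank hr hnorm hneg hcard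
    classical
    have hv : ∀ i, v i ≠ 0 := by
      intro i hi
      have h0 := hnorm i
      rw [hi, norm_zero] at h0
      nlinarith
    have hne : Nonempty ι := by
      rw [← Fintype.card_pos_iff]; omega
    set i0 := Classical.arbitrary ι with hi0def
    set e := v i0 with hedef
    have he : e ≠ 0 := hv i0
    set W : Submodule ℝ E := (ℝ ∙ e)ᗮ with hWdef
    have hWrank : finrank ℝ W ≤ n := by
      have h1 : finrank ℝ (ℝ ∙ e) + finrank ℝ W = finrank ℝ E :=
        Submodule.finrank_add_finrank_orthogonal _
      rw [finrank_span_singleton he] at h1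
      omega
    have hnorm_e : ⟪e, e⟫ = ‖e‖ ^ 2 := real_inner_self_eq_norm_sq e
    have hepos : (0:ℝ) < ‖e‖ ^ 2 := by rw [hnorm i0]; exact hr
    -- there exists i1 with v i1 = -e
    have hex : ∃ i1, i1 ≠ i0 ∧ v i1 = -e := by
      by_contra hno
      push_neg at hno
      set c : ι → ℝ := fun i => ⟪e, v i⟫ / ‖e‖ ^ 2 with hcdef
      set w : ι → E := fun i => v i - c i • e with hwdef
      have hwmem : ∀ i, w i ∈ W := by
        intro i
        rw [hWdef, Submodule.mem_orthogonal_singleton_iff_inner_right]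
        simp only [hwdef, inner_sub_right, real_inner_smul_right, hnorm_e, hcdef]
        field_simp
        ring
      have hinner_e : ∀ i, ⟪e, v i⟫ = c i * ‖e‖ ^ 2 := by
        intro i; simp only [hcdef]; field_simp
      have hwinner : ∀ i j, ⟪w i, w j⟫ = ⟪v i, v j⟫ - c i * c j * ‖e‖ ^ 2 := by
        intro i j
        simp only [hwdef, inner_sub_left, inner_sub_right, real_inner_smul_left,
          real_inner_smul_right, hnorm_e]
        rw [real_inner_comm e (v i), hinner_e i, hinner_e j]
        ring
      have hcle : ∀ i, i ≠ i0 → c i ≤ 0 := by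
        intro i hi
        have h1 := hneg i0 i (Ne.symm hi)
        rw [← hedef] at h1
        have := div_nonpos_of_nonpos_of_nonneg h1 (le_of_lt hepos)
        simpa [hcdef] using this
      have hwne : ∀ i, i ≠ i0 → w i ≠ 0 := by
        intro i hi hwi
        have hvi : v i = c i • e := sub_eq_zero.mp hwi
        have hci : c i < 0 := by
          rcases lt_or_eq_of_le (hcle i hi) with h' | h'
          · exact h'
          · exfalso; apply hv i; rw [hvi, h', zero_smul]
        have hnormi : c i ^ 2 * ‖e‖ ^ 2 = r := by
          have := hnorm i
          rw [hvi, norm_smul] at this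
          simp only [Real.norm_eq_abs] at this
          nlinarith [sq_abs (c i)]
        have : c i = -1 := by
          have h2 : c i ^ 2 = 1 := by
            have h3 : ‖e‖ ^ 2 = r := hnorm i0
            nlinarith
          nlinarith
        exact hno i hi (by rw [hvi, this, neg_one_smul])
      -- 2n+1 nonzero vectors in W, contradiction with negM
      set S : Finset ι := Finset.univ \ {i0} with hSdef
      have hcard2 : Fintype.card {x // x ∈ S} ≤ 2 * n := by
        apply negM n W {x // x ∈ S} (fun i => ⟨w i.1, hwmem i.1⟩) hWrank
        · intro i
          simp only [ne_eq, Submodule.mk_eq_zero]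
          apply hwne i.1
          have h3 : (i : ι) ∈ Finset.univ \ ({i0} : Finset ι) := i.2
          rw [Finset.mem_sdiff, Finset.mem_singleton] at h3
          exact h3.2
        · intro i j hij
          have h1 : (i : ι) ≠ (j : ι) := fun h => hij (Subtype.ext h)
          have h2 : ⟪(⟨w i.1, hwmem i.1⟩ : W), ⟨w j.1, hwmem j.1⟩⟫ = ⟪w i.1, w j.1⟫ := rfl
          have hi' : (i : ι) ≠ i0 := by
            have h3 : (i : ι) ∈ Finset.univ \ ({i0} : Finset ι) := i.2
            rw [Finset.mem_sdiff, Finset.mem_singleton] at h3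
            exact h3.2
          have hj' : (j : ι) ≠ i0 := by
            have h3 : (j : ι) ∈ Finset.univ \ ({i0} : Finset ι) := j.2
            rw [Finset.mem_sdiff, Finset.mem_singleton] at h3
            exact h3.2
          rw [h2, hwinner]
          have hle := hneg i.1 j.1 h1
          nlinarith [mul_nonneg (neg_nonneg.mpr (hcle i.1 hi'))
            (neg_nonneg.mpr (hcle j.1 hj')), hepos]
      rw [Fintype.card_coe] at hcard2
      have : S.card = Fintype.card ι - 1 := by
        rw [hSdef, Finset.card_sdiff_of_subset (Finset.subset_univ _), Finset.card_univ,
          Finset.card_singleton]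
      omega
    obtain ⟨i1, hi1, hvi1⟩ := hex
    -- all other vectors are orthogonal to e
    have horthog : ∀ i, i ≠ i0 → i ≠ i1 → ⟪e, v i⟫ = 0 := by
      intro i hi hi1'
      have h1 := hneg i0 i (Ne.symm hi)
      rw [← hedef] at h1
      have h2 := hneg i1 i (Ne.symm hi1')
      rw [hvi1, inner_neg_left] at h2
      linarith
    set S : Finset ι := Finset.univ \ {i0, i1} with hSdef
    have hSmem : ∀ i ∈ S, i ≠ i0 ∧ i ≠ i1 := by
      intro i hiS
      rw [hSdef, Finset.mem_sdiff, Finset.mem_insert, Finset.mem_singleton] at hiS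
      push_neg at hiS
      exact hiS.2
    have hvmem : ∀ i ∈ S, v i ∈ W := by
      intro i hiS
      rw [hWdef, Submodule.mem_orthogonal_singleton_iff_inner_right]
      exact horthog i (hSmem i hiS).1 (hSmem i hiS).2
    have hSsum : ∑ i ∈ S.attach, v i.1 = 0 := by
      have hsub : ∑ i ∈ S.attach, (⟨v i.1, hvmem i.1 i.2⟩ : W) = 0 := by
        apply ih W {x // x ∈ S} (fun i => ⟨v i.1, hvmem i.1 i.2⟩) r hWrank hr
        · intro i
          show ‖v i.1‖ ^ 2 = r
          exact hnorm i.1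
        · intro i j hij
          exact hneg i.1 j.1 (fun h => hij (Subtype.ext h))
        · have h01 : i0 ≠ i1 := Ne.symm hi1
          have : S.card = Fintype.card ι - 2 := by
            rw [hSdef, Finset.card_sdiff_of_subset (Finset.subset_univ _), Finset.card_univ,
              Finset.card_insert_of_notMem (by simpa using h01), Finset.card_singleton]
          rw [Fintype.card_coe, this]
          omega
      have := congrArg (Submodule.subtype W) hsub
      simpa [map_sum] using this
    have hsplit : ∑ i, v i = ∑ i ∈ S, v i + ∑ i ∈ ({i0, i1} : Finset ι), v i := by
      rw [hSdef]
      exact (Finset.sum_sdiff (Finset.subset_univ _)).symm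
    rw [hsplit, Finset.sum_pair (Ne.symm hi1), ← Finset.sum_attach S, hSsum, hvi1]
    simp [hedef]

open scoped Classical

section setup

variable {m l : ℕ}

noncomputable def uvec (m l : ℕ) (J : Finset (Fin m)) : EuclideanSpace ℝ (Fin m) :=
  WithLp.toLp 2 (fun i => (if i ∈ J then 1 else 0) - (l : ℝ) / m)

lemma indicator_sum (J : Finset (Fin m)) :
    ∑ i : Fin m, (if i ∈ J then (1:ℝ) else 0) = J.card := by
  rw [Finset.sum_ite_mem]
  simp [Finset.univ_inter]

lemma indicator_mul (J J' : Finset (Fin m)) (i : Fin m) :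
    (if i ∈ J then (1:ℝ) else 0) * (if i ∈ J' then (1:ℝ) else 0)
      = if i ∈ J ∩ J' then (1:ℝ) else 0 := by
  by_cases h1 : i ∈ J <;> by_cases h2 : i ∈ J' <;> simp [h1, h2, Finset.mem_inter]

lemma uvec_inner (hm : 0 < m) (J J' : Finset (Fin m)) (hJ : J.card = l)
    (hJ' : J'.card = l) :
    ⟪uvec m l J, uvec m l J'⟫ = ((J ∩ J').card : ℝ) - (l:ℝ)^2 / m := by
  have hm' : (m : ℝ) ≠ 0 := Nat.cast_ne_zero.mpr hm.ne'
  rw [PiLp.inner_apply]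
  simp only [RCLike.inner_apply, conj_trivial, uvec, PiLp.toLp_apply]
  have : ∀ i : Fin m, ((if i ∈ J then (1:ℝ) else 0) - (l:ℝ)/m) *
      ((if i ∈ J' then (1:ℝ) else 0) - (l:ℝ)/m)
      = (if i ∈ J ∩ J' then (1:ℝ) else 0)
        - ((l:ℝ)/m) * (if i ∈ J then (1:ℝ) else 0)
        - ((l:ℝ)/m) * (if i ∈ J' then (1:ℝ) else 0) + ((l:ℝ)/m)^2 := by
    intro i
    rw [← indicator_mul J J' i]
    ring
  rw [Finset.sum_congr rfl (fun i _ => (mul_comm _ _).trans (this i))]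
  simp only [Finset.sum_add_distrib, Finset.sum_sub_distrib, ← Finset.mul_sum,
    indicator_sum, Finset.sum_const, Finset.card_univ, Fintype.card_fin, hJ, hJ',
    nsmul_eq_mul]
  field_simp
  ring
end setup

noncomputable def sumL (m : ℕ) : EuclideanSpace ℝ (Fin m) →ₗ[ℝ] ℝ where
  toFun x := ∑ i, x i
  map_add' x y := by simp [PiLp.add_apply, Finset.sum_add_distrib]
  map_smul' r x := by simp [PiLp.smul_apply, Finset.mul_sum]

lemma finrank_ker_sumL (m : ℕ) (hm : 0 < m) :
    Module.finrank ℝ (LinearMap.ker (sumL m)) ≤ m - 1 := by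
  have h1 : Module.finrank ℝ (LinearMap.range (sumL m))
      + Module.finrank ℝ (LinearMap.ker (sumL m))
      = Module.finrank ℝ (EuclideanSpace ℝ (Fin m)) :=
    LinearMap.finrank_range_add_finrank_ker (sumL m)
  rw [finrank_euclideanSpace_fin] at h1
  have h2 : LinearMap.range (sumL m) ≠ ⊥ := by
    rw [Submodule.ne_bot_iff]
    refine ⟨(m:ℝ), ⟨(WithLp.toLp 2 (fun _ => (1:ℝ)) : EuclideanSpace ℝ (Fin m)), ?_⟩,
      Nat.cast_ne_zero.mpr hm.ne'⟩
    show ∑ _i : Fin m, (1:ℝ) = m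
    simp
  have h3 : Module.finrank ℝ (LinearMap.range (sumL m)) ≠ 0 := by
    simp only [ne_eq, Submodule.finrank_eq_zero]
    exact h2
  omega

lemma uvec_mem_ker {m l : ℕ} (hm : 0 < m) (J : Finset (Fin m)) (hJ : J.card = l) :
    uvec m l J ∈ LinearMap.ker (sumL m) := by
  have hm' : (m : ℝ) ≠ 0 := Nat.cast_ne_zero.mpr hm.ne'
  rw [LinearMap.mem_ker]
  show ∑ i : Fin m, ((if i ∈ J then (1:ℝ) else 0) - (l:ℝ)/m) = 0
  rw [Finset.sum_sub_distrib, indicator_sum, hJ, Finset.sum_const, Finset.card_univ,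
    Fintype.card_fin, nsmul_eq_mul]
  field_simp
  ring

lemma uvec_norm {m l : ℕ} (hm : 0 < m) (hl : 0 < l) (hlm : l < m)
    (J : Finset (Fin m)) (hJ : J.card = l) :
    ⟪uvec m l J, uvec m l J⟫ = (l:ℝ) - (l:ℝ)^2 / m := by
  rw [uvec_inner hm J J hJ hJ, Finset.inter_self, hJ]

lemma uvec_pos {m l : ℕ} (hm : 0 < m) (hl : 0 < l) (hlm : l < m) :
    (0:ℝ) < (l:ℝ) - (l:ℝ)^2 / m := by
  have hm' : (0:ℝ) < m := Nat.cast_pos.mpr hm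
  have hl' : (0:ℝ) < l := Nat.cast_pos.mpr hl
  have hlm' : (l:ℝ) < m := Nat.cast_lt.mpr hlm
  rw [sub_pos, div_lt_iff₀ hm']
  nlinarith

lemma S_bound {m l : ℕ} (hm : 0 < m) (hl : 0 < l) (hlm : l < m)
    (𝕊 : Finset (Finset (Fin m)))
    (hsize : ∀ J ∈ 𝕊, J.card = l)
    (hcoh : ∀ J ∈ 𝕊, ∀ J' ∈ 𝕊, J ≠ J' → ((J ∩ J').card : ℝ) ≤ (l : ℝ)^2 / m) :
    𝕊.card ≤ 2 * (m - 1) := by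
  have key := negM (m-1) (LinearMap.ker (sumL m)) {J // J ∈ 𝕊}
    (fun J => ⟨uvec m l J.1, uvec_mem_ker hm J.1 (hsize J.1 J.2)⟩)
    (finrank_ker_sumL m hm) ?_ ?_
  · rwa [Fintype.card_coe] at key
  · intro i
    simp only [ne_eq, Submodule.mk_eq_zero]
    intro h0
    have h1 := uvec_norm hm hl hlm i.1 (hsize i.1 i.2)
    rw [h0, inner_zero_left] at h1
    have := uvec_pos (l := l) hm hl hlm
    linarith
  · intro i j hij
    have h1 : (i : Finset (Fin m)) ≠ (j : Finset (Fin m)) := fun h => hij (Subtype.ext h)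
    have h2 : ⟪(⟨uvec m l i.1, uvec_mem_ker hm i.1 (hsize i.1 i.2)⟩ :
        LinearMap.ker (sumL m)), ⟨uvec m l j.1, uvec_mem_ker hm j.1 (hsize j.1 j.2)⟩⟫
        = ⟪uvec m l i.1, uvec m l j.1⟫ := rfl
    rw [h2, uvec_inner hm i.1 j.1 (hsize i.1 i.2) (hsize j.1 j.2)]
    have := hcoh i.1 i.2 j.1 j.2 h1
    linarith

lemma S_cover {m l : ℕ} (hm : 0 < m) (hl : 0 < l) (hlm : l < m)
    (𝕊 : Finset (Finset (Fin m)))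
    (hsize : ∀ J ∈ 𝕊, J.card = l)
    (hcoh : ∀ J ∈ 𝕊, ∀ J' ∈ 𝕊, J ≠ J' → ((J ∩ J').card : ℝ) ≤ (l : ℝ)^2 / m)
    (hS2 : 𝕊.card = 2 * (m - 1)) (i : Fin m) :
    ∑ J ∈ 𝕊, (if i ∈ J then (1:ℝ) else 0) = 𝕊.card * l / m := by
  have hm' : (0:ℝ) < m := Nat.cast_pos.mpr hm
  have key := sumZero (m-1) (LinearMap.ker (sumL m)) {J // J ∈ 𝕊}
    (fun J => ⟨uvec m l J.1, uvec_mem_ker hm J.1 (hsize J.1 J.2)⟩)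
    ((l:ℝ) - (l:ℝ)^2 / m) (finrank_ker_sumL m hm) (uvec_pos hm hl hlm) ?_ ?_ ?_
  · have key2 : ∑ J : {J // J ∈ 𝕊}, uvec m l J.1 = 0 := by
      have := congrArg (Submodule.subtype (LinearMap.ker (sumL m))) key
      simpa [map_sum] using this
    have key3 : ∑ J : {J // J ∈ 𝕊}, (uvec m l J.1) i = 0 := by
      have h4 := congrArg (fun x => ⟪EuclideanSpace.single i (1:ℝ), x⟫) key2
      simp only [inner_sum, inner_zero_right] at h4
      rw [← h4]
      apply Finset.sum_congr rfl
      intro J _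
      rw [EuclideanSpace.inner_single_left]
      simp
    rw [Finset.sum_coe_sort 𝕊 (fun J => (uvec m l J) i)] at key3
    have key4 : ∑ J ∈ 𝕊, ((if i ∈ J then (1:ℝ) else 0) - (l:ℝ)/m) = 0 := key3
    rw [Finset.sum_sub_distrib, Finset.sum_const, nsmul_eq_mul, sub_eq_zero] at key4
    rw [key4]
    field_simp
  · intro J
    show ‖uvec m l J.1‖^2 = _
    rw [← real_inner_self_eq_norm_sq]
    exact uvec_norm hm hl hlm J.1 (hsize J.1 J.2)
  · intro i' j hij
    have h1 : (i' : Finset (Fin m)) ≠ (j : Finset (Fin m)) := fun h => hij (Subtype.ext h)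
    have h2 : ⟪(⟨uvec m l i'.1, uvec_mem_ker hm i'.1 (hsize i'.1 i'.2)⟩ :
        LinearMap.ker (sumL m)), ⟨uvec m l j.1, uvec_mem_ker hm j.1 (hsize j.1 j.2)⟩⟫
        = ⟪uvec m l i'.1, uvec m l j.1⟫ := rfl
    rw [h2, uvec_inner hm i'.1 j.1 (hsize i'.1 i'.2) (hsize j.1 j.2)]
    have := hcoh i'.1 i'.2 j.1 j.2 h1
    linarith
  · rw [Fintype.card_coe, hS2]

lemma dot_conj {𝕜 : Type*} [RCLike 𝕜] {m : ℕ} (a c : Fin m → 𝕜) :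
    star c ⬝ᵥ a = (starRingEnd 𝕜) (star a ⬝ᵥ c) := by
  simp only [dotProduct, map_sum, _root_.map_mul, Pi.star_apply, RCLike.star_def]
  exact Finset.sum_congr rfl fun i _ => by rw [RCLike.conj_conj]; ring

lemma trace_re' {𝕜 : Type*} [RCLike 𝕜] {m : ℕ} (a c : Fin m → 𝕜) :
    RCLike.re ((vecMulVec a (star a) * vecMulVec c (star c)).trace) =
      ‖star a ⬝ᵥ c‖ ^ 2 := by
  have h1 : (vecMulVec a (star a) * vecMulVec c (star c)).trace
      = (star a ⬝ᵥ c) * (star c ⬝ᵥ a) := by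
    simp only [Matrix.trace, Matrix.diag_apply, Matrix.mul_apply,
      Matrix.vecMulVec_apply, dotProduct]
    rw [Finset.sum_mul_sum, Finset.sum_comm]
    refine Finset.sum_congr rfl fun i _ => Finset.sum_congr rfl fun s _ => ?_
    ring
  rw [h1, dot_conj a c, RCLike.mul_conj]
  rw [← RCLike.ofReal_pow, RCLike.ofReal_re]

lemma arith_real (m : ℕ) : 2 * (m - 1) ≤ (m + 2) * (m - 1) / 2 + 1 := by
  have h : 4 * (m - 1) ≤ (m + 2) * (m - 1) + 2 := by
    rcases Nat.eq_zero_or_pos m with h0 | h0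
    · subst h0; simp
    · obtain ⟨k, rfl⟩ : ∃ k, m = k + 1 := ⟨m - 1, by omega⟩
      simp only [Nat.add_sub_cancel]
      zify
      nlinarith [sq_nonneg ((k:ℤ) - 1)]
  set t := (m + 2) * (m - 1)
  omega

lemma arith_cx (m : ℕ) : 2 * (m - 1) ≤ (m ^ 2 - 1) + 1 := by
  have h : m ^ 2 = m * m := sq m
  have h2 : 2 * m ≤ m * m + 2 := by nlinarith
  omega

open scoped Classical in
theorem stmt13 {m l : ℕ} (hm : 0 < m) (hl : 0 < l)
    -- a `l²/m`-cohesive collection `𝕊` of `l`-element subsets of `{1,…,m}`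
    (𝕊 : Finset (Finset (Fin m)))
    (hsize : ∀ J ∈ 𝕊, J.card = l)
    (hcoh : ∀ J ∈ 𝕊, ∀ J' ∈ 𝕊, J ≠ J' → ((J ∩ J').card : ℝ) ≤ (l : ℝ) ^ 2 / m)
    -- a set of mutually unbiased bases of `𝕜^m`
    {K : Type*} [Fintype K]
    (b : K → Fin m → (Fin m → 𝕜))
    (horth : ∀ k, ∀ j j' : Fin m, star (b k j) ⬝ᵥ b k j' = if j = j' then 1 else 0)
    (hmub : ∀ k k' : K, k ≠ k' → ∀ j j' : Fin m,
      ‖star (b k j) ⬝ᵥ b k' j'‖ ^ 2 = 1 / (m : ℝ))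
    -- with `n = |K|·|𝕊| > d_𝔽(m) + 1`
    (hn : dF 𝕜 m + 1 < Fintype.card K * 𝕊.card)
    -- the family of coordinate projections
    (P : K × {J // J ∈ 𝕊} → Matrix (Fin m) (Fin m) 𝕜)
    (hP : ∀ p, P p = ∑ j ∈ (p.2 : Finset (Fin m)), vecMulVec (b p.1 j) (star (b p.1 j)))
    -- forms an `(n,l,m)`-fusion frame
    (hFF : IsFusionFrame l P) :
    -- then it achieves the orthoplex bound:
    ((∀ p q, p ≠ q → RCLike.re ((P p * P q).trace) ≤ (l : ℝ) ^ 2 / m) ∧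
      (∃ p q, p ≠ q ∧ RCLike.re ((P p * P q).trace) = (l : ℝ) ^ 2 / m)) ∧
    -- and if `𝕊` is maximally orthoplectic and the set of bases is maximal, the
    -- resulting fusion frame is a tight maximal orthoplectic fusion frame
    (𝕊.card = 2 * (m - 1) →
      (Fintype.card K : ℝ) =
        (if (RCLike.I : 𝕜) = 0 then (m : ℝ) / 2 + 1 else (m : ℝ) + 1) →
      Fintype.card (K × {J // J ∈ 𝕊}) = 2 * dF 𝕜 m ∧
      ∃ A : ℝ, 0 < A ∧ ∑ p, P p = ((A : ℝ) : 𝕜) • (1 : Matrix (Fin m) (Fin m) 𝕜)) := by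
  have hm' : (0:ℝ) < m := Nat.cast_pos.mpr hm
  -- basic cardinality facts
  have hKpos : 0 < Fintype.card K := by
    rcases Nat.eq_zero_or_pos (Fintype.card K) with h | h
    · rw [h] at hn; omega
    · exact h
  have hSpos : 0 < 𝕊.card := by
    rcases Nat.eq_zero_or_pos 𝕊.card with h | h
    · rw [h] at hn; omega
    · exact h
  -- two distinct elements of 𝕊 force l < m
  have hlm : 2 ≤ 𝕊.card → l < m := by
    intro h2
    obtain ⟨J1, hJ1, J2, hJ2, hne⟩ := Finset.one_lt_card.mp h2
    have hle : l ≤ m := by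
      rw [← hsize J1 hJ1]
      simpa using Finset.card_le_univ J1
    rcases lt_or_eq_of_le hle with h | h
    · exact h
    · exfalso
      have e1 : J1 = Finset.univ := Finset.eq_univ_of_card J1 (by
        rw [hsize J1 hJ1, h]; simp)
      have e2 : J2 = Finset.univ := Finset.eq_univ_of_card J2 (by
        rw [hsize J2 hJ2, h]; simp)
      exact hne (e1.trans e2.symm)
  -- the dF arithmetic bound
  have hdF : 2 * (m - 1) ≤ dF 𝕜 m + 1 := by
    unfold dF
    split
    · exact arith_real m
    · exact arith_cx m
  -- trace formula
  have htr : ∀ p q, RCLike.re ((P p * P q).trace) =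
      ∑ j ∈ (p.2 : Finset (Fin m)), ∑ j' ∈ (q.2 : Finset (Fin m)),
        ‖star (b p.1 j) ⬝ᵥ b q.1 j'‖ ^ 2 := by
    intro p q
    rw [hP p, hP q, Finset.sum_mul_sum, Matrix.trace_sum, map_sum]
    refine Finset.sum_congr rfl fun j _ => ?_
    rw [Matrix.trace_sum, map_sum]
    exact Finset.sum_congr rfl fun j' _ => trace_re' (b p.1 j) (b q.1 j')
  -- same-basis value
  have hsame : ∀ (k : K) (J J' : Finset (Fin m)),
      (∑ j ∈ J, ∑ j' ∈ J', ‖star (b k j) ⬝ᵥ b k j'‖ ^ 2) = ((J ∩ J').card : ℝ) := by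
    intro k J J'
    have h1 : ∀ j j' : Fin m, ‖star (b k j) ⬝ᵥ b k j'‖ ^ 2
        = if j = j' then (1:ℝ) else 0 := by
      intro j j'
      rw [horth k j j']
      split <;> simp
    calc ∑ j ∈ J, ∑ j' ∈ J', ‖star (b k j) ⬝ᵥ b k j'‖ ^ 2
        = ∑ j ∈ J, ∑ j' ∈ J', if j = j' then (1:ℝ) else 0 :=
          Finset.sum_congr rfl fun j _ => Finset.sum_congr rfl fun j' _ => h1 j j'
      _ = ∑ j ∈ J, if j ∈ J' then (1:ℝ) else 0 :=
          Finset.sum_congr rfl fun j _ => Finset.sum_ite_eq J' j (fun _ => (1:ℝ))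
      _ = ((J ∩ J').card : ℝ) := by
          rw [Finset.sum_ite_mem]
          simp
  -- different-basis value
  have hdiff : ∀ (k k' : K), k ≠ k' → ∀ (J J' : Finset (Fin m)), J.card = l →
      J'.card = l →
      (∑ j ∈ J, ∑ j' ∈ J', ‖star (b k j) ⬝ᵥ b k' j'‖ ^ 2) = (l:ℝ)^2 / m := by
    intro k k' hkk' J J' hJ hJ'
    have h1 : ∀ j ∈ J, ∀ j' ∈ J', ‖star (b k j) ⬝ᵥ b k' j'‖ ^ 2 = 1 / (m:ℝ) :=
      fun j _ j' _ => hmub k k' hkk' j j'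
    calc ∑ j ∈ J, ∑ j' ∈ J', ‖star (b k j) ⬝ᵥ b k' j'‖ ^ 2
        = ∑ _j ∈ J, ∑ _j' ∈ J', 1 / (m:ℝ) :=
          Finset.sum_congr rfl fun j hj => Finset.sum_congr rfl fun j' hj' =>
            h1 j hj j' hj'
      _ = (J.card : ℝ) * J'.card * (1 / m) := by
          rw [Finset.sum_const, Finset.sum_const, nsmul_eq_mul, nsmul_eq_mul]
          ring
      _ = (l:ℝ)^2 / m := by rw [hJ, hJ']; ring
  -- the orthoplex bound
  have hbound : ∀ p q, p ≠ q → RCLike.re ((P p * P q).trace) ≤ (l : ℝ) ^ 2 / m := by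
    intro p q hpq
    rw [htr p q]
    by_cases hk : p.1 = q.1
    · have hJ : (p.2 : Finset (Fin m)) ≠ (q.2 : Finset (Fin m)) := by
        intro h
        exact hpq (Prod.ext hk (Subtype.ext h))
      rw [hk, hsame q.1 (p.2 : Finset (Fin m)) (q.2 : Finset (Fin m))]
      exact hcoh _ p.2.2 _ q.2.2 hJ
    · rw [hdiff p.1 q.1 hk _ _ (hsize _ p.2.2) (hsize _ q.2.2)]
  refine ⟨⟨hbound, ?_⟩, ?_⟩
  · -- existence of a pair achieving the bound
    by_cases hK2 : 2 ≤ Fintype.card K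
    · obtain ⟨k, k', hkk'⟩ := Fintype.exists_pair_of_one_lt_card hK2
      obtain ⟨J, hJ⟩ := Finset.card_pos.mp hSpos
      refine ⟨(k, ⟨J, hJ⟩), (k', ⟨J, hJ⟩), fun h => hkk' (congrArg Prod.fst h), ?_⟩
      rw [htr, hdiff k k' hkk' J J (hsize J hJ) (hsize J hJ)]
    · -- only one basis: 𝕊 would be too large
      exfalso
      have hK1 : Fintype.card K = 1 := by omega
      have hS2 : dF 𝕜 m + 1 < 𝕊.card := by rw [hK1, one_mul] at hn; exact hn
      have hlm' : l < m := hlm (by omega)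
      have := S_bound hm hl hlm' 𝕊 hsize hcoh
      omega
  · -- tight maximal orthoplectic case
    intro hS2 hK
    have hm2 : 2 ≤ m := by
      rcases Nat.lt_or_ge m 2 with h | h
      · interval_cases m <;> omega
      · exact h
    have hlm' : l < m := hlm (by omega)
    constructor
    · -- cardinality
      rw [Fintype.card_prod, Fintype.card_coe, hS2]
      by_cases hI : (RCLike.I : 𝕜) = 0
      · rw [if_pos hI] at hK
        unfold dF
        rw [if_pos hI]
        have hcast : ((2 * Fintype.card K : ℕ) : ℝ) = ((m + 2 : ℕ) : ℝ) := by
          push_cast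
          rw [hK]
          ring
        have h2K : 2 * Fintype.card K = m + 2 := Nat.cast_injective hcast
        have hrw : (m + 2) * (m - 1) = 2 * (Fintype.card K * (m - 1)) := by
          rw [← h2K]; ring
        rw [hrw, Nat.mul_div_cancel_left _ (by norm_num : 0 < 2)]
        ring
      · rw [if_neg hI] at hK
        unfold dF
        rw [if_neg hI]
        have hcast : ((Fintype.card K : ℕ) : ℝ) = ((m + 1 : ℕ) : ℝ) := by
          push_cast; rw [hK]
        have hKm : Fintype.card K = m + 1 := Nat.cast_injective hcast
        obtain ⟨n, rfl⟩ : ∃ n, m = n + 1 := ⟨m - 1, by omega⟩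
        simp only [Nat.add_sub_cancel]
        rw [hKm]
        have e1 : (n + 1) ^ 2 = n * n + 2 * n + 1 := by ring
        have e2 : (n + 1 + 1) * (2 * n) = 2 * (n * n) + 4 * n := by ring
        omega
    · -- tightness
      refine ⟨(Fintype.card K : ℝ) * (𝕊.card * l / m), ?_, ?_⟩
      · have : (0:ℝ) < Fintype.card K := Nat.cast_pos.mpr hKpos
        have h2 : (0:ℝ) < 𝕊.card := Nat.cast_pos.mpr hSpos
        have h3 : (0:ℝ) < l := Nat.cast_pos.mpr hl
        positivity
      · -- resolution of the identity for each basis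
        have hid : ∀ k : K, ∑ j : Fin m, vecMulVec (b k j) (star (b k j))
            = (1 : Matrix (Fin m) (Fin m) 𝕜) := by
          intro k
          set U : Matrix (Fin m) (Fin m) 𝕜 := Matrix.of fun i j => b k j i with hU
          have h1 : Uᴴ * U = 1 := by
            ext j j'
            have := horth k j j'
            simpa [Matrix.mul_apply, Matrix.conjTranspose_apply, hU, dotProduct,
              Matrix.one_apply] using this
          have h2 : U * Uᴴ = 1 := mul_eq_one_comm.mp h1
          ext i i'
          rw [← h2]
          simp [Matrix.sum_apply, Matrix.mul_apply, Matrix.vecMulVec_apply, hU,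
            Matrix.conjTranspose_apply]
        have hcov := S_cover hm hl hlm' 𝕊 hsize hcoh hS2
        -- now compute the sum
        rw [Fintype.sum_prod_type]
        have hone : ∀ k : K, (∑ J : {J // J ∈ 𝕊}, P (k, J))
            = (((𝕊.card * l / m : ℝ)) : 𝕜) • (1 : Matrix (Fin m) (Fin m) 𝕜) := by
          intro k
          have e0 : (∑ J : {J // J ∈ 𝕊}, P (k, J))
              = ∑ J ∈ 𝕊, ∑ j ∈ J, vecMulVec (b k j) (star (b k j)) := by
            rw [← Finset.sum_coe_sort 𝕊
              (fun J => ∑ j ∈ J, vecMulVec (b k j) (star (b k j)))]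
            exact Finset.sum_congr rfl fun J _ => hP (k, J)
          rw [e0]
          have e1 : ∀ J ∈ 𝕊, ∑ j ∈ J, vecMulVec (b k j) (star (b k j))
              = ∑ j : Fin m, if j ∈ J then vecMulVec (b k j) (star (b k j)) else 0 := by
            intro J _
            rw [Finset.sum_ite_mem, Finset.univ_inter]
          rw [Finset.sum_congr rfl e1, Finset.sum_comm]
          have e2 : ∀ j : Fin m, (∑ J ∈ 𝕊,
              if j ∈ J then vecMulVec (b k j) (star (b k j)) else 0)
              = (((𝕊.card * l / m : ℝ)) : 𝕜) • vecMulVec (b k j) (star (b k j)) := by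
            intro j
            have e3 : ∀ J ∈ 𝕊, (if j ∈ J then vecMulVec (b k j) (star (b k j)) else 0)
                = (((if j ∈ J then (1:ℝ) else 0) : ℝ) : 𝕜) •
                    vecMulVec (b k j) (star (b k j)) := by
              intro J _
              split <;> simp
            rw [Finset.sum_congr rfl e3, ← Finset.sum_smul]
            congr 1
            rw [← RCLike.ofReal_sum, hcov j]
          rw [Finset.sum_congr rfl (fun j _ => e2 j), ← Finset.smul_sum, hid k]
        rw [Finset.sum_congr rfl (fun k _ => hone k), Finset.sum_const,
          Finset.card_univ, ← Nat.cast_smul_eq_nsmul 𝕜, smul_smul]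
        congr 1
        rw [← RCLike.ofReal_natCast, ← RCLike.ofReal_mul]


end
end

section
/- For every r ≥ 1, S_r S_r^T = 2^{r−1}·I_{2^r} + (2^{r−1} − 1)·J_{2^r,2^r} and S_r F_r S_r^T = 2^{r−1}·(J_{2^r,2^r} − I_{2^r}), where J_{2^r,2^r} is the all-ones 2^r × 2^r matrix. Consequently, for m = 2^r, the columns of S_r are the incidence vectors of a collection 𝕊_r of 2(m−1) subsets of {1,…,m}, each of size m/2, that forms a 2-(m, m/2, m/2 − 1) block design. -/
open Matrix

noncomputable section

/-- swap `2i ↔ 2i+1` -/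
def pairFlip (j : ℕ) : ℕ := if j % 2 = 0 then j + 1 else j - 1

/-- the entries of the recursively defined incidence matrices `S_r`
(`Sfun r a b` is the `(a,b)` entry of `S_r`, for `a < 2^r`, `b < 2^(r+1) - 2`) -/
def Sfun : ℕ → ℕ → ℕ → ℚ
  | 0, _, _ => 0
  | 1, a, b => if a = b then 1 else 0
  | r + 2, a, b =>
    if b = 0 then (if a < 2 ^ (r + 1) then 1 else 0)
    else if b = 1 then (if a < 2 ^ (r + 1) then 0 else 1)
    else if b < 2 ^ (r + 2) then Sfun (r + 1) (a % 2 ^ (r + 1)) (b - 2)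
    else if a < 2 ^ (r + 1) then Sfun (r + 1) a (b - 2 ^ (r + 2))
    else Sfun (r + 1) (a - 2 ^ (r + 1)) (pairFlip (b - 2 ^ (r + 2)))

/-- the matrix `S_r`, a `2^r × (2^(r+1) - 2)` matrix with rational (0-1) entries -/
def S (r : ℕ) : Matrix (Fin (2 ^ r)) (Fin (2 ^ (r + 1) - 2)) ℚ :=
  Matrix.of fun a b => Sfun r a b

/-- the permutation matrix `F_r = I_{2^r - 1} ⊗ [[0,1],[1,0]]` -/
def F (r : ℕ) : Matrix (Fin (2 ^ (r + 1) - 2)) (Fin (2 ^ (r + 1) - 2)) ℚ :=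
  Matrix.of fun a b => if (a : ℕ) = pairFlip (b : ℕ) then 1 else 0

/-- the block determined by the `b`-th column of `S_r` -/
def blockOf (r : ℕ) (b : Fin (2 ^ (r + 1) - 2)) : Finset (Fin (2 ^ r)) :=
  {a : Fin (2 ^ r) | S r a b = 1}

/-- the collection `𝕊_r` of blocks determined by the columns of `S_r` -/
def blocks (r : ℕ) : Finset (Finset (Fin (2 ^ r))) :=
  Finset.image (blockOf r) Finset.univ

/-- a `t`-`(m,l,λ)` block design (on the vertex set `Fin m`) -/
def IsBlockDesign {m : ℕ} (t l lam : ℕ) (𝕊 : Finset (Finset (Fin m))) : Prop :=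
  (∀ J ∈ 𝕊, J.card = l) ∧
  ∀ T : Finset (Fin m), T.card = t → ({J ∈ 𝕊 | T ⊆ J} : Finset _).card = lam

open Finset

lemma Sfun_b0 (r a : ℕ) : Sfun (r+2) a 0 = if a < 2^(r+1) then 1 else 0 := by
  unfold Sfun; norm_num

lemma Sfun_b1 (r a : ℕ) : Sfun (r+2) a 1 = if a < 2^(r+1) then 0 else 1 := by
  unfold Sfun; norm_num

lemma Sfun_mid (r a c : ℕ) (hc : c < 2^(r+2)-2) :
    Sfun (r+2) a (2+c) = Sfun (r+1) (a % 2^(r+1)) c := by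
  have h4 : 4 ≤ 2^(r+2) := by
    calc 4 = 2^2 := by norm_num
    _ ≤ 2^(r+2) := Nat.pow_le_pow_right (by norm_num) (by omega)
  simp only [Sfun]
  rw [if_neg (by omega), if_neg (by omega), if_pos (by omega)]
  congr 1; omega

lemma Sfun_third (r a c : ℕ) :
    Sfun (r+2) a (2^(r+2)+c)
      = if a < 2^(r+1) then Sfun (r+1) a c
        else Sfun (r+1) (a - 2^(r+1)) (pairFlip c) := by
  have h4 : 4 ≤ 2^(r+2) := by
    calc 4 = 2^2 := by norm_num
    _ ≤ 2^(r+2) := Nat.pow_le_pow_right (by norm_num) (by omega)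
  simp only [Sfun]
  rw [if_neg (by omega), if_neg (by omega), if_neg (by omega)]
  have hcc : 2^(r+2)+c-2^(r+2) = c := by omega
  rw [hcc]

lemma sum_range_add' (m n : ℕ) (f : ℕ → ℚ) :
    ∑ i ∈ range (m+n), f i = ∑ i ∈ range m, f i + ∑ i ∈ range n, f (m+i) := by
  rw [range_eq_Ico, ← Finset.sum_Ico_consecutive f (Nat.zero_le m) (Nat.le_add_right m n),
    Finset.sum_Ico_eq_sum_range, Finset.sum_Ico_eq_sum_range]
  simp

lemma pairFlip_pairFlip (j : ℕ) : pairFlip (pairFlip j) = j := by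
  unfold pairFlip; split <;> split <;> omega

lemma pairFlip_ne (j : ℕ) : pairFlip j ≠ j := by unfold pairFlip; split <;> omega

lemma pairFlip_lt {n j : ℕ} (hn : n % 2 = 0) (hj : j < n) : pairFlip j < n := by
  unfold pairFlip; split <;> omega

lemma pairFlip_add {k j : ℕ} (hk : k % 2 = 0) : pairFlip (k + j) = k + pairFlip j := by
  unfold pairFlip; split <;> split <;> omega

lemma sum_pairFlip {n : ℕ} (hn : n % 2 = 0) (f : ℕ → ℚ) :
    ∑ c ∈ range n, f (pairFlip c) = ∑ c ∈ range n, f c := by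
  apply Finset.sum_nbij' (i := fun c => pairFlip c) (j := fun c => pairFlip c) <;>
    simp +contextual [pairFlip_pairFlip, pairFlip_lt hn]

lemma Sfun_zero_one : ∀ r a b, Sfun r a b = 0 ∨ Sfun r a b = 1
  | 0, _, _ => Or.inl rfl
  | 1, a, b => by unfold Sfun; split <;> simp
  | r+2, a, b => by
    unfold Sfun
    split_ifs <;> first | simp | exact Sfun_zero_one (r+1) _ _

def PC (r : ℕ) : Prop := ∀ b < 2^(r+2)-2, ∑ a ∈ range (2^(r+1)), Sfun (r+1) a b = (2:ℚ)^r
def PA (r : ℕ) : Prop := ∀ a < 2^(r+1), ∀ a' < 2^(r+1),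
  ∑ b ∈ range (2^(r+2)-2), Sfun (r+1) a b * Sfun (r+1) a' b
    = if a = a' then (2:ℚ)^(r+1) - 1 else (2:ℚ)^r - 1
def PB (r : ℕ) : Prop := ∀ a < 2^(r+1), ∀ a' < 2^(r+1),
  ∑ b ∈ range (2^(r+2)-2), Sfun (r+1) a b * Sfun (r+1) a' (pairFlip b)
    = if a = a' then 0 else (2:ℚ)^r
def PD (r : ℕ) : Prop := ∀ b < 2^(r+2)-2, ∀ b' < 2^(r+2)-2,
  (∀ a < 2^(r+1), Sfun (r+1) a b = Sfun (r+1) a b') → b = b'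

lemma pf0 : pairFlip 0 = 1 := rfl
lemma pf1 : pairFlip 1 = 0 := rfl

lemma baseC : PC 0 := by
  intro b hb
  norm_num at hb
  interval_cases b <;> simp [Sfun, Finset.sum_range_succ]

lemma baseA : PA 0 := by
  intro a ha a' ha'
  norm_num at ha ha' ⊢
  interval_cases a <;> interval_cases a' <;>
    norm_num [Sfun, Finset.sum_range_succ]

lemma baseB : PB 0 := by
  intro a ha a' ha'
  norm_num at ha ha' ⊢
  interval_cases a <;> interval_cases a' <;>
    norm_num [Sfun, Finset.sum_range_succ, pf0, pf1]

lemma baseD : PD 0 := by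
  intro b hb b' hb' h
  norm_num at hb hb'
  have h0 := h 0 (by norm_num)
  have h1 := h 1 (by norm_num)
  interval_cases b <;> interval_cases b' <;> simp_all [Sfun]

lemma row_split (r : ℕ) (f : ℕ → ℚ) :
    ∑ a ∈ range (2^(r+2)), f a
      = ∑ a ∈ range (2^(r+1)), f a + ∑ a ∈ range (2^(r+1)), f (2^(r+1)+a) := by
  rw [show (2:ℕ)^(r+2) = 2^(r+1)+2^(r+1) from by ring, sum_range_add']

lemma sum_split3 (r : ℕ) (g : ℕ → ℚ) :
    ∑ b ∈ range (2^(r+3)-2), g b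
      = g 0 + g 1 + ∑ c ∈ range (2^(r+2)-2), g (2+c)
          + ∑ c ∈ range (2^(r+2)-2), g (2^(r+2)+c) := by
  have e1 : (2:ℕ)^(r+3) = 2^(r+2)+2^(r+2) := by ring
  have e2 : (2:ℕ)^(r+2) = 2^(r+1)+2^(r+1) := by ring
  have hp : 1 ≤ (2:ℕ)^(r+1) := Nat.one_le_two_pow
  rw [show (2:ℕ)^(r+3)-2 = 2 + ((2^(r+2)-2) + (2^(r+2)-2)) from by omega,
    sum_range_add', sum_range_add']
  rw [Finset.sum_range_succ, Finset.sum_range_one]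
  have : ∑ i ∈ range (2^(r+2)-2), g (2+((2^(r+2)-2)+i))
      = ∑ i ∈ range (2^(r+2)-2), g (2^(r+2)+i) := by
    refine Finset.sum_congr rfl fun i _ => ?_
    congr 1; omega
  rw [this]; ring

lemma mod_lemma {M a : ℕ} (h1 : M ≤ a) (h2 : a < M+M) : a % M = a - M := by
  rw [show a = M + (a - M) from by omega, Nat.add_mod_left, Nat.mod_eq_of_lt (by omega)]
  omega

lemma stepC (r : ℕ) (hC : PC r) : PC (r+1) := by
  intro b hb'
  have e1 : (2:ℕ)^(r+3) = 2^(r+2)+2^(r+2) := by ring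
  have e2 : (2:ℕ)^(r+2) = 2^(r+1)+2^(r+1) := by ring
  have e3 : (2:ℕ)^(r+1) = 2^r+2^r := by ring
  have hp : 1 ≤ (2:ℕ)^r := Nat.one_le_two_pow
  have hm2 : (2^(r+2)-2) % 2 = 0 := by omega
  have hb : b < 2^(r+3)-2 := hb'
  show ∑ a ∈ range (2^(r+2)), Sfun (r+2) a b = (2:ℚ)^(r+1)
  rw [row_split]
  rcases Nat.lt_or_ge b 2 with hb2 | hb2
  · have t1 : ∀ v : ℕ, v < 2 → (∑ a ∈ range (2^(r+1)), Sfun (r+2) a v)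
        + ∑ a ∈ range (2^(r+1)), Sfun (r+2) (2^(r+1)+a) v = 2^(r+1) := by
      intro v hv
      interval_cases v
      · have u1 : ∑ a ∈ range (2^(r+1)), Sfun (r+2) a 0 = ∑ _a ∈ range (2^(r+1)), (1:ℚ) :=
          Finset.sum_congr rfl fun a ha => by
            rw [Sfun_b0, if_pos (mem_range.mp ha)]
        have u2 : ∑ a ∈ range (2^(r+1)), Sfun (r+2) (2^(r+1)+a) 0
            = ∑ _a ∈ range (2^(r+1)), (0:ℚ) :=
          Finset.sum_congr rfl fun a ha => by rw [Sfun_b0, if_neg (by omega)]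
        rw [u1, u2]; simp [pow_succ]
      · have u1 : ∑ a ∈ range (2^(r+1)), Sfun (r+2) a 1 = ∑ _a ∈ range (2^(r+1)), (0:ℚ) :=
          Finset.sum_congr rfl fun a ha => by
            rw [Sfun_b1, if_pos (mem_range.mp ha)]
        have u2 : ∑ a ∈ range (2^(r+1)), Sfun (r+2) (2^(r+1)+a) 1
            = ∑ _a ∈ range (2^(r+1)), (1:ℚ) :=
          Finset.sum_congr rfl fun a ha => by rw [Sfun_b1, if_neg (by omega)]
        rw [u1, u2]; simp [pow_succ]
    exact t1 b hb2
  · rcases Nat.lt_or_ge b (2^(r+2)) with hbK | hbK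
    · obtain ⟨c, hc, rfl⟩ : ∃ c, c < 2^(r+2)-2 ∧ b = 2+c := ⟨b-2, by omega, by omega⟩
      have u1 : ∑ a ∈ range (2^(r+1)), Sfun (r+2) a (2+c)
          = ∑ a ∈ range (2^(r+1)), Sfun (r+1) a c :=
        Finset.sum_congr rfl fun a ha => by
          rw [Sfun_mid _ _ _ hc, Nat.mod_eq_of_lt (mem_range.mp ha)]
      have u2 : ∑ a ∈ range (2^(r+1)), Sfun (r+2) (2^(r+1)+a) (2+c)
          = ∑ a ∈ range (2^(r+1)), Sfun (r+1) a c :=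
        Finset.sum_congr rfl fun a ha => by
          rw [Sfun_mid _ _ _ hc, Nat.add_mod_left, Nat.mod_eq_of_lt (mem_range.mp ha)]
      rw [u1, u2, hC c hc]; ring
    · obtain ⟨c, hc, rfl⟩ : ∃ c, c < 2^(r+2)-2 ∧ b = 2^(r+2)+c := ⟨b-2^(r+2), by omega, by omega⟩
      have u1 : ∑ a ∈ range (2^(r+1)), Sfun (r+2) a (2^(r+2)+c)
          = ∑ a ∈ range (2^(r+1)), Sfun (r+1) a c :=
        Finset.sum_congr rfl fun a ha => by
          rw [Sfun_third, if_pos (mem_range.mp ha)]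
      have u2 : ∑ a ∈ range (2^(r+1)), Sfun (r+2) (2^(r+1)+a) (2^(r+2)+c)
          = ∑ a ∈ range (2^(r+1)), Sfun (r+1) a (pairFlip c) :=
        Finset.sum_congr rfl fun a ha => by
          rw [Sfun_third, if_neg (by omega), Nat.add_sub_cancel_left]
      rw [u1, u2, hC c hc, hC _ (pairFlip_lt hm2 hc)]; ring

lemma stepA (r : ℕ) (hA : PA r) (hB : PB r) : PA (r+1) := by
  intro a ha0 a' ha0'
  have e2 : (2:ℕ)^(r+2) = 2^(r+1)+2^(r+1) := by ring
  have e3 : (2:ℕ)^(r+1) = 2^r+2^r := by ring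
  have hp : 1 ≤ (2:ℕ)^r := Nat.one_le_two_pow
  have hm2 : (2^(r+2)-2) % 2 = 0 := by omega
  have hMpos : 0 < (2:ℕ)^(r+1) := by omega
  have ha : a < 2^(r+2) := ha0
  have ha' : a' < 2^(r+2) := ha0'
  have q2 : (2:ℚ)^(r+2) = 2^(r+1)+2^(r+1) := by ring
  have q3 : (2:ℚ)^(r+1) = 2^r+2^r := by ring
  have hmid : ∑ c ∈ range (2^(r+2)-2), Sfun (r+2) a (2+c) * Sfun (r+2) a' (2+c)
      = if a % 2^(r+1) = a' % 2^(r+1) then (2:ℚ)^(r+1)-1 else (2:ℚ)^r-1 := by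
    rw [← hA (a % 2^(r+1)) (Nat.mod_lt _ hMpos) (a' % 2^(r+1)) (Nat.mod_lt _ hMpos)]
    exact Finset.sum_congr rfl fun c hc => by
      rw [Sfun_mid _ _ _ (mem_range.mp hc), Sfun_mid _ _ _ (mem_range.mp hc)]
  show ∑ b ∈ range (2^(r+3)-2), Sfun (r+2) a b * Sfun (r+2) a' b
      = if a = a' then (2:ℚ)^(r+2) - 1 else (2:ℚ)^(r+1) - 1
  calc ∑ b ∈ range (2^(r+3)-2), Sfun (r+2) a b * Sfun (r+2) a' b
      = Sfun (r+2) a 0 * Sfun (r+2) a' 0 + Sfun (r+2) a 1 * Sfun (r+2) a' 1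
        + ∑ c ∈ range (2^(r+2)-2), Sfun (r+2) a (2+c) * Sfun (r+2) a' (2+c)
        + ∑ c ∈ range (2^(r+2)-2),
            Sfun (r+2) a (2^(r+2)+c) * Sfun (r+2) a' (2^(r+2)+c) := sum_split3 r _
    _ = if a = a' then (2:ℚ)^(r+2) - 1 else (2:ℚ)^(r+1) - 1 := by
      rcases Nat.lt_or_ge a (2^(r+1)) with haM | haM <;>
        rcases Nat.lt_or_ge a' (2^(r+1)) with ha'M | ha'M
      · -- both top
        rw [Nat.mod_eq_of_lt haM, Nat.mod_eq_of_lt ha'M] at hmid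
        have hthird : ∑ c ∈ range (2^(r+2)-2),
            Sfun (r+2) a (2^(r+2)+c) * Sfun (r+2) a' (2^(r+2)+c)
            = if a = a' then (2:ℚ)^(r+1)-1 else (2:ℚ)^r-1 := by
          rw [← hA a haM a' ha'M]
          exact Finset.sum_congr rfl fun c hc => by
            rw [Sfun_third, Sfun_third, if_pos haM, if_pos ha'M]
        rw [hmid, hthird, Sfun_b0 r a, Sfun_b0 r a', Sfun_b1 r a, Sfun_b1 r a',
          if_pos haM, if_pos ha'M, if_pos haM, if_pos ha'M]
        split_ifs <;> linarith
      · -- a top, a' bottom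
        rw [Nat.mod_eq_of_lt haM, mod_lemma ha'M (by omega)] at hmid
        have hthird : ∑ c ∈ range (2^(r+2)-2),
            Sfun (r+2) a (2^(r+2)+c) * Sfun (r+2) a' (2^(r+2)+c)
            = if a = a'-2^(r+1) then (0:ℚ) else (2:ℚ)^r := by
          rw [← hB a haM (a'-2^(r+1)) (by omega)]
          exact Finset.sum_congr rfl fun c hc => by
            rw [Sfun_third, Sfun_third, if_pos haM, if_neg (by omega)]
        rw [hmid, hthird, Sfun_b0 r a, Sfun_b0 r a', Sfun_b1 r a, Sfun_b1 r a',
          if_pos haM, if_neg (by omega), if_pos haM, if_neg (by omega),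
          if_neg (show ¬ a = a' by omega)]
        split_ifs <;> linarith
      · -- a bottom, a' top
        rw [mod_lemma haM (by omega), Nat.mod_eq_of_lt ha'M] at hmid
        have hthird : ∑ c ∈ range (2^(r+2)-2),
            Sfun (r+2) a (2^(r+2)+c) * Sfun (r+2) a' (2^(r+2)+c)
            = if a' = a-2^(r+1) then (0:ℚ) else (2:ℚ)^r := by
          rw [← hB a' ha'M (a-2^(r+1)) (by omega)]
          exact Finset.sum_congr rfl fun c hc => by
            rw [Sfun_third, Sfun_third, if_neg (by omega), if_pos ha'M]; ring
        rw [hmid, hthird, Sfun_b0 r a, Sfun_b0 r a', Sfun_b1 r a, Sfun_b1 r a',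
          if_neg (by omega), if_pos ha'M, if_neg (by omega), if_pos ha'M,
          if_neg (show ¬ a = a' by omega)]
        rcases eq_or_ne (a - 2^(r+1)) a' with hq | hq
        · rw [if_pos hq, if_pos hq.symm]; linarith
        · rw [if_neg hq, if_neg (Ne.symm hq)]; linarith
      · -- both bottom
        rw [mod_lemma haM (by omega), mod_lemma ha'M (by omega)] at hmid
        have hthird : ∑ c ∈ range (2^(r+2)-2),
            Sfun (r+2) a (2^(r+2)+c) * Sfun (r+2) a' (2^(r+2)+c)
            = if a-2^(r+1) = a'-2^(r+1) then (2:ℚ)^(r+1)-1 else (2:ℚ)^r-1 := by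
          calc ∑ c ∈ range (2^(r+2)-2),
              Sfun (r+2) a (2^(r+2)+c) * Sfun (r+2) a' (2^(r+2)+c)
              = ∑ c ∈ range (2^(r+2)-2),
                  Sfun (r+1) (a-2^(r+1)) (pairFlip c) * Sfun (r+1) (a'-2^(r+1)) (pairFlip c) :=
                Finset.sum_congr rfl fun c hc => by
                  rw [Sfun_third, Sfun_third, if_neg (by omega), if_neg (by omega)]
            _ = ∑ c ∈ range (2^(r+2)-2),
                  Sfun (r+1) (a-2^(r+1)) c * Sfun (r+1) (a'-2^(r+1)) c :=
                sum_pairFlip hm2 (fun c => Sfun (r+1) (a-2^(r+1)) c * Sfun (r+1) (a'-2^(r+1)) c)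
            _ = _ := hA (a-2^(r+1)) (by omega) (a'-2^(r+1)) (by omega)
        rw [hmid, hthird, Sfun_b0 r a, Sfun_b0 r a', Sfun_b1 r a, Sfun_b1 r a',
          if_neg (by omega), if_neg (by omega), if_neg (by omega), if_neg (by omega)]
        rcases eq_or_ne a a' with hq | hq
        · rw [if_pos hq, if_pos (show a - 2^(r+1) = a' - 2^(r+1) by omega)]; linarith
        · rw [if_neg hq, if_neg (show ¬(a - 2^(r+1) = a' - 2^(r+1)) by omega)]; linarith

lemma stepB (r : ℕ) (hA : PA r) (hB : PB r) : PB (r+1) := by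
  intro a ha0 a' ha0'
  have e2 : (2:ℕ)^(r+2) = 2^(r+1)+2^(r+1) := by ring
  have e3 : (2:ℕ)^(r+1) = 2^r+2^r := by ring
  have hp : 1 ≤ (2:ℕ)^r := Nat.one_le_two_pow
  have hm2 : (2^(r+2)-2) % 2 = 0 := by omega
  have hK2 : (2:ℕ)^(r+2) % 2 = 0 := by omega
  have h22 : (2:ℕ) % 2 = 0 := by norm_num
  have hMpos : 0 < (2:ℕ)^(r+1) := by omega
  have ha : a < 2^(r+2) := ha0
  have ha' : a' < 2^(r+2) := ha0'
  have q2 : (2:ℚ)^(r+2) = 2^(r+1)+2^(r+1) := by ring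
  have q3 : (2:ℚ)^(r+1) = 2^r+2^r := by ring
  have hmid : ∑ c ∈ range (2^(r+2)-2), Sfun (r+2) a (2+c) * Sfun (r+2) a' (pairFlip (2+c))
      = if a % 2^(r+1) = a' % 2^(r+1) then (0:ℚ) else (2:ℚ)^r := by
    rw [← hB (a % 2^(r+1)) (Nat.mod_lt _ hMpos) (a' % 2^(r+1)) (Nat.mod_lt _ hMpos)]
    refine Finset.sum_congr rfl fun c hc => ?_
    have hc' := mem_range.mp hc
    rw [pairFlip_add h22, Sfun_mid _ _ _ hc', Sfun_mid _ _ _ (pairFlip_lt hm2 hc')]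
  show ∑ b ∈ range (2^(r+3)-2), Sfun (r+2) a b * Sfun (r+2) a' (pairFlip b)
      = if a = a' then (0:ℚ) else (2:ℚ)^(r+1)
  calc ∑ b ∈ range (2^(r+3)-2), Sfun (r+2) a b * Sfun (r+2) a' (pairFlip b)
      = Sfun (r+2) a 0 * Sfun (r+2) a' (pairFlip 0)
        + Sfun (r+2) a 1 * Sfun (r+2) a' (pairFlip 1)
        + ∑ c ∈ range (2^(r+2)-2), Sfun (r+2) a (2+c) * Sfun (r+2) a' (pairFlip (2+c))
        + ∑ c ∈ range (2^(r+2)-2),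
            Sfun (r+2) a (2^(r+2)+c) * Sfun (r+2) a' (pairFlip (2^(r+2)+c)) := sum_split3 r _
    _ = if a = a' then (0:ℚ) else (2:ℚ)^(r+1) := by
      rw [pf0, pf1]
      rcases Nat.lt_or_ge a (2^(r+1)) with haM | haM <;>
        rcases Nat.lt_or_ge a' (2^(r+1)) with ha'M | ha'M
      · -- both top
        rw [Nat.mod_eq_of_lt haM, Nat.mod_eq_of_lt ha'M] at hmid
        have hthird : ∑ c ∈ range (2^(r+2)-2),
            Sfun (r+2) a (2^(r+2)+c) * Sfun (r+2) a' (pairFlip (2^(r+2)+c))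
            = if a = a' then (0:ℚ) else (2:ℚ)^r := by
          rw [← hB a haM a' ha'M]
          exact Finset.sum_congr rfl fun c hc => by
            rw [pairFlip_add hK2, Sfun_third, Sfun_third, if_pos haM, if_pos ha'M]
        rw [hmid, hthird, Sfun_b0 r a, Sfun_b1 r a', Sfun_b1 r a, Sfun_b0 r a',
          if_pos haM, if_pos ha'M, if_pos haM, if_pos ha'M]
        split_ifs <;> linarith
      · -- a top, a' bottom
        rw [Nat.mod_eq_of_lt haM, mod_lemma ha'M (by omega)] at hmid
        have hthird : ∑ c ∈ range (2^(r+2)-2),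
            Sfun (r+2) a (2^(r+2)+c) * Sfun (r+2) a' (pairFlip (2^(r+2)+c))
            = if a = a'-2^(r+1) then (2:ℚ)^(r+1)-1 else (2:ℚ)^r-1 := by
          rw [← hA a haM (a'-2^(r+1)) (by omega)]
          exact Finset.sum_congr rfl fun c hc => by
            rw [pairFlip_add hK2, Sfun_third, Sfun_third, if_pos haM, if_neg (by omega),
              pairFlip_pairFlip]
        rw [hmid, hthird, Sfun_b0 r a, Sfun_b1 r a', Sfun_b1 r a, Sfun_b0 r a',
          if_pos haM, if_neg (by omega), if_pos haM, if_neg (by omega),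
          if_neg (show ¬ a = a' by omega)]
        split_ifs <;> linarith
      · -- a bottom, a' top
        rw [mod_lemma haM (by omega), Nat.mod_eq_of_lt ha'M] at hmid
        have hthird : ∑ c ∈ range (2^(r+2)-2),
            Sfun (r+2) a (2^(r+2)+c) * Sfun (r+2) a' (pairFlip (2^(r+2)+c))
            = if a-2^(r+1) = a' then (2:ℚ)^(r+1)-1 else (2:ℚ)^r-1 := by
          calc ∑ c ∈ range (2^(r+2)-2),
              Sfun (r+2) a (2^(r+2)+c) * Sfun (r+2) a' (pairFlip (2^(r+2)+c))
              = ∑ c ∈ range (2^(r+2)-2),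
                  Sfun (r+1) (a-2^(r+1)) (pairFlip c) * Sfun (r+1) a' (pairFlip c) :=
                Finset.sum_congr rfl fun c hc => by
                  rw [pairFlip_add hK2, Sfun_third, Sfun_third, if_neg (by omega), if_pos ha'M]
            _ = ∑ c ∈ range (2^(r+2)-2), Sfun (r+1) (a-2^(r+1)) c * Sfun (r+1) a' c :=
                sum_pairFlip hm2 (fun c => Sfun (r+1) (a-2^(r+1)) c * Sfun (r+1) a' c)
            _ = _ := hA (a-2^(r+1)) (by omega) a' ha'M
        rw [hmid, hthird, Sfun_b0 r a, Sfun_b1 r a', Sfun_b1 r a, Sfun_b0 r a',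
          if_neg (by omega), if_pos ha'M, if_neg (by omega), if_pos ha'M,
          if_neg (show ¬ a = a' by omega)]
        split_ifs <;> linarith
      · -- both bottom
        rw [mod_lemma haM (by omega), mod_lemma ha'M (by omega)] at hmid
        have hthird : ∑ c ∈ range (2^(r+2)-2),
            Sfun (r+2) a (2^(r+2)+c) * Sfun (r+2) a' (pairFlip (2^(r+2)+c))
            = if a'-2^(r+1) = a-2^(r+1) then (0:ℚ) else (2:ℚ)^r := by
          rw [← hB (a'-2^(r+1)) (by omega) (a-2^(r+1)) (by omega)]
          exact Finset.sum_congr rfl fun c hc => by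
            rw [pairFlip_add hK2, Sfun_third, Sfun_third, if_neg (by omega), if_neg (by omega),
              pairFlip_pairFlip]; ring
        rw [hmid, hthird, Sfun_b0 r a, Sfun_b1 r a', Sfun_b1 r a, Sfun_b0 r a',
          if_neg (by omega), if_neg (by omega), if_neg (by omega), if_neg (by omega)]
        rcases eq_or_ne a a' with hq | hq
        · rw [if_pos hq, if_pos (show a-2^(r+1) = a'-2^(r+1) by omega),
            if_pos (show a'-2^(r+1) = a-2^(r+1) by omega)]; linarith
        · rw [if_neg hq, if_neg (show ¬(a-2^(r+1) = a'-2^(r+1)) by omega),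
            if_neg (show ¬(a'-2^(r+1) = a-2^(r+1)) by omega)]; linarith

lemma ex01 (r : ℕ) (hC : PC r) : ∀ c < 2^(r+2)-2,
    (∃ a < 2^(r+1), Sfun (r+1) a c = 0) ∧ (∃ a < 2^(r+1), Sfun (r+1) a c = 1) := by
  intro c hc
  have e3 : (2:ℕ)^(r+1) = 2^r+2^r := by ring
  have hp : 1 ≤ (2:ℕ)^r := Nat.one_le_two_pow
  have hq : (0:ℚ) < 2^r := by positivity
  constructor
  · by_contra hcon; push_neg at hcon
    have t : ∑ a ∈ range (2^(r+1)), Sfun (r+1) a c = ∑ _a ∈ range (2^(r+1)), (1:ℚ) :=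
      Finset.sum_congr rfl fun a ha => by
        rcases Sfun_zero_one (r+1) a c with h0 | h1
        · exact absurd h0 (hcon a (mem_range.mp ha))
        · rw [h1]
    rw [hC c hc] at t
    simp only [Finset.sum_const, Finset.card_range, nsmul_eq_mul, mul_one] at t
    have hcast : ((2^(r+1):ℕ):ℚ) = 2^r + 2^r := by push_cast; ring
    rw [hcast] at t
    linarith
  · by_contra hcon; push_neg at hcon
    have t : ∑ a ∈ range (2^(r+1)), Sfun (r+1) a c = ∑ _a ∈ range (2^(r+1)), (0:ℚ) :=
      Finset.sum_congr rfl fun a ha => by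
        rcases Sfun_zero_one (r+1) a c with h0 | h1
        · rw [h0]
        · exact absurd h1 (hcon a (mem_range.mp ha))
    rw [hC c hc] at t
    simp at t

lemma stepD (r : ℕ) (hC : PC r) (hD : PD r) : PD (r+1) := by
  have e1 : (2:ℕ)^(r+3) = 2^(r+2)+2^(r+2) := by ring
  have e2 : (2:ℕ)^(r+2) = 2^(r+1)+2^(r+1) := by ring
  have e3 : (2:ℕ)^(r+1) = 2^r+2^r := by ring
  have hp : 1 ≤ (2:ℕ)^r := Nat.one_le_two_pow
  have hm2 : (2^(r+2)-2) % 2 = 0 := by omega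
  have key : ∀ b < 2^(r+3)-2, ∀ b' < 2^(r+3)-2, b ≤ b' →
      (∀ a < 2^(r+2), Sfun (r+2) a b = Sfun (r+2) a b') → b = b' := by
    intro b hb b' hb' hle h
    rcases Nat.lt_or_ge b' 2 with hb'2 | hb'2
    · -- b' ∈ {0,1}, so b ∈ {0,1}
      interval_cases b' <;> interval_cases b
      · rfl
      · -- b = 0, b' = 1
        have t := h 0 (by omega)
        rw [Sfun_b0, Sfun_b1, if_pos (by omega), if_pos (by omega)] at t
        norm_num at t
      · rfl
    · rcases Nat.lt_or_ge b' (2^(r+2)) with hb'K | hb'K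
      · -- b' mid
        obtain ⟨c', hc', rfl⟩ : ∃ c, c < 2^(r+2)-2 ∧ b' = 2+c := ⟨b'-2, by omega, by omega⟩
        rcases Nat.lt_or_ge b 2 with hb2 | hb2
        · interval_cases b
          · -- b = 0 vs mid
            obtain ⟨a0, ha0, hz⟩ := (ex01 r hC c' hc').1
            have t := h a0 (by omega)
            rw [Sfun_b0, if_pos ha0, Sfun_mid _ _ _ hc', Nat.mod_eq_of_lt ha0, hz] at t
            norm_num at t
          · -- b = 1 vs mid
            obtain ⟨a0, ha0, ho⟩ := (ex01 r hC c' hc').2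
            have t := h a0 (by omega)
            rw [Sfun_b1, if_pos ha0, Sfun_mid _ _ _ hc', Nat.mod_eq_of_lt ha0, ho] at t
            norm_num at t
        · -- b mid vs mid
          obtain ⟨c, hc, rfl⟩ : ∃ c, c < 2^(r+2)-2 ∧ b = 2+c := ⟨b-2, by omega, by omega⟩
          have t : ∀ a < 2^(r+1), Sfun (r+1) a c = Sfun (r+1) a c' := by
            intro a ha
            have t := h a (by omega)
            rwa [Sfun_mid _ _ _ hc, Sfun_mid _ _ _ hc', Nat.mod_eq_of_lt ha] at t
          rw [hD c hc c' hc' t]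
      · -- b' third
        obtain ⟨c', hc', rfl⟩ : ∃ c, c < 2^(r+2)-2 ∧ b' = 2^(r+2)+c :=
          ⟨b'-2^(r+2), by omega, by omega⟩
        rcases Nat.lt_or_ge b 2 with hb2 | hb2
        · interval_cases b
          · obtain ⟨a0, ha0, hz⟩ := (ex01 r hC c' hc').1
            have t := h a0 (by omega)
            rw [Sfun_b0, if_pos ha0, Sfun_third, if_pos ha0, hz] at t
            norm_num at t
          · obtain ⟨a0, ha0, ho⟩ := (ex01 r hC c' hc').2
            have t := h a0 (by omega)
            rw [Sfun_b1, if_pos ha0, Sfun_third, if_pos ha0, ho] at t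
            norm_num at t
        · rcases Nat.lt_or_ge b (2^(r+2)) with hbK | hbK
          · -- b mid vs b' third
            obtain ⟨c, hc, rfl⟩ : ∃ c, c < 2^(r+2)-2 ∧ b = 2+c := ⟨b-2, by omega, by omega⟩
            have t1 : ∀ a < 2^(r+1), Sfun (r+1) a c = Sfun (r+1) a c' := by
              intro a ha
              have t := h a (by omega)
              rwa [Sfun_mid _ _ _ hc, Sfun_third, if_pos ha, Nat.mod_eq_of_lt ha] at t
            have t2 : ∀ a < 2^(r+1), Sfun (r+1) a c = Sfun (r+1) a (pairFlip c') := by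
              intro a ha
              have t := h (2^(r+1)+a) (by omega)
              rwa [Sfun_mid _ _ _ hc, Sfun_third, if_neg (by omega), Nat.add_mod_left,
                Nat.mod_eq_of_lt ha, Nat.add_sub_cancel_left] at t
            have t3 : ∀ a < 2^(r+1), Sfun (r+1) a c' = Sfun (r+1) a (pairFlip c') :=
              fun a ha => (t1 a ha).symm.trans (t2 a ha)
            exact absurd (hD c' hc' (pairFlip c') (pairFlip_lt hm2 hc') t3).symm
              (pairFlip_ne c')
          · -- b third vs b' third
            obtain ⟨c, hc, rfl⟩ : ∃ c, c < 2^(r+2)-2 ∧ b = 2^(r+2)+c :=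
              ⟨b-2^(r+2), by omega, by omega⟩
            have t : ∀ a < 2^(r+1), Sfun (r+1) a c = Sfun (r+1) a c' := by
              intro a ha
              have t := h a (by omega)
              rwa [Sfun_third, Sfun_third, if_pos ha, if_pos ha] at t
            rw [hD c hc c' hc' t]
  intro b hb b' hb' h
  have hb2 : b < 2^(r+3)-2 := hb
  have hb'2 : b' < 2^(r+3)-2 := hb'
  rcases le_total b b' with hle | hle
  · exact key b hb2 b' hb'2 hle h
  · exact (key b' hb'2 b hb2 hle (fun a ha => (h a ha).symm)).symm

lemma keyP : ∀ r, PC r ∧ PA r ∧ PB r ∧ PD r := by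
  intro r
  induction r with
  | zero => exact ⟨baseC, baseA, baseB, baseD⟩
  | succ n ih =>
      exact ⟨stepC n ih.1, stepA n ih.2.1 ih.2.2.1, stepB n ih.2.1 ih.2.2.1,
        stepD n ih.1 ih.2.2.2⟩

theorem stmt18 (r : ℕ) (hr : 1 ≤ r) :
    -- `S_r S_rᵀ = 2^(r-1) I + (2^(r-1) - 1) J`
    S r * (S r)ᵀ =
      ((2 : ℚ) ^ (r - 1)) • (1 : Matrix (Fin (2 ^ r)) (Fin (2 ^ r)) ℚ) +
        ((2 : ℚ) ^ (r - 1) - 1) • Matrix.of (fun _ _ => (1 : ℚ)) ∧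
    -- `S_r F_r S_rᵀ = 2^(r-1) (J - I)`
    S r * F r * (S r)ᵀ =
      ((2 : ℚ) ^ (r - 1)) •
        (Matrix.of (fun _ _ => (1 : ℚ)) - (1 : Matrix (Fin (2 ^ r)) (Fin (2 ^ r)) ℚ)) ∧
    -- consequently the columns of `S_r` are the incidence vectors of a collection of
    -- `2(m-1)` subsets of `{1,…,m}`, `m = 2^r`, each of size `m/2`,
    (blocks r).card = 2 * (2 ^ r - 1) ∧
    -- forming a `2`-`(m, m/2, m/2 - 1)` block design
    IsBlockDesign 2 (2 ^ (r - 1)) (2 ^ (r - 1) - 1) (blocks r) := by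
  obtain ⟨s, rfl⟩ : ∃ s, r = s + 1 := ⟨r - 1, by omega⟩
  obtain ⟨hPC, hPA, hPB, hPD⟩ := keyP s
  simp only [Nat.add_sub_cancel]
  have hp : 1 ≤ (2:ℕ)^s := Nat.one_le_two_pow
  have e2 : (2:ℕ)^(s+1+1) = 2^(s+1) + 2^(s+1) := by ring
  have e3 : (2:ℕ)^(s+1) = 2^s + 2^s := by ring
  have hNe : ((2:ℕ)^(s+1+1)-2) % 2 = 0 := by omega
  have q3 : (2:ℚ)^(s+1) = 2^s + 2^s := by ring
  have valne : ∀ {a a' : Fin (2^(s+1))}, a ≠ a' → (a:ℕ) ≠ (a':ℕ) :=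
    fun h hv => h (Fin.ext hv)
  have hinj : Function.Injective (blockOf (s+1)) := by
    intro b b' hbb
    have hcols : ∀ a < 2^(s+1), Sfun (s+1) a (b:ℕ) = Sfun (s+1) a (b':ℕ) := by
      intro a ha
      have hmem : ((⟨a, ha⟩ : Fin (2^(s+1))) ∈ blockOf (s+1) b)
          ↔ ((⟨a, ha⟩ : Fin (2^(s+1))) ∈ blockOf (s+1) b') := by rw [hbb]
      simp only [blockOf, Finset.mem_filter, Finset.mem_univ,
        true_and] at hmem
      change Sfun (s+1) a b = 1 ↔ Sfun (s+1) a b' = 1 at hmem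
      rcases Sfun_zero_one (s+1) a b with h0 | h1 <;>
        rcases Sfun_zero_one (s+1) a b' with h0' | h1'
      · rw [h0, h0']
      · rw [h0] at hmem ⊢; rw [h1'] at hmem ⊢
        exact absurd (hmem.mpr rfl) (by norm_num)
      · rw [h1] at hmem ⊢; rw [h0'] at hmem ⊢
        exact absurd (hmem.mp rfl) (by norm_num)
      · rw [h1, h1']
    exact Fin.ext (hPD b b.isLt b' b'.isLt hcols)
  have hsize : ∀ b : Fin (2^(s+1+1)-2), (blockOf (s+1) b).card = 2^s := by
    intro b
    have hb := hPC (b:ℕ) b.isLt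
    rw [← Fin.sum_univ_eq_sum_range (fun a => Sfun (s+1) a (b:ℕ))] at hb
    have hpt : ∑ a : Fin (2^(s+1)), Sfun (s+1) (a:ℕ) (b:ℕ)
        = ∑ a : Fin (2^(s+1)), (if S (s+1) a b = 1 then (1:ℚ) else 0) := by
      refine Finset.sum_congr rfl fun a _ => ?_
      have hS : S (s+1) a b = Sfun (s+1) (a:ℕ) (b:ℕ) := rfl
      rcases Sfun_zero_one (s+1) (a:ℕ) (b:ℕ) with h0 | h1
      · rw [hS, h0]; norm_num
      · rw [hS, h1]; norm_num
    rw [hpt, Finset.sum_boole] at hb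
    have : ((blockOf (s+1) b).card : ℚ) = ((2^s : ℕ) : ℚ) := by
      rw [blockOf, hb]; push_cast; ring
    exact_mod_cast this
  refine ⟨?_, ?_, ?_, ?_, ?_⟩
  · -- first matrix identity
    ext a a'
    have h1 : (S (s+1) * (S (s+1))ᵀ) a a'
        = ∑ b ∈ Finset.range (2^(s+1+1)-2),
            Sfun (s+1) (a:ℕ) b * Sfun (s+1) (a':ℕ) b := by
      rw [Matrix.mul_apply,
        ← Fin.sum_univ_eq_sum_range (fun b => Sfun (s+1) (a:ℕ) b * Sfun (s+1) (a':ℕ) b)]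
      rfl
    rw [h1, hPA (a:ℕ) a.isLt (a':ℕ) a'.isLt]
    simp only [Matrix.add_apply, Matrix.smul_apply, Matrix.one_apply, Matrix.of_apply,
      smul_eq_mul, mul_one]
    rcases eq_or_ne a a' with hq | hq
    · rw [if_pos (congrArg Fin.val hq), if_pos hq]; linarith
    · rw [if_neg (valne hq), if_neg hq]; ring
  · -- second matrix identity
    have hFS : ∀ (c : Fin (2^(s+1+1)-2)) (a' : Fin (2^(s+1))),
        (F (s+1) * (S (s+1))ᵀ) c a' = Sfun (s+1) (a':ℕ) (pairFlip (c:ℕ)) := by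
      intro c a'
      rw [Matrix.mul_apply,
        Finset.sum_eq_single (⟨pairFlip (c:ℕ), pairFlip_lt hNe c.isLt⟩ : Fin (2^(s+1+1)-2))]
      · show (if (c:ℕ) = pairFlip (pairFlip (c:ℕ)) then (1:ℚ) else 0) * _ = _
        rw [pairFlip_pairFlip, if_pos rfl, one_mul]
        rfl
      · intro b _ hbne
        show (if (c:ℕ) = pairFlip (b:ℕ) then (1:ℚ) else 0) * _ = 0
        rw [if_neg, zero_mul]
        intro hcb
        have hpc : pairFlip (c:ℕ) = (b:ℕ) := by rw [hcb, pairFlip_pairFlip]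
        exact hbne (Fin.ext hpc.symm)
      · intro hmem; exact absurd (Finset.mem_univ _) hmem
    ext a a'
    have h1 : (S (s+1) * F (s+1) * (S (s+1))ᵀ) a a'
        = ∑ b ∈ Finset.range (2^(s+1+1)-2),
            Sfun (s+1) (a:ℕ) b * Sfun (s+1) (a':ℕ) (pairFlip b) := by
      rw [Matrix.mul_assoc, Matrix.mul_apply,
        ← Fin.sum_univ_eq_sum_range
          (fun b => Sfun (s+1) (a:ℕ) b * Sfun (s+1) (a':ℕ) (pairFlip b))]
      refine Finset.sum_congr rfl fun c _ => ?_
      rw [hFS c a']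
      rfl
    rw [h1, hPB (a:ℕ) a.isLt (a':ℕ) a'.isLt]
    simp only [Matrix.smul_apply, Matrix.sub_apply, Matrix.of_apply, Matrix.one_apply,
      smul_eq_mul]
    rcases eq_or_ne a a' with hq | hq
    · rw [if_pos (congrArg Fin.val hq), if_pos hq]; ring
    · rw [if_neg (valne hq), if_neg hq]; ring
  · -- number of blocks
    rw [blocks, Finset.card_image_of_injective _ hinj, Finset.card_univ, Fintype.card_fin]
    omega
  · -- block sizes
    intro J hJ
    simp only [blocks, Finset.mem_image, Finset.mem_univ, true_and] at hJ
    obtain ⟨b, rfl⟩ := hJ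
    exact hsize b
  · -- pair counts
    intro T hT
    obtain ⟨a, a', hne, rfl⟩ := Finset.card_eq_two.mp hT
    rw [blocks, Finset.filter_image, Finset.card_image_of_injective _ hinj]
    have hcount : ((Finset.filter (fun b => {a, a'} ⊆ blockOf (s+1) b)
          (Finset.univ : Finset (Fin (2^(s+1+1)-2)))).card : ℚ)
        = (2:ℚ)^s - 1 := by
      rw [← Finset.sum_boole]
      have hpt : ∑ b : Fin (2^(s+1+1)-2), (if {a, a'} ⊆ blockOf (s+1) b then (1:ℚ) else 0)
          = ∑ b : Fin (2^(s+1+1)-2), Sfun (s+1) (a:ℕ) (b:ℕ) * Sfun (s+1) (a':ℕ) (b:ℕ) := by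
        refine Finset.sum_congr rfl fun b _ => ?_
        have hsub : {a, a'} ⊆ blockOf (s+1) b
            ↔ (Sfun (s+1) (a:ℕ) (b:ℕ) = 1 ∧ Sfun (s+1) (a':ℕ) (b:ℕ) = 1) := by
          rw [Finset.insert_subset_iff, Finset.singleton_subset_iff]
          simp only [blockOf, Finset.mem_filter, Finset.mem_univ, true_and]
          exact Iff.rfl
        rcases Sfun_zero_one (s+1) (a:ℕ) (b:ℕ) with h0 | h1 <;>
          rcases Sfun_zero_one (s+1) (a':ℕ) (b:ℕ) with h0' | h1'
        · rw [h0, h0', if_neg (by rw [hsub, h0]; norm_num)]; ring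
        · rw [h0, h1', if_neg (by rw [hsub, h0]; norm_num)]; ring
        · rw [h1, h0', if_neg (by rw [hsub, h0']; norm_num)]; ring
        · rw [h1, h1', if_pos (by rw [hsub, h1, h1']; norm_num)]; ring
      rw [hpt, Fin.sum_univ_eq_sum_range
        (fun b => Sfun (s+1) (a:ℕ) b * Sfun (s+1) (a':ℕ) b),
        hPA (a:ℕ) a.isLt (a':ℕ) a'.isLt, if_neg (valne hne)]
    have hnat : (((2:ℕ)^s - 1 : ℕ) : ℚ) = (2:ℚ)^s - 1 := by
      rw [Nat.cast_sub hp]; push_cast; ring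
    exact_mod_cast hcount.trans hnat.symm


end
end
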